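/- arXiv:2401.06662 — 7 statements merged into one kernel-verified Lean document; each statement's English description precedes it below -/
import Mathlib

section
/- A word w over the nonnegative integers is stack sortable (i.e., applying the standard stack sorting algorithm, where the next input letter is pushed whenever it is less than or equal to the top of the stack and otherwise the top is popped to the output, yields a weakly increasing output) if and only if w avoids the pattern 120. -/
def Contains120 (w : List ℕ) : Prop :=
  ∃ i j k, i < j ∧ j < k ∧ k < w.length ∧ w.getD k 0 < w.getD i 0 ∧ w.getD i 0 < w.getD j 0

def Contains201 (w : List ℕ) : Prop :=
  ∃ i j k, i < j ∧ j < k ∧ k < w.length ∧ w.getD j 0 < w.getD k 0 ∧ w.getD k 0 < w.getD i 0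

def Contains210 (w : List ℕ) : Prop :=
  ∃ i j k, i < j ∧ j < k ∧ k < w.length ∧ w.getD k 0 < w.getD j 0 ∧ w.getD j 0 < w.getD i 0

def Contains1010 (w : List ℕ) : Prop :=
  ∃ i j k l, i < j ∧ j < k ∧ k < l ∧ l < w.length ∧
    w.getD j 0 = w.getD l 0 ∧ w.getD l 0 < w.getD i 0 ∧ w.getD i 0 = w.getD k 0

/-- The greedy stack sorting algorithm: push the next input letter whenever the stack is
empty or the letter is at most the top of the stack; otherwise pop the top to the output;
at the end pop all remaining entries. -/
def stackSortAux : List ℕ → List ℕ → List ℕ → List ℕ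
  | [], st, out => out ++ st
  | x :: xs, [], out => stackSortAux xs [x] out
  | x :: xs, t :: st, out =>
    if x ≤ t then stackSortAux xs (x :: t :: st) out
    else stackSortAux (x :: xs) st (out ++ [t])
termination_by input st _ => 2 * input.length + st.length

def stackSort (w : List ℕ) : List ℕ := stackSortAux w [] []

/-- `t` (sitting below the remaining input `w`) would cause an unsorted output:
some later entry exceeds `t` and an even later entry is below `t`. -/
def Viol (t : ℕ) (w : List ℕ) : Prop :=
  ∃ j k, j < k ∧ k < w.length ∧ w.getD k 0 < t ∧ t < w.getD j 0

lemma contains120_nil : ¬ Contains120 [] := by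
  rintro ⟨i, j, k, _, _, hk, _⟩
  simp at hk

lemma viol_nil (t : ℕ) : ¬ Viol t [] := by
  rintro ⟨j, k, _, hk, _⟩
  simp at hk

lemma contains120_cons (x : ℕ) (xs : List ℕ) :
    Contains120 (x :: xs) ↔ Contains120 xs ∨ Viol x xs := by
  constructor
  · rintro ⟨i, j, k, hij, hjk, hk, h1, h2⟩
    obtain ⟨k', rfl⟩ : ∃ k', k = k' + 1 := ⟨k - 1, by omega⟩
    obtain ⟨j', rfl⟩ : ∃ j', j = j' + 1 := ⟨j - 1, by omega⟩
    rcases Nat.eq_zero_or_pos i with rfl | hi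
    · right
      refine ⟨j', k', by omega, by simpa using hk, ?_, ?_⟩
      · simpa using h1
      · simpa using h2
    · obtain ⟨i', rfl⟩ : ∃ i', i = i' + 1 := ⟨i - 1, by omega⟩
      left
      refine ⟨i', j', k', by omega, by omega, by simpa using hk, ?_, ?_⟩
      · simpa using h1
      · simpa using h2
  · rintro (⟨i, j, k, hij, hjk, hk, h1, h2⟩ | ⟨j, k, hjk, hk, h1, h2⟩)
    · refine ⟨i + 1, j + 1, k + 1, by omega, by omega, by simpa using hk, ?_, ?_⟩
      · simpa using h1
      · simpa using h2
    · refine ⟨0, j + 1, k + 1, by omega, by omega, by simpa using hk, ?_, ?_⟩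
      · simpa using h1
      · simpa using h2

lemma viol_cons {x s : ℕ} (h : x ≤ s) (xs : List ℕ) :
    Viol s (x :: xs) ↔ Viol s xs := by
  constructor
  · rintro ⟨j, k, hjk, hk, h1, h2⟩
    obtain ⟨k', rfl⟩ : ∃ k', k = k' + 1 := ⟨k - 1, by omega⟩
    rcases Nat.eq_zero_or_pos j with rfl | hj
    · simp at h2; omega
    · obtain ⟨j', rfl⟩ : ∃ j', j = j' + 1 := ⟨j - 1, by omega⟩
      refine ⟨j', k', by omega, by simpa using hk, ?_, ?_⟩
      · simpa using h1
      · simpa using h2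
  · rintro ⟨j, k, hjk, hk, h1, h2⟩
    refine ⟨j + 1, k + 1, by omega, by simpa using hk, ?_, ?_⟩
    · simpa using h1
    · simpa using h2

lemma viol_head {t x : ℕ} (h : t < x) (xs : List ℕ) :
    Viol t (x :: xs) ↔ ∃ a ∈ xs, a < t := by
  constructor
  · rintro ⟨j, k, hjk, hk, h1, h2⟩
    obtain ⟨k', rfl⟩ : ∃ k', k = k' + 1 := ⟨k - 1, by omega⟩
    have hk' : k' < xs.length := by simpa using hk
    refine ⟨xs.getD k' 0, ?_, by simpa using h1⟩
    rw [List.getD_eq_getElem _ _ hk']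
    exact List.getElem_mem _
  · rintro ⟨a, ha, hlt⟩
    obtain ⟨k, hk, rfl⟩ := List.mem_iff_getElem.mp ha
    refine ⟨0, k + 1, by omega, by simpa using hk, ?_, by simpa using h⟩
    rw [List.getD_cons_succ, List.getD_eq_getElem _ _ hk]
    exact hlt

lemma stackSortAux_append : ∀ (n : ℕ) (xs st out : List ℕ),
    2 * xs.length + st.length ≤ n →
    stackSortAux xs st out = out ++ stackSortAux xs st [] := by
  intro n
  induction n with
  | zero =>
    intro xs st out h
    cases xs with
    | nil => simp [stackSortAux]
    | cons x xs => simp at h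
  | succ n ih =>
    intro xs st out h
    cases xs with
    | nil => simp [stackSortAux]
    | cons x xs =>
      cases st with
      | nil =>
        show stackSortAux (x :: xs) [] out = out ++ stackSortAux (x :: xs) [] []
        rw [stackSortAux, stackSortAux]
        exact ih xs [x] out (by simp at h ⊢; omega)
      | cons t st =>
        rw [stackSortAux, stackSortAux]
        by_cases hxt : x ≤ t
        · rw [if_pos hxt, if_pos hxt]
          exact ih xs (x :: t :: st) out (by simp at h ⊢; omega)
        · rw [if_neg hxt, if_neg hxt]
          rw [ih (x :: xs) st (out ++ [t]) (by simp at h ⊢; omega),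
            ih (x :: xs) st ([] ++ [t]) (by simp at h ⊢; omega)]
          simp

lemma mem_stackSortAux : ∀ (n : ℕ) (xs st out : List ℕ) (a : ℕ),
    2 * xs.length + st.length ≤ n →
    (a ∈ stackSortAux xs st out ↔ a ∈ out ∨ a ∈ xs ∨ a ∈ st) := by
  intro n
  induction n with
  | zero =>
    intro xs st out a h
    cases xs with
    | nil => simp [stackSortAux]
    | cons x xs => simp at h
  | succ n ih =>
    intro xs st out a h
    cases xs with
    | nil => simp [stackSortAux]
    | cons x xs =>
      cases st with
      | nil =>
        rw [stackSortAux, ih xs [x] out a (by simp at h ⊢; omega)]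
        simp
        tauto
      | cons t st =>
        rw [stackSortAux]
        by_cases hxt : x ≤ t
        · rw [if_pos hxt, ih xs (x :: t :: st) out a (by simp at h ⊢; omega)]
          simp
          tauto
        · rw [if_neg hxt, ih (x :: xs) st (out ++ [t]) a (by simp at h ⊢; omega)]
          simp
          tauto

lemma sorted_stackSortAux : ∀ (n : ℕ) (xs st : List ℕ),
    2 * xs.length + st.length ≤ n →
    List.Pairwise (· ≤ ·) st →
    (List.Pairwise (· ≤ ·) (stackSortAux xs st []) ↔
      ¬ (Contains120 xs ∨ ∃ t ∈ st, Viol t xs)) := by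
  intro n
  induction n with
  | zero =>
    intro xs st h hst
    cases xs with
    | nil =>
      simp only [stackSortAux, List.nil_append]
      simp [hst, contains120_nil, viol_nil]
    | cons x xs => simp at h
  | succ n ih =>
    intro xs st h hst
    cases xs with
    | nil =>
      simp only [stackSortAux, List.nil_append]
      simp [hst, contains120_nil, viol_nil]
    | cons x xs =>
      cases st with
      | nil =>
        rw [stackSortAux, ih xs [x] (by simp at h ⊢; omega) (by simp)]
        rw [contains120_cons]
        simp
      | cons t st =>
        have hts : ∀ b ∈ st, t ≤ b := (List.pairwise_cons.mp hst).1
        have hst' : List.Pairwise (· ≤ ·) st := (List.pairwise_cons.mp hst).2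
        rw [stackSortAux]
        by_cases hxt : x ≤ t
        · rw [if_pos hxt]
          have hsx : List.Pairwise (· ≤ ·) (x :: t :: st) := by
            rw [List.pairwise_cons]
            refine ⟨?_, hst⟩
            intro b hb
            rcases List.mem_cons.mp hb with rfl | hb
            · exact hxt
            · exact le_trans hxt (hts b hb)
          rw [ih xs (x :: t :: st) (by simp at h ⊢; omega) hsx]
          apply not_congr
          constructor
          · rintro (hc | ⟨s, hs, hv⟩)
            · exact Or.inl ((contains120_cons x xs).mpr (Or.inl hc))
            · rcases List.mem_cons.mp hs with heq | hs
              · rw [heq] at hv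
                exact Or.inl ((contains120_cons x xs).mpr (Or.inr hv))
              · have hxs : x ≤ s := by
                  rcases List.mem_cons.mp hs with rfl | hs'
                  · exact hxt
                  · exact le_trans hxt (hts s hs')
                exact Or.inr ⟨s, hs, (viol_cons hxs xs).mpr hv⟩
          · rintro (hc | ⟨s, hs, hv⟩)
            · rcases (contains120_cons x xs).mp hc with hc | hv
              · exact Or.inl hc
              · exact Or.inr ⟨x, List.mem_cons_self, hv⟩
            · have hxs : x ≤ s := by
                rcases List.mem_cons.mp hs with rfl | hs'
                · exact hxt
                · exact le_trans hxt (hts s hs')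
              exact Or.inr ⟨s, List.mem_cons_of_mem _ hs, (viol_cons hxs xs).mp hv⟩
        · rw [if_neg hxt]
          have htx : t < x := by omega
          rw [stackSortAux_append (n + 1) (x :: xs) st ([] ++ [t]) (by simp at h ⊢; omega)]
          have hmeas : 2 * (x :: xs).length + st.length ≤ n := by simp at h ⊢; omega
          have hR := ih (x :: xs) st hmeas hst'
          have hmem : ∀ b, b ∈ stackSortAux (x :: xs) st [] ↔ b ∈ (x :: xs) ∨ b ∈ st := by
            intro b
            rw [mem_stackSortAux (n + 1) (x :: xs) st [] b (by simp at h ⊢; omega)]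
            simp
          simp only [List.nil_append, List.singleton_append, List.pairwise_cons]
          constructor
          · rintro ⟨hble, hRs⟩
            rintro (hc | ⟨s, hs, hv⟩)
            · exact hR.mp hRs (Or.inl hc)
            · rcases List.mem_cons.mp hs with heq | hs
              · rw [heq] at hv
                obtain ⟨a, ha, hat⟩ := (viol_head htx xs).mp hv
                have : t ≤ a := hble a ((hmem a).mpr (Or.inl (List.mem_cons_of_mem _ ha)))
                omega
              · exact hR.mp hRs (Or.inr ⟨s, hs, hv⟩)
          · intro hno
            constructor
            · intro b hb
              rcases (hmem b).mp hb with hb | hb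
              · rcases List.mem_cons.mp hb with rfl | hb
                · omega
                · by_contra hbt
                  exact hno (Or.inr ⟨t, List.mem_cons_self,
                    (viol_head htx xs).mpr ⟨b, hb, by omega⟩⟩)
              · exact hts b hb
            · refine hR.mpr ?_
              rintro (hc | ⟨s, hs, hv⟩)
              · exact hno (Or.inl hc)
              · exact hno (Or.inr ⟨s, List.mem_cons_of_mem _ hs, hv⟩)

/-- A word over the nonnegative integers is stack sortable iff it avoids the pattern 120. -/
theorem stack_sortable_iff_avoids_120 (w : List ℕ) :
    List.Pairwise (· ≤ ·) (stackSort w) ↔ ¬ Contains120 w := by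
  rw [stackSort, sorted_stackSortAux (2 * w.length) w [] (by simp) (by simp)]
  simp
end

section
/- A word over the nonnegative integers is layered if and only if it avoids the patterns 120, 201, and 1010. -/
def IsLayeredDecomp (w : List ℕ) (L : List (List ℕ)) : Prop :=
  w = L.flatten ∧ (∀ t ∈ L, t ≠ [] ∧ List.Chain' (fun a b => b ≤ a) t) ∧
    List.Chain' (fun t t' => t.getLastD 0 < t'.headI ∧ t.headI ≤ t'.getLastD 0) L

def IsLayered (w : List ℕ) : Prop := ∃ L, IsLayeredDecomp w L

def HasLayers (w : List ℕ) (k : ℕ) : Prop := ∃ L, IsLayeredDecomp w L ∧ L.length = k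

section LayeredAux

open List


lemma drop_step {w : List ℕ} {i j : ℕ} (hij : i < j) : w.drop j <+ w.drop (i+1) := by
  have : w.drop j = (w.drop (i+1)).drop (j - (i+1)) := by
    rw [List.drop_drop]; congr 1; omega
  rw [this]; exact List.drop_sublist _ _

lemma sub1 {w : List ℕ} {k : ℕ} (hk : k < w.length) : [w.getD k 0] <+ w.drop k := by
  rw [List.drop_eq_getElem_cons hk, List.getD_eq_getElem _ _ hk]
  exact (List.nil_sublist _).cons₂ _

lemma sub2 {w : List ℕ} {j k : ℕ} (hjk : j < k) (hk : k < w.length) :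
    [w.getD j 0, w.getD k 0] <+ w.drop j := by
  have hj : j < w.length := lt_trans hjk hk
  rw [List.drop_eq_getElem_cons hj, List.getD_eq_getElem _ _ hj]
  exact ((sub1 hk).trans (drop_step hjk)).cons₂ _

lemma sub3 {w : List ℕ} {i j k : ℕ} (hij : i < j) (hjk : j < k) (hk : k < w.length) :
    [w.getD i 0, w.getD j 0, w.getD k 0] <+ w.drop i := by
  have hi : i < w.length := by omega
  rw [List.drop_eq_getElem_cons hi, List.getD_eq_getElem _ _ hi]
  exact ((sub2 hjk hk).trans (drop_step hij)).cons₂ _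

lemma sub4 {w : List ℕ} {i j k l : ℕ} (hij : i < j) (hjk : j < k) (hkl : k < l)
    (hl : l < w.length) :
    [w.getD i 0, w.getD j 0, w.getD k 0, w.getD l 0] <+ w.drop i := by
  have hi : i < w.length := by omega
  rw [List.drop_eq_getElem_cons hi, List.getD_eq_getElem _ _ hi]
  exact ((sub3 hjk hkl hl).trans (drop_step hij)).cons₂ _

lemma sublist_to_idx3 {w : List ℕ} {x y z : ℕ} (h : [x, y, z] <+ w) :
    ∃ i j k, i < j ∧ j < k ∧ k < w.length ∧ w.getD i 0 = x ∧ w.getD j 0 = y ∧ w.getD k 0 = z := by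
  rw [List.sublist_iff_exists_fin_orderEmbedding_get_eq] at h
  obtain ⟨f, hf⟩ := h
  refine ⟨f ⟨0, by simp⟩, f ⟨1, by simp⟩, f ⟨2, by simp⟩, ?_, ?_, (f _).isLt, ?_, ?_, ?_⟩
  · exact f.strictMono (Fin.mk_lt_mk.mpr (by omega))
  · exact f.strictMono (Fin.mk_lt_mk.mpr (by omega))
  · rw [List.getD_eq_getElem _ _ (f _).isLt]; exact (hf ⟨0, by simp⟩).symm
  · rw [List.getD_eq_getElem _ _ (f _).isLt]; exact (hf ⟨1, by simp⟩).symm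
  · rw [List.getD_eq_getElem _ _ (f _).isLt]; exact (hf ⟨2, by simp⟩).symm

lemma sublist_to_idx4 {w : List ℕ} {x y z u : ℕ} (h : [x, y, z, u] <+ w) :
    ∃ i j k l, i < j ∧ j < k ∧ k < l ∧ l < w.length ∧
      w.getD i 0 = x ∧ w.getD j 0 = y ∧ w.getD k 0 = z ∧ w.getD l 0 = u := by
  rw [List.sublist_iff_exists_fin_orderEmbedding_get_eq] at h
  obtain ⟨f, hf⟩ := h
  refine ⟨f ⟨0, by simp⟩, f ⟨1, by simp⟩, f ⟨2, by simp⟩, f ⟨3, by simp⟩,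
    f.strictMono (Fin.mk_lt_mk.mpr (by omega)), f.strictMono (Fin.mk_lt_mk.mpr (by omega)), f.strictMono (Fin.mk_lt_mk.mpr (by omega)),
    (f _).isLt, ?_, ?_, ?_, ?_⟩ <;>
  · rw [List.getD_eq_getElem _ _ (f _).isLt]
    first
    | exact (hf ⟨0, by simp⟩).symm
    | exact (hf ⟨1, by simp⟩).symm
    | exact (hf ⟨2, by simp⟩).symm
    | exact (hf ⟨3, by simp⟩).symm

lemma headI_max {t : List ℕ} (h : List.Chain' (fun a b => b ≤ a) t) {x : ℕ} (hx : x ∈ t) :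
    x ≤ t.headI := by
  induction t with
  | nil => cases hx
  | cons a t ih =>
    rcases List.mem_cons.mp hx with rfl | hx
    · simp
    · have hp := List.isChain_iff_pairwise.mp h
      exact (List.rel_of_pairwise_cons hp hx).trans (le_refl a) |>.trans (by simp)

lemma getLastD_min {t : List ℕ} : List.Chain' (fun a b => b ≤ a) t → ∀ x ∈ t, t.getLastD 0 ≤ x := by
  induction t with
  | nil => exact fun _ x hx => absurd hx List.not_mem_nil
  | cons a t ih =>
    intro h x hx
    cases t with
    | nil => simp at hx; simp [hx]
    | cons b t2 =>
      unfold List.Chain' at h; rw [List.isChain_cons_cons] at h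
      have hgl : (a :: b :: t2).getLastD 0 = (b :: t2).getLastD 0 := by
        rw [List.getLastD_eq_getLast?, List.getLastD_eq_getLast?, List.getLast?_cons_cons]
      rw [hgl]
      rcases List.mem_cons.mp hx with rfl | hx
      · exact le_trans (ih h.2 b (List.mem_cons_self)) h.1
      · exact ih h.2 x hx

lemma getLastD_le_headI {t : List ℕ} (ht : t ≠ []) (h : List.Chain' (fun a b => b ≤ a) t) :
    t.getLastD 0 ≤ t.headI :=
  getLastD_min h _ (by cases t with | nil => exact absurd rfl ht | cons a t => exact List.mem_cons_self)

lemma getLastD_mem {t : List ℕ} (ht : t ≠ []) : t.getLastD 0 ∈ t := by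
  rw [List.getLastD_eq_getLast? , List.getLast?_eq_getLast ht]
  simp [List.getLast_mem]

lemma head_last_sublist {t : List ℕ} (ht : t ≠ []) (h : t.getLastD 0 < t.headI) :
    [t.headI, t.getLastD 0] <+ t := by
  cases t with
  | nil => exact absurd rfl ht
  | cons a t2 =>
    cases t2 with
    | nil => simp at h
    | cons b t3 =>
      simp only [List.headI]
      have h2 : (a :: b :: t3).getLastD 0 = (b :: t3).getLastD 0 := by
        rw [List.getLastD_eq_getLast?, List.getLastD_eq_getLast?, List.getLast?_cons_cons]
      rw [h2]
      exact (List.singleton_sublist.mpr (getLastD_mem (by simp))).cons₂ a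

lemma flatten_lower : ∀ (L : List (List ℕ)),
    (∀ t ∈ L, t ≠ [] ∧ List.Chain' (fun a b => b ≤ a) t) →
    List.Chain' (fun t t' => t.getLastD 0 < t'.headI ∧ t.headI ≤ t'.getLastD 0) L →
    ∀ y ∈ L.flatten, (L.headI).getLastD 0 ≤ y := by
  intro L
  induction L with
  | nil => simp
  | cons t L ih =>
    intro hb hc y hy
    rw [List.flatten_cons, List.mem_append] at hy
    rcases hy with hy | hy
    · exact getLastD_min (hb t (List.mem_cons_self)).2 y hy
    · cases L with
      | nil => simp at hy
      | cons t' L2 =>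
        unfold List.Chain' at hc; rw [List.isChain_cons_cons] at hc
        have h1 := ih (fun u hu => hb u (List.mem_cons_of_mem _ hu)) hc.2 y hy
        have h2 := getLastD_le_headI (hb t (List.mem_cons_self)).1
          (hb t (List.mem_cons_self)).2
        exact le_trans (le_trans h2 hc.1.2) h1

lemma cross {t : List ℕ} {L : List (List ℕ)}
    (hb : ∀ u ∈ t :: L, u ≠ [] ∧ List.Chain' (fun a b => b ≤ a) u)
    (hc : List.Chain' (fun t t' => t.getLastD 0 < t'.headI ∧ t.headI ≤ t'.getLastD 0) (t :: L))
    {x y : ℕ} (hx : x ∈ t) (hy : y ∈ L.flatten) : x ≤ y := by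
  cases L with
  | nil => simp at hy
  | cons t' L2 =>
    unfold List.Chain' at hc; rw [List.isChain_cons_cons] at hc
    have h1 : x ≤ t.headI := headI_max (hb t (List.mem_cons_self)).2 hx
    have h2 := flatten_lower (t' :: L2) (fun u hu => hb u (List.mem_cons_of_mem _ hu)) hc.2 y hy
    exact le_trans (le_trans h1 hc.1.2) h2

lemma avoid_aux : ∀ (L : List (List ℕ)),
    (∀ t ∈ L, t ≠ [] ∧ List.Chain' (fun a b => b ≤ a) t) →
    List.Chain' (fun t t' => t.getLastD 0 < t'.headI ∧ t.headI ≤ t'.getLastD 0) L →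
    (∀ x y z : ℕ, z < x → x < y → ¬ ([x, y, z] <+ L.flatten)) ∧
    (∀ x y z : ℕ, y < z → z < x → ¬ ([x, y, z] <+ L.flatten)) ∧
    (∀ x y : ℕ, y < x → ¬ ([x, y, x, y] <+ L.flatten)) := by
  intro L
  induction L with
  | nil =>
    exact fun _ _ => ⟨fun x y z _ _ h => by simpa using h.length_le,
      fun x y z _ _ h => by simpa using h.length_le,
      fun x y _ h => by simpa using h.length_le⟩
  | cons t L ih =>
    intro hb hc
    have hb' := fun u hu => hb u (List.mem_cons_of_mem _ hu)
    have hc' := hc.tail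
    obtain ⟨ih1, ih2, ih3⟩ := ih hb' hc'
    have hdec := (hb t (List.mem_cons_self)).2
    have hpair : List.Pairwise (fun a b => b ≤ a) t := List.isChain_iff_pairwise.mp hdec
    refine ⟨?_, ?_, ?_⟩
    · -- 120 : z < x < y
      intro x y z hzx hxy hs
      rw [List.flatten_cons, List.sublist_append_iff] at hs
      obtain ⟨s1, s2, heq, h1, h2⟩ := hs
      rcases s1 with _ | ⟨a1, _ | ⟨a2, _ | ⟨a3, s1'⟩⟩⟩
      · simp only [List.nil_append] at heq; subst heq
        exact ih1 x y z hzx hxy h2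
      · simp only [List.cons_append, List.nil_append, List.cons.injEq] at heq
        obtain ⟨rfl, heq⟩ := heq; subst heq
        have hz : z ∈ L.flatten := h2.subset (by simp)
        have hx : x ∈ t := h1.subset (by simp)
        exact absurd (cross hb hc hx hz) (by omega)
      · simp only [List.cons_append, List.nil_append, List.cons.injEq] at heq
        obtain ⟨rfl, rfl, heq⟩ := heq
        have := List.rel_of_pairwise_cons (List.Pairwise.sublist h1 hpair) (List.mem_cons_self)
        omega
      · simp only [List.cons_append, List.nil_append, List.cons.injEq] at heq
        obtain ⟨rfl, rfl, rfl, heq⟩ := heq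
        have := List.rel_of_pairwise_cons (List.Pairwise.sublist h1 hpair) (List.mem_cons_self)
        omega
    · -- 201 : y < z < x
      intro x y z hyz hzx hs
      rw [List.flatten_cons, List.sublist_append_iff] at hs
      obtain ⟨s1, s2, heq, h1, h2⟩ := hs
      rcases s1 with _ | ⟨a1, _ | ⟨a2, _ | ⟨a3, s1'⟩⟩⟩
      · simp only [List.nil_append] at heq; subst heq
        exact ih2 x y z hyz hzx h2
      · simp only [List.cons_append, List.nil_append, List.cons.injEq] at heq
        obtain ⟨rfl, heq⟩ := heq; subst heq
        have hz : z ∈ L.flatten := h2.subset (by simp)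
        have hx : x ∈ t := h1.subset (by simp)
        exact absurd (cross hb hc hx hz) (by omega)
      · simp only [List.cons_append, List.nil_append, List.cons.injEq] at heq
        obtain ⟨rfl, rfl, heq⟩ := heq; subst heq
        have hz : z ∈ L.flatten := h2.subset (by simp)
        have hx : x ∈ t := h1.subset (by simp)
        exact absurd (cross hb hc hx hz) (by omega)
      · simp only [List.cons_append, List.nil_append, List.cons.injEq] at heq
        obtain ⟨rfl, rfl, rfl, heq⟩ := heq
        have hp2 := List.Pairwise.sublist h1 hpair
        have := List.rel_of_pairwise_cons (List.pairwise_cons.mp hp2).2 (List.mem_cons_self)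
        omega
    · -- 1010 : y < x, [x,y,x,y]
      intro x y hyx hs
      rw [List.flatten_cons, List.sublist_append_iff] at hs
      obtain ⟨s1, s2, heq, h1, h2⟩ := hs
      rcases s1 with _ | ⟨a1, _ | ⟨a2, _ | ⟨a3, _ | ⟨a4, s1'⟩⟩⟩⟩
      · simp only [List.nil_append] at heq; subst heq
        exact ih3 x y hyx h2
      · simp only [List.cons_append, List.nil_append, List.cons.injEq] at heq
        obtain ⟨rfl, heq⟩ := heq; subst heq
        have hy : y ∈ L.flatten := h2.subset (by simp)
        have hx : x ∈ t := h1.subset (by simp)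
        exact absurd (cross hb hc hx hy) (by omega)
      · simp only [List.cons_append, List.nil_append, List.cons.injEq] at heq
        obtain ⟨rfl, rfl, heq⟩ := heq; subst heq
        have hy : y ∈ L.flatten := h2.subset (by simp)
        have hx : x ∈ t := h1.subset (by simp)
        exact absurd (cross hb hc hx hy) (by omega)
      · simp only [List.cons_append, List.nil_append, List.cons.injEq] at heq
        obtain ⟨rfl, rfl, rfl, heq⟩ := heq
        have hp2 := List.Pairwise.sublist h1 hpair
        have := List.rel_of_pairwise_cons (List.pairwise_cons.mp hp2).2 (List.mem_cons_self)
        omega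
      · simp only [List.cons_append, List.nil_append, List.cons.injEq] at heq
        obtain ⟨rfl, rfl, rfl, rfl, heq⟩ := heq
        have hp2 := List.Pairwise.sublist h1 hpair
        have := List.rel_of_pairwise_cons (List.pairwise_cons.mp hp2).2 (List.mem_cons_self)
        omega

def decomp : List ℕ → List (List ℕ)
  | [] => []
  | a :: w =>
    match decomp w with
    | [] => [[a]]
    | t :: L => if t.headI ≤ a then (a :: t) :: L else [a] :: t :: L

lemma getLastD_cons {a : ℕ} {t : List ℕ} (ht : t ≠ []) : (a :: t).getLastD 0 = t.getLastD 0 := by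
  cases t with
  | nil => exact absurd rfl ht
  | cons b t2 => rw [List.getLastD_eq_getLast?, List.getLastD_eq_getLast?, List.getLast?_cons_cons]

lemma decomp_cons_nil {a : ℕ} {w : List ℕ} (hd : decomp w = []) : decomp (a :: w) = [[a]] := by
  unfold decomp; rw [hd]

lemma decomp_cons_cons {a : ℕ} {w : List ℕ} {t : List ℕ} {L : List (List ℕ)}
    (hd : decomp w = t :: L) :
    decomp (a :: w) = if t.headI ≤ a then (a :: t) :: L else [a] :: t :: L := by
  unfold decomp; rw [hd]

lemma decomp_spec : ∀ w : List ℕ,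
    (decomp w).flatten = w ∧
    (∀ t ∈ decomp w, t ≠ [] ∧ List.Chain' (fun a b => b ≤ a) t) ∧
    List.Chain' (fun t t' => t.getLastD 0 < t'.headI) (decomp w) := by
  intro w
  induction w with
  | nil => simp [decomp, List.Chain', List.isChain_nil]
  | cons a w ih =>
    obtain ⟨ihf, ihb, ihc⟩ := ih
    cases hd : decomp w with
    | nil =>
      rw [hd] at ihf; simp at ihf
      subst ihf
      rw [decomp_cons_nil hd]
      simp [List.Chain', List.isChain_singleton]
    | cons t L =>
      rw [hd] at ihf ihb ihc
      rw [decomp_cons_cons hd]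
      have htne : t ≠ [] := (ihb t (List.mem_cons_self)).1
      by_cases hle : t.headI ≤ a
      · rw [if_pos hle]
        refine ⟨by simpa using ihf, ?_, ?_⟩
        · intro u hu
          rcases List.mem_cons.mp hu with rfl | hu
          · refine ⟨by simp, ?_⟩
            cases t with
            | nil => exact absurd rfl htne
            | cons b t2 =>
              unfold List.Chain'; rw [List.isChain_cons_cons]
              exact ⟨hle, (ihb _ (List.mem_cons_self)).2⟩
          · exact ihb u (List.mem_cons_of_mem _ hu)
        · cases L with
          | nil => simp [List.Chain', List.isChain_singleton]
          | cons t'' L2 =>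
            unfold List.Chain' at ihc ⊢; rw [List.isChain_cons_cons] at ihc ⊢
            exact ⟨by rw [getLastD_cons htne]; exact ihc.1, ihc.2⟩
      · rw [if_neg hle]
        refine ⟨by simpa using ihf, ?_, ?_⟩
        · intro u hu
          rcases List.mem_cons.mp hu with rfl | hu
          · exact ⟨by simp, List.isChain_singleton a⟩
          · exact ihb u hu
        · unfold List.Chain'; rw [List.isChain_cons_cons]
          exact ⟨by simpa using Nat.lt_of_not_le (by omega), ihc⟩

lemma headI_mem {t : List ℕ} (ht : t ≠ []) : t.headI ∈ t := by
  cases t with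
  | nil => exact absurd rfl ht
  | cons a t2 => exact List.mem_cons_self

lemma key {w t t' : List ℕ}
    (h120 : ∀ x y z : ℕ, z < x → x < y → ¬ ([x, y, z] <+ w))
    (h201 : ∀ x y z : ℕ, y < z → z < x → ¬ ([x, y, z] <+ w))
    (h1010 : ∀ x y : ℕ, y < x → ¬ ([x, y, x, y] <+ w))
    (ht : t ≠ []) (ht' : t' ≠ [])
    (hdt : List.Chain' (fun a b => b ≤ a) t) (hdt' : List.Chain' (fun a b => b ≤ a) t')
    (hsub : t ++ t' <+ w) (hlt : t.getLastD 0 < t'.headI) :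
    t.headI ≤ t'.getLastD 0 := by
  by_contra hcon
  push_neg at hcon
  have hba : t.getLastD 0 ≤ t.headI := getLastD_le_headI ht hdt
  have hdc : t'.getLastD 0 ≤ t'.headI := getLastD_le_headI ht' hdt'
  have hbm : [t.getLastD 0] <+ t := List.singleton_sublist.mpr (getLastD_mem ht)
  have ham : [t.headI] <+ t := List.singleton_sublist.mpr (headI_mem ht)
  have hcm : [t'.headI] <+ t' := List.singleton_sublist.mpr (headI_mem ht')
  have hdm : [t'.getLastD 0] <+ t' := List.singleton_sublist.mpr (getLastD_mem ht')
  rcases lt_trichotomy (t.getLastD 0) (t'.getLastD 0) with h | h | h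
  · -- b < d < a : 201 with [a, b, d]
    have hab : [t.headI, t.getLastD 0] <+ t := head_last_sublist ht (by omega)
    exact h201 _ _ _ h hcon ((hab.append hdm).trans hsub)
  · rcases lt_trichotomy t.headI t'.headI with h2 | h2 | h2
    · -- d < a < c : 120 with [a, c, d]
      have hcd : [t'.headI, t'.getLastD 0] <+ t' := head_last_sublist ht' (by omega)
      exact h120 _ _ _ hcon h2 ((ham.append hcd).trans hsub)
    · -- 1010 with [a, b, a, b]
      have hab : [t.headI, t.getLastD 0] <+ t := head_last_sublist ht (by omega)
      have hcd : [t'.headI, t'.getLastD 0] <+ t' := head_last_sublist ht' (by omega)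
      have : [t.headI, t.getLastD 0, t.headI, t.getLastD 0] <+ w := by
        have := (hab.append hcd).trans hsub
        rw [h2] at this ⊢
        rw [h] at this ⊢
        exact this
      exact h1010 _ _ (by omega) this
    · -- b < c < a : 201 with [a, b, c]
      have hab : [t.headI, t.getLastD 0] <+ t := head_last_sublist ht (by omega)
      exact h201 _ _ _ hlt h2 ((hab.append hcm).trans hsub)
  · -- d < b < c : 120 with [b, c, d]
    have hcd : [t'.headI, t'.getLastD 0] <+ t' := head_last_sublist ht' (by omega)
    exact h120 _ _ _ h hlt ((hbm.append hcd).trans hsub)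

lemma chain_upgrade {w : List ℕ}
    (h120 : ∀ x y z : ℕ, z < x → x < y → ¬ ([x, y, z] <+ w))
    (h201 : ∀ x y z : ℕ, y < z → z < x → ¬ ([x, y, z] <+ w))
    (h1010 : ∀ x y : ℕ, y < x → ¬ ([x, y, x, y] <+ w)) :
    ∀ (L : List (List ℕ)), L.flatten <+ w →
    (∀ t ∈ L, t ≠ [] ∧ List.Chain' (fun a b => b ≤ a) t) →
    List.Chain' (fun t t' => t.getLastD 0 < t'.headI) L →
    List.Chain' (fun t t' => t.getLastD 0 < t'.headI ∧ t.headI ≤ t'.getLastD 0) L := by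
  intro L
  induction L with
  | nil => simp [List.Chain', List.isChain_nil]
  | cons t L ih =>
    intro hsub hb hc
    cases L with
    | nil => simp [List.Chain', List.isChain_singleton]
    | cons t' L2 =>
      unfold List.Chain' at hc ⊢; rw [List.isChain_cons_cons] at hc ⊢
      have h1 : t ++ t' <+ w := by
        refine List.Sublist.trans ?_ hsub
        rw [List.flatten_cons, List.flatten_cons, ← List.append_assoc]
        exact List.sublist_append_left _ _
      have h2 : (t' :: L2).flatten <+ w := by
        refine List.Sublist.trans ?_ hsub
        rw [List.flatten_cons]
        exact List.sublist_append_right _ _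
      refine ⟨⟨hc.1, key h120 h201 h1010 (hb t (List.mem_cons_self)).1
        (hb t' (List.mem_cons_of_mem _ (List.mem_cons_self))).1
        (hb t (List.mem_cons_self)).2
        (hb t' (List.mem_cons_of_mem _ (List.mem_cons_self))).2 h1 hc.1⟩, ?_⟩
      exact ih h2 (fun u hu => hb u (List.mem_cons_of_mem _ hu)) hc.2

end LayeredAux

open List in
/-- A word is layered iff it avoids the patterns 120, 201 and 1010. -/
theorem layered_iff_avoids (w : List ℕ) :
    IsLayered w ↔ ¬ Contains120 w ∧ ¬ Contains201 w ∧ ¬ Contains1010 w := by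
  constructor
  · rintro ⟨L, hflat, hb, hc⟩
    subst hflat
    obtain ⟨a1, a2, a3⟩ := avoid_aux L hb hc
    refine ⟨?_, ?_, ?_⟩
    · rintro ⟨i, j, k, hij, hjk, hk, h1, h2⟩
      exact a1 _ _ _ h1 h2 ((sub3 hij hjk hk).trans (List.drop_sublist _ _))
    · rintro ⟨i, j, k, hij, hjk, hk, h1, h2⟩
      exact a2 _ _ _ h1 h2 ((sub3 hij hjk hk).trans (List.drop_sublist _ _))
    · rintro ⟨i, j, k, l, hij, hjk, hkl, hl, e1, e2, e3⟩
      have hsub := (sub4 hij hjk hkl hl).trans (List.drop_sublist _ _)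
      rw [← e3, e1] at hsub
      exact a3 _ _ (by omega) hsub
  · rintro ⟨h120, h201, h1010⟩
    have H120 : ∀ x y z : ℕ, z < x → x < y → ¬ ([x, y, z] <+ w) := by
      intro x y z h1 h2 hs
      obtain ⟨i, j, k, hij, hjk, hk, e1, e2, e3⟩ := sublist_to_idx3 hs
      exact h120 ⟨i, j, k, hij, hjk, hk, by omega, by omega⟩
    have H201 : ∀ x y z : ℕ, y < z → z < x → ¬ ([x, y, z] <+ w) := by
      intro x y z h1 h2 hs
      obtain ⟨i, j, k, hij, hjk, hk, e1, e2, e3⟩ := sublist_to_idx3 hs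
      exact h201 ⟨i, j, k, hij, hjk, hk, by omega, by omega⟩
    have H1010 : ∀ x y : ℕ, y < x → ¬ ([x, y, x, y] <+ w) := by
      intro x y h1 hs
      obtain ⟨i, j, k, l, hij, hjk, hkl, hl, e1, e2, e3, e4⟩ := sublist_to_idx4 hs
      exact h1010 ⟨i, j, k, l, hij, hjk, hkl, hl, by omega, by omega, by omega⟩
    obtain ⟨hf, hb, hc⟩ := decomp_spec w
    refine ⟨decomp w, hf.symm, hb, ?_⟩
    have hsub : (decomp w).flatten <+ w := by rw [hf]
    exact chain_upgrade H120 H201 H1010 (decomp w) hsub hb hc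
end

section
/- The number of pop stack sortable inversion sequences of length n with exactly 2 layers equals the Eulerian number E(n,2), the number of permutations of length n with exactly one descent. -/
def IsInvSeq (e : List ℕ) : Prop := ∀ i < e.length, e.getD i 0 ≤ i

/-- The number of descents of a permutation of Fin n. -/
def descentCount {n : ℕ} (σ : Equiv.Perm (Fin n)) : ℕ :=
  (Finset.univ.filter fun i : Fin n => ∃ j : Fin n, (j : ℕ) = (i : ℕ) + 1 ∧ σ j < σ i).card


open Finset

def IsLower {n : ℕ} (A : Finset (Fin n)) : Prop := ∀ j ∈ A, ∀ i, i ≤ j → i ∈ A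

lemma card_filter_lt_cast (n m : ℕ) (hm : m ≤ n) :
    (Finset.univ.filter fun i : Fin n => (i : ℕ) < m).card = m := by
  classical
  have h1 : (Finset.univ.filter fun i : Fin n => (i : ℕ) < m).card =
      ((Finset.range n).filter fun x => x < m).card := by
    refine Finset.card_nbij (fun i => (i : ℕ)) ?_ ?_ ?_
    · intro a ha; simp at ha ⊢; omega
    · intro a _ b _ h; exact Fin.val_injective h
    · intro b hb; simp at hb ⊢; exact ⟨⟨b, hb.1⟩, hb.2, rfl⟩
  have h2 : ((Finset.range n).filter fun x => x < m) = Finset.range m := by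
    ext x; simp; omega
  rw [h1, h2, Finset.card_range]

lemma isLower_iff {n : ℕ} {A : Finset (Fin n)} :
    IsLower A ↔ ∀ i : Fin n, (i ∈ A ↔ (i : ℕ) < A.card) := by
  constructor
  · intro h i
    constructor
    · intro hi
      by_contra hlt
      push_neg at hlt
      have hsub : Finset.univ.filter (fun j : Fin n => (j : ℕ) < (i : ℕ) + 1) ⊆ A := by
        intro j hj
        simp only [Finset.mem_filter, Finset.mem_univ, true_and] at hj
        exact h i hi j (by rw [Fin.le_def]; omega)
      have := Finset.card_le_card hsub
      rw [card_filter_lt_cast n ((i:ℕ)+1) i.isLt] at this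
      omega
    · intro hlt
      by_contra hi
      have hsub : A ⊆ Finset.univ.filter fun j : Fin n => (j : ℕ) < (i : ℕ) := by
        intro j hj
        simp only [Finset.mem_filter, Finset.mem_univ, true_and]
        by_contra hji
        push_neg at hji
        exact hi (h j hj i (by rw [Fin.le_def]; omega))
      have := Finset.card_le_card hsub
      rw [card_filter_lt_cast n i (le_of_lt i.isLt)] at this
      omega
  · intro h j hj i hij
    rw [h] at hj ⊢
    exact lt_of_le_of_lt (by exact_mod_cast hij : (i:ℕ) ≤ (j:ℕ)) hj

lemma isLower_iff_eq {n : ℕ} {A : Finset (Fin n)} :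
    IsLower A ↔ A = Finset.univ.filter fun i : Fin n => (i : ℕ) < A.card := by
  rw [isLower_iff]
  constructor
  · intro h; ext i; simp only [Finset.mem_filter, Finset.mem_univ, true_and]; exact h i
  · intro h i; constructor
    · intro hi; rw [h] at hi; simpa using hi
    · intro hi; rw [h]; simpa using hi

lemma ncard_lower (n : ℕ) : Set.ncard {A : Finset (Fin n) | IsLower A} = n + 1 := by
  classical
  have hbij : Set.BijOn (fun m : ℕ => Finset.univ.filter fun i : Fin n => (i : ℕ) < m)
      (Set.Iic n) {A : Finset (Fin n) | IsLower A} := by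
    refine ⟨?_, ?_, ?_⟩
    · intro m hm
      simp only [Set.mem_setOf_eq]
      intro j hj i hij
      simp only [Finset.mem_filter, Finset.mem_univ, true_and] at hj ⊢
      exact lt_of_le_of_lt (by exact_mod_cast hij : (i:ℕ) ≤ j) hj
    · intro a ha b hb hab
      simp only [Set.mem_Iic] at ha hb
      have := congrArg Finset.card hab
      rwa [card_filter_lt_cast n a ha, card_filter_lt_cast n b hb] at this
    · intro A hA
      simp only [Set.mem_setOf_eq] at hA
      refine ⟨A.card, ?_, ?_⟩
      · simp only [Set.mem_Iic]
        calc A.card ≤ (Finset.univ : Finset (Fin n)).card := Finset.card_le_card (by simp)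
          _ = n := by simp
      · exact (isLower_iff_eq.mp hA).symm
  have := hbij.image_eq
  rw [← this, Set.ncard_image_of_injOn hbij.injOn]
  rw [← Finset.coe_Iic, Set.ncard_coe_finset, Nat.card_Iic]

lemma ncard_nonlower (n : ℕ) :
    Set.ncard {A : Finset (Fin n) | ¬ IsLower A} = 2 ^ n - (n + 1) := by
  classical
  have h1 : {A : Finset (Fin n) | ¬ IsLower A} = {A : Finset (Fin n) | IsLower A}ᶜ := rfl
  rw [h1]
  have hfin : {A : Finset (Fin n) | IsLower A}.Finite := Set.toFinite _
  have := Set.ncard_add_ncard_compl {A : Finset (Fin n) | IsLower A}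
  rw [ncard_lower n] at this
  have hcard : Nat.card (Finset (Fin n)) = 2 ^ n := by
    simp [Nat.card_eq_fintype_card]
  omega




lemma le_headI_of_chain' {d : List ℕ} (hc : List.Chain' (fun a b => b ≤ a) d)
    {x : ℕ} (hx : x ∈ d) : x ≤ d.headI := by
  unfold List.Chain' at hc
  rw [List.isChain_iff_pairwise] at hc
  cases d with
  | nil => simp at hx
  | cons h t =>
    rcases List.mem_cons.mp hx with rfl | hx
    · simp
    · simpa using (List.pairwise_cons.mp hc).1 x hx

lemma getD0_headI {d : List ℕ} (h : d ≠ []) : d.getD 0 0 = d.headI := by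
  cases d with
  | nil => simp at h
  | cons a t => rfl

lemma char_lemma (n : ℕ) (e : List ℕ) :
    (e.length = n ∧ IsInvSeq e ∧ HasLayers e 2) ↔
    ∃ a d, e = List.replicate a 0 ++ d ∧ 1 ≤ a ∧ d ≠ [] ∧
      List.Chain' (fun x y => y ≤ x) d ∧ 1 ≤ d.headI ∧ d.headI ≤ a ∧ a + d.length = n := by
  constructor
  · rintro ⟨hlen, hinv, L, ⟨hflat, hlayers, hchain⟩, hL2⟩
    obtain ⟨t1, t2, rfl⟩ := List.length_eq_two.mp hL2
    have hflat' : e = t1 ++ t2 := by simpa using hflat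
    obtain ⟨ht1ne, ht1c⟩ := hlayers t1 (by simp)
    obtain ⟨ht2ne, ht2c⟩ := hlayers t2 (by simp)
    have hrel : t1.getLastD 0 < t2.headI ∧ t1.headI ≤ t2.getLastD 0 := by
      simpa using List.isChain_pair.mp hchain
    have ht1len : 1 ≤ t1.length := List.length_pos_iff.mpr ht1ne
    have ht2len : 1 ≤ t2.length := List.length_pos_iff.mpr ht2ne
    have helen : 0 < e.length := by rw [hflat']; simp; omega
    have hhead0 : t1.headI = 0 := by
      have h0 := hinv 0 helen
      have : e.getD 0 0 = t1.headI := by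
        rw [hflat', List.getD_append _ _ _ _ (by omega)]
        exact getD0_headI ht1ne
      omega
    have ht1rep : t1 = List.replicate t1.length 0 := by
      rw [List.eq_replicate_iff]
      exact ⟨rfl, fun b hb => Nat.le_zero.mp (hhead0 ▸ le_headI_of_chain' ht1c hb)⟩
    have hlast1 : t1.getLastD 0 = 0 := by
      rw [ht1rep, List.getLastD_eq_getLast?, List.getLast?_replicate]
      rw [if_neg (by omega)]; rfl
    refine ⟨t1.length, t2, by rw [hflat', ← ht1rep], ht1len, ht2ne, ht2c, ?_, ?_, ?_⟩
    · omega
    · have ha := hinv t1.length (by rw [hflat']; simp; omega)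
      have : e.getD t1.length 0 = t2.headI := by
        rw [hflat', List.getD_append_right _ _ _ _ (le_refl _)]
        simp only [Nat.sub_self]
        exact getD0_headI ht2ne
      omega
    · rw [← hlen, hflat']; simp
  · rintro ⟨a, d, rfl, ha, hdne, hdc, hd1, hda, hn⟩
    have hdlen : 1 ≤ d.length := List.length_pos_iff.mpr hdne
    refine ⟨by simp; omega, ?_, ?_⟩
    · intro i hi
      simp only [List.length_append, List.length_replicate] at hi
      by_cases hia : i < a
      · rw [List.getD_append _ _ _ _ (by simpa using hia)]
        rw [List.getD_eq_getElem _ _ (by simpa using hia), List.getElem_replicate]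
        exact Nat.zero_le _
      · push_neg at hia
        rw [List.getD_append_right _ _ _ _ (by simpa using hia)]
        simp only [List.length_replicate]
        have hmem : d.getD (i - a) 0 ∈ d := by
          rw [List.getD_eq_getElem _ _ (by omega)]
          exact List.getElem_mem _
        have := le_headI_of_chain' hdc hmem
        omega
    · refine ⟨[List.replicate a 0, d], ⟨by simp, ?_, ?_⟩, rfl⟩
      · intro t ht
        rcases List.mem_cons.mp ht with rfl | ht
        · constructor
          · simp; omega
          · unfold List.Chain'
            rw [List.isChain_iff_pairwise, List.pairwise_replicate]
            right; rfl
        · simp at ht; subst ht; exact ⟨hdne, hdc⟩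
      · unfold List.Chain'
        rw [List.isChain_cons_cons]
        refine ⟨⟨?_, ?_⟩, List.isChain_singleton _⟩
        · rw [List.getLastD_eq_getLast?, List.getLast?_replicate]
          rw [if_neg (by omega)]
          simp; omega
        · have : (List.replicate a (0:ℕ)).headI = 0 := by
            cases a with
            | zero => omega
            | succ k => rfl
          rw [this]
          exact Nat.zero_le _

section ListSide

variable {n : ℕ}

lemma le_of_strictMono {b : ℕ} (f : Fin b → ℕ) (hf : StrictMono f) (i : Fin b) : (i:ℕ) ≤ f i := by
  suffices H : ∀ k (hk : k < b), k ≤ f ⟨k, hk⟩ by exact H i.1 i.2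
  intro k
  induction k with
  | zero => intro hk; exact Nat.zero_le _
  | succ m ih =>
    intro hk
    have h1 : m < b := by omega
    have h2 := hf (show (⟨m, h1⟩ : Fin b) < ⟨m+1, hk⟩ by simp [Fin.lt_def])
    have h3 := ih h1
    omega

def sOf (A : Finset (Fin n)) : Fin A.card → ℕ := fun i => (A.orderEmbOfFin rfl i : ℕ)

lemma sOf_strictMono (A : Finset (Fin n)) : StrictMono (sOf A) := by
  intro i j hij
  have := (OrderEmbedding.strictMono (A.orderEmbOfFin rfl)) hij
  exact this

lemma sOf_le (A : Finset (Fin n)) (i : Fin A.card) : (i : ℕ) ≤ sOf A i :=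
  le_of_strictMono _ (sOf_strictMono A) i

lemma sOf_lt (A : Finset (Fin n)) (i : Fin A.card) : sOf A i < n := (A.orderEmbOfFin rfl i).isLt

def dOf (A : Finset (Fin n)) : List ℕ :=
  (List.ofFn (fun i : Fin A.card => sOf A i - (i:ℕ))).reverse

lemma dOf_length (A : Finset (Fin n)) : (dOf A).length = A.card := by simp [dOf]

def seqOf (A : Finset (Fin n)) : List ℕ := List.replicate (n - A.card) 0 ++ dOf A

lemma dOf_getD (A : Finset (Fin n)) {j : ℕ} (hj : j < A.card) (h2 : A.card - 1 - j < A.card) :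
    (dOf A).getD j 0 = sOf A ⟨A.card - 1 - j, h2⟩ - (A.card - 1 - j) := by
  rw [List.getD_eq_getElem _ _ (by rw [dOf_length]; exact hj)]
  unfold dOf
  rw [List.getElem_reverse]
  rw [List.getElem_ofFn]
  congr 1 <;> simp

lemma dOf_chain (A : Finset (Fin n)) : List.Chain' (fun x y => y ≤ x) (dOf A) := by
  unfold List.Chain'
  rw [dOf, List.isChain_reverse]
  rw [List.isChain_iff_getElem]
  intro i hi
  simp only [List.length_ofFn] at hi
  simp only [List.get_eq_getElem, List.getElem_ofFn]
  have h1 : i < A.card := by omega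
  have h2 : i + 1 < A.card := by omega
  have hmono := sOf_strictMono A (show (⟨i, h1⟩ : Fin A.card) < ⟨i+1, h2⟩ by simp [Fin.lt_def])
  have hle := sOf_le A ⟨i, h1⟩
  show sOf A ⟨i, h1⟩ - (⟨i, h1⟩ : Fin A.card) ≤ sOf A ⟨i+1, h2⟩ - (⟨i+1, h2⟩ : Fin A.card)
  simp only [Fin.val_mk] at *
  omega

lemma card_le (A : Finset (Fin n)) : A.card ≤ n := by
  calc A.card ≤ (Finset.univ : Finset (Fin n)).card := Finset.card_le_card (by simp)
    _ = n := by simp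

lemma nonlower_facts (A : Finset (Fin n)) (hA : ¬ IsLower A) :
    0 < A.card ∧ A.card < n ∧
      ∀ h : A.card - 1 < A.card, A.card ≤ sOf A ⟨A.card - 1, h⟩ := by
  have hb0 : 0 < A.card := by
    rcases Nat.eq_zero_or_pos A.card with h | h
    · exfalso
      apply hA
      intro j hj i _
      exact absurd hj (by simp [Finset.card_eq_zero.mp h])
    · exact h
  have hbn : A.card < n := by
    rcases lt_or_eq_of_le (card_le A) with h | h
    · exact h
    · exfalso
      apply hA
      have : A = Finset.univ := Finset.eq_univ_of_card A (by simp [h])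
      intro j _ i _
      simp [this]
  refine ⟨hb0, hbn, ?_⟩
  intro h
  by_contra hs
  push_neg at hs
  apply hA
  rw [isLower_iff]
  have hmem : ∀ i : Fin n, i ∈ A → (i : ℕ) < A.card := by
    intro i hi
    have : i ∈ Set.range (A.orderEmbOfFin rfl) := by
      rw [Finset.range_orderEmbOfFin]; exact_mod_cast hi
    obtain ⟨j, hj⟩ := this
    have hle : sOf A j ≤ sOf A ⟨A.card - 1, h⟩ :=
      (sOf_strictMono A).monotone (by rw [Fin.le_def]; simp; omega)
    have : (i : ℕ) = sOf A j := by rw [← hj]; rfl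
    omega
  have hsub : A ⊆ Finset.univ.filter fun i : Fin n => (i : ℕ) < A.card := by
    intro i hi
    simp only [Finset.mem_filter, Finset.mem_univ, true_and]
    exact hmem i hi
  have heq : A = Finset.univ.filter fun i : Fin n => (i : ℕ) < A.card := by
    apply Finset.eq_of_subset_of_card_le hsub
    rw [card_filter_lt_cast n A.card (card_le A)]
  intro i
  constructor
  · exact hmem i
  · intro hi
    rw [heq]
    simp [hi]

lemma nonlower_of (A : Finset (Fin n)) (x : Fin n) (hx : x ∈ A) (hs : A.card ≤ (x : ℕ)) :
    ¬ IsLower A := by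
  intro h
  have := (isLower_iff.mp h x).mp hx
  omega

lemma seqOf_mem (A : Finset (Fin n)) (hA : ¬ IsLower A) :
    (seqOf A).length = n ∧ IsInvSeq (seqOf A) ∧ HasLayers (seqOf A) 2 := by
  obtain ⟨hb0, hbn, hs⟩ := nonlower_facts A hA
  have hcard1 : A.card - 1 < A.card := by omega
  have hdne : dOf A ≠ [] := by
    intro h
    have := dOf_length A
    rw [h] at this
    simp at this
    omega
  have hhead : (dOf A).headI = sOf A ⟨A.card - 1, hcard1⟩ - (A.card - 1) := by
    rw [← getD0_headI hdne, dOf_getD A hb0 (by omega)]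
    simp
  rw [char_lemma n]
  refine ⟨n - A.card, dOf A, rfl, by omega, hdne, dOf_chain A, ?_, ?_, ?_⟩
  · rw [hhead]
    have := hs hcard1
    omega
  · rw [hhead]
    have := sOf_lt A ⟨A.card - 1, hcard1⟩
    omega
  · rw [dOf_length]
    omega

lemma dOf_headI_pos (A : Finset (Fin n)) (hA : ¬ IsLower A) : 1 ≤ (dOf A).getD 0 0 := by
  obtain ⟨hb0, hbn, hs⟩ := nonlower_facts A hA
  rw [dOf_getD A hb0 (by omega)]
  have := hs (by omega)
  simp only [Nat.sub_zero]
  omega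

lemma seqOf_card_mono (A B : Finset (Fin n)) (hA : ¬ IsLower A) (hB : ¬ IsLower B)
    (h : seqOf A = seqOf B) : ¬ (B.card < A.card) := by
  intro hlt
  obtain ⟨hbA, hnA, _⟩ := nonlower_facts A hA
  obtain ⟨hbB, hnB, _⟩ := nonlower_facts B hB
  have h1 : (seqOf A).getD (n - A.card) 0 = (dOf A).getD 0 0 := by
    rw [seqOf, List.getD_append_right _ _ _ _ (by simp)]
    simp
  have h2 : (seqOf B).getD (n - A.card) 0 = 0 := by
    rw [seqOf, List.getD_append _ _ _ _ (by simp; omega)]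
    rw [List.getD_eq_getElem _ _ (by simp; omega), List.getElem_replicate]
  have h3 := dOf_headI_pos A hA
  rw [h, h2] at h1
  omega

lemma seqOf_inj (A B : Finset (Fin n)) (hA : ¬ IsLower A) (hB : ¬ IsLower B)
    (h : seqOf A = seqOf B) : A = B := by
  have hcards : A.card = B.card := by
    rcases Nat.lt_trichotomy A.card B.card with hlt | heq | hlt
    · exact absurd hlt (seqOf_card_mono B A hB hA h.symm)
    · exact heq
    · exact absurd hlt (seqOf_card_mono A B hA hB h)
  have hd : dOf A = dOf B := by
    have := h
    rw [seqOf, seqOf, hcards] at this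
    exact List.append_cancel_left this
  have hk : ∀ k (hkA : k < A.card) (hkB : k < B.card), sOf A ⟨k, hkA⟩ = sOf B ⟨k, hkB⟩ := by
    intro k hkA hkB
    have h4 : sOf A ⟨k, hkA⟩ - k = sOf B ⟨k, hkB⟩ - k := by
      have h5 := congrArg (fun l => l.getD (A.card - 1 - k) 0) hd
      rw [dOf_getD A (by omega) (by omega), dOf_getD B (by omega) (by omega)] at h5
      simp only [show A.card - 1 - (A.card - 1 - k) = k by omega,
        show B.card - 1 - (A.card - 1 - k) = k by omega] at h5
      exact h5
    have h6 := sOf_le A ⟨k, hkA⟩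
    have h7 := sOf_le B ⟨k, hkB⟩
    simp only [Fin.val_mk] at h6 h7
    omega
  apply Finset.coe_injective
  rw [← Finset.range_orderEmbOfFin A rfl, ← Finset.range_orderEmbOfFin B rfl]
  ext x
  constructor
  · rintro ⟨j, rfl⟩
    refine ⟨⟨(j : ℕ), by omega⟩, ?_⟩
    apply Fin.ext
    exact (hk j j.isLt (by omega)).symm
  · rintro ⟨j, rfl⟩
    refine ⟨⟨(j : ℕ), by omega⟩, ?_⟩
    apply Fin.ext
    exact hk j (by omega) j.isLt

lemma seqOf_surj (e : List ℕ) (he : e.length = n ∧ IsInvSeq e ∧ HasLayers e 2) :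
    ∃ A : Finset (Fin n), ¬ IsLower A ∧ seqOf A = e := by
  obtain ⟨a, d, rfl, ha, hdne, hdc, hd1, hda, hn⟩ := (char_lemma n _).mp he
  set b := d.length with hb
  have hb1 : 1 ≤ b := List.length_pos_iff.mpr hdne
  have hdmono : ∀ i j : ℕ, i ≤ j → (hj : j < b) → d.getD j 0 ≤ d.getD i 0 := by
    intro i j hij hj
    rcases Nat.eq_or_lt_of_le hij with rfl | hlt
    · rfl
    · have hp := List.isChain_iff_pairwise.mp hdc
      rw [List.pairwise_iff_get] at hp
      have := hp ⟨i, by omega⟩ ⟨j, hj⟩ (by simp [Fin.lt_def]; omega)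
      rw [List.getD_eq_getElem d 0 hj, List.getD_eq_getElem d 0 (show i < d.length by omega)]
      simpa using this
  have hdle : ∀ (j : ℕ), (hj : j < b) → d.getD j 0 ≤ d.headI := by
    intro j hj
    rw [← getD0_headI hdne]
    exact hdmono 0 j (Nat.zero_le _) hj
  have hgbound : ∀ i : Fin b, d.getD (b - 1 - (i:ℕ)) 0 + (i:ℕ) < n := by
    intro i
    have := hdle (b - 1 - (i:ℕ)) (by omega)
    have hi := i.isLt
    omega
  set g : Fin b → Fin n := fun i => ⟨d.getD (b - 1 - (i:ℕ)) 0 + (i:ℕ), hgbound i⟩ with hg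
  have hgmono : StrictMono g := by
    intro i j hij
    rw [Fin.lt_def] at hij ⊢
    simp only [hg]
    have := hdmono (b - 1 - (j:ℕ)) (b - 1 - (i:ℕ)) (by omega) (by omega)
    omega
  set A : Finset (Fin n) := Finset.image g Finset.univ with hA
  have hcard : A.card = b := by
    rw [hA, Finset.card_image_of_injective _ hgmono.injective, Finset.card_univ,
      Fintype.card_fin]
  set f : Fin A.card → Fin n := fun i => g (Fin.cast hcard i) with hf
  have hforder : ⇑(A.orderEmbOfFin rfl) = f := by
    refine (Finset.orderEmbOfFin_unique rfl ?_ ?_).symm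
    · intro x
      rw [hA]
      exact Finset.mem_image_of_mem g (Finset.mem_univ _)
    · intro i j hij
      exact hgmono (by rwa [Fin.lt_def] at hij ⊢)
  have hsval : ∀ (k : ℕ) (hk : k < A.card), sOf A ⟨k, hk⟩ = d.getD (b - 1 - k) 0 + k := by
    intro k hk
    rw [sOf, hforder]
    rfl
  refine ⟨A, ?_, ?_⟩
  · apply nonlower_of A (g ⟨b - 1, by omega⟩)
    · exact Finset.mem_image_of_mem g (Finset.mem_univ _)
    · show A.card ≤ d.getD (b - 1 - (b-1)) 0 + (b - 1)
      rw [hcard]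
      have : d.getD (b - 1 - (b-1)) 0 = d.headI := by
        rw [show b - 1 - (b-1) = 0 by omega]
        exact getD0_headI hdne
      omega
  · apply List.ext_getElem
    · simp [seqOf, dOf_length, hcard]
      omega
    · intro i h1 h2
      rw [← List.getD_eq_getElem _ 0 h1, ← List.getD_eq_getElem _ 0 h2]
      have hlen2 : i < n := by have h2' := h2; simp at h2'; omega
      by_cases hia : i < a
      · rw [seqOf, List.getD_append _ _ _ _ (by simp; omega),
          List.getD_append _ _ _ _ (by simp; omega)]
        rw [List.getD_eq_getElem _ _ (by simp; omega), List.getElem_replicate,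
          List.getD_eq_getElem _ _ (by simp; omega), List.getElem_replicate]
      · push_neg at hia
        rw [seqOf, List.getD_append_right _ _ _ _ (by simp [hcard]; omega),
          List.getD_append_right _ _ _ _ (by simp; omega)]
        simp only [List.length_replicate, hcard]
        rw [dOf_getD A (by rw [hcard]; omega) (by omega)]
        rw [hsval (A.card - 1 - (i - (n - b))) (by omega)]
        rw [hcard]
        rw [show b - 1 - (b - 1 - (i - (n - b))) = i - (n - b) by omega]
        rw [show n - b = a by omega]
        omega
  -- end

end ListSide

section PermSide

variable {n : ℕ}


lemma card_compl_eq (A : Finset (Fin n)) : Aᶜ.card = n - A.card := by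
  simp [Finset.card_compl]

def permFun (A : Finset (Fin n)) : Fin n → Fin n := fun i =>
  if h : (i : ℕ) < A.card then A.orderEmbOfFin rfl ⟨i, h⟩
  else Aᶜ.orderEmbOfFin (card_compl_eq A) ⟨(i : ℕ) - A.card, by
    have := i.isLt; omega⟩

lemma permFun_inj (A : Finset (Fin n)) : Function.Injective (permFun A) := by
  intro i j hij
  unfold permFun at hij
  by_cases hi : (i : ℕ) < A.card <;> by_cases hj : (j : ℕ) < A.card
  · rw [dif_pos hi, dif_pos hj] at hij
    have h1 := (A.orderEmbOfFin rfl).injective hij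
    have h2 := congrArg Fin.val h1
    simp only [Fin.val_mk] at h2
    exact Fin.ext h2
  · rw [dif_pos hi, dif_neg hj] at hij
    have h1 := Finset.orderEmbOfFin_mem A rfl ⟨i, hi⟩
    have h2 := Finset.orderEmbOfFin_mem Aᶜ (card_compl_eq A) ⟨(j:ℕ) - A.card, by have := j.isLt; omega⟩
    rw [hij] at h1
    rw [Finset.mem_compl] at h2
    exact absurd h1 h2
  · rw [dif_neg hi, dif_pos hj] at hij
    have h1 := Finset.orderEmbOfFin_mem A rfl ⟨j, hj⟩
    have h2 := Finset.orderEmbOfFin_mem Aᶜ (card_compl_eq A) ⟨(i:ℕ) - A.card, by have := i.isLt; omega⟩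
    rw [← hij] at h1
    rw [Finset.mem_compl] at h2
    exact absurd h1 h2
  · rw [dif_neg hi, dif_neg hj] at hij
    have := (Aᶜ.orderEmbOfFin (card_compl_eq A)).injective hij
    have := congrArg Fin.val this
    simp only [Fin.val_mk] at this
    apply Fin.ext
    omega

noncomputable def permOf (A : Finset (Fin n)) : Equiv.Perm (Fin n) :=
  Equiv.ofBijective (permFun A) (Finite.injective_iff_bijective.mp (permFun_inj A))

lemma permOf_apply (A : Finset (Fin n)) (i : Fin n) : permOf A i = permFun A i := rfl

lemma permOf_lt (A : Finset (Fin n)) (i : Fin n) (h : (i : ℕ) < A.card) :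
    permOf A i = A.orderEmbOfFin rfl ⟨i, h⟩ := by
  rw [permOf_apply, permFun, dif_pos h]

lemma permOf_ge (A : Finset (Fin n)) (i : Fin n) (h : ¬ (i : ℕ) < A.card) :
    permOf A i = Aᶜ.orderEmbOfFin (card_compl_eq A)
      ⟨(i : ℕ) - A.card, by have := i.isLt; omega⟩ := by
  rw [permOf_apply, permFun, dif_neg h]

lemma compl_min_lt (A : Finset (Fin n)) (hA : ¬ IsLower A) :
    ∃ x : Fin n, x ∈ Aᶜ ∧ (x : ℕ) < A.card := by
  by_contra hc
  push_neg at hc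
  apply hA
  rw [isLower_iff_eq]
  refine (Finset.eq_of_subset_of_card_le ?_ ?_).symm
  · intro x hx
    simp only [Finset.mem_filter, Finset.mem_univ, true_and] at hx
    by_contra hxA
    have hxc : x ∈ Aᶜ := Finset.mem_compl.mpr hxA
    have := hc x hxc
    omega
  · rw [card_filter_lt_cast n A.card (card_le A)]

set_option maxHeartbeats 1000000 in
lemma descent_filter_eq (A : Finset (Fin n)) (hA : ¬ IsLower A) :
    (Finset.univ.filter fun i : Fin n =>
        ∃ j : Fin n, (j : ℕ) = (i : ℕ) + 1 ∧ permOf A j < permOf A i) =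
      {⟨A.card - 1, by have := (nonlower_facts A hA).2.1; omega⟩} := by
  obtain ⟨hb0, hbn, hs⟩ := nonlower_facts A hA
  ext i
  simp only [Finset.mem_filter, Finset.mem_univ, true_and, Finset.mem_singleton]
  constructor
  · rintro ⟨j, hj1, hj2⟩
    apply Fin.ext
    simp only [Fin.val_mk]
    by_contra hne
    by_cases hi : (i : ℕ) + 1 < A.card
    · rw [permOf_lt A i (by omega), permOf_lt A j (by omega)] at hj2
      have := (OrderEmbedding.strictMono (A.orderEmbOfFin rfl))
        (show (⟨(i:ℕ), by omega⟩ : Fin A.card) < ⟨(j:ℕ), by omega⟩ by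
          rw [Fin.lt_def]; simp; omega)
      rw [Fin.lt_def] at hj2 this
      have hlt : ((A.orderEmbOfFin rfl ⟨(i:ℕ), by omega⟩ : Fin n) : ℕ) < ((A.orderEmbOfFin rfl ⟨(j:ℕ), by omega⟩ : Fin n) : ℕ) := this
      omega
    · have hige : A.card ≤ (i : ℕ) := by omega
      rw [permOf_ge A i (by omega), permOf_ge A j (by omega)] at hj2
      have := (OrderEmbedding.strictMono (Aᶜ.orderEmbOfFin (card_compl_eq A)))
        (show (⟨(i:ℕ) - A.card, by have := i.isLt; omega⟩ : Fin (n - A.card)) <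
            ⟨(j:ℕ) - A.card, by have := j.isLt; omega⟩ by
          rw [Fin.lt_def]; simp; omega)
      rw [Fin.lt_def] at hj2 this
      omega
  · intro hi
    subst hi
    refine ⟨⟨A.card, hbn⟩, ?_, ?_⟩
    · simp; omega
    rw [permOf_lt A ⟨A.card - 1, by omega⟩ (by simp only [Fin.val_mk]; omega),
      permOf_ge A ⟨A.card, hbn⟩ (by simp only [Fin.val_mk]; omega)]
    obtain ⟨x, hx1, hx2⟩ := compl_min_lt A hA
    have hxr : x ∈ Set.range (Aᶜ.orderEmbOfFin (card_compl_eq A)) := by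
      rw [Finset.range_orderEmbOfFin]; exact_mod_cast hx1
    obtain ⟨jx, hjx⟩ := hxr
    have h1 : ((Aᶜ.orderEmbOfFin (card_compl_eq A)
        ⟨A.card - A.card, by omega⟩ : Fin n) : ℕ) ≤ (x : ℕ) := by
      rw [← hjx]
      have hmin : Aᶜ.orderEmbOfFin (card_compl_eq A) ⟨A.card - A.card, by omega⟩ ≤
          Aᶜ.orderEmbOfFin (card_compl_eq A) jx := by
        apply (OrderEmbedding.strictMono _).monotone
        rw [Fin.le_def]
        simp
      exact_mod_cast hmin
    have hsv := hs (by omega)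
    have h2 : ((A.orderEmbOfFin rfl ⟨A.card - 1, by omega⟩ : Fin n) : ℕ) =
        sOf A ⟨A.card - 1, by omega⟩ := rfl
    rw [Fin.lt_def]
    simp only [Fin.val_mk]
    omega

lemma descentCount_permOf (A : Finset (Fin n)) (hA : ¬ IsLower A) :
    descentCount (permOf A) = 1 := by
  rw [descentCount, descent_filter_eq A hA, Finset.card_singleton]

lemma strictMono_of_step {b : ℕ} {β : Type*} [Preorder β] (f : Fin b → β)
    (h : ∀ (m : ℕ) (h1 : m < b) (h2 : m + 1 < b), f ⟨m, h1⟩ < f ⟨m+1, h2⟩) :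
    StrictMono f := by
  intro i j hij
  rw [Fin.lt_def] at hij
  suffices H : ∀ (q : ℕ) (hq : q < b) (p : ℕ) (hp : p < b), p < q → f ⟨p, hp⟩ < f ⟨q, hq⟩ by
    exact H j.1 j.2 i.1 i.2 hij
  intro q
  induction q with
  | zero => intro hq p hp hpq; exact absurd hpq (by omega)
  | succ m ih =>
    intro hq p hp hpq
    rcases Nat.lt_or_ge p m with h' | h'
    · exact lt_trans (ih (by omega) p hp h') (h m (by omega) hq)
    · have hpm : p = m := by omega
      subst hpm
      exact h p hp hq

lemma permOf_emb (A : Finset (Fin n)) (j : Fin A.card) :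
    A.orderEmbOfFin rfl j = permOf A ⟨(j : ℕ), lt_of_lt_of_le j.isLt (card_le A)⟩ := by
  rw [permOf_lt A ⟨(j : ℕ), lt_of_lt_of_le j.isLt (card_le A)⟩ j.isLt]

lemma permOf_inj (A B : Finset (Fin n)) (hA : ¬ IsLower A) (hB : ¬ IsLower B)
    (h : permOf A = permOf B) : A = B := by
  obtain ⟨hbA, hnA, _⟩ := nonlower_facts A hA
  obtain ⟨hbB, hnB, _⟩ := nonlower_facts B hB
  have hcards : A.card = B.card := by
    have h1 := descent_filter_eq A hA
    have h2 := descent_filter_eq B hB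
    rw [h] at h1
    rw [h1] at h2
    have := congrArg Fin.val (Finset.singleton_injective h2)
    simp only [Fin.val_mk] at this
    omega
  apply Finset.coe_injective
  rw [← Finset.range_orderEmbOfFin A rfl, ← Finset.range_orderEmbOfFin B rfl]
  ext x
  simp only [Set.mem_range]
  constructor
  · rintro ⟨j, rfl⟩
    refine ⟨⟨(j : ℕ), by omega⟩, ?_⟩
    rw [permOf_emb B ⟨(j : ℕ), by omega⟩, ← h, permOf_emb A j]
  · rintro ⟨j, rfl⟩
    refine ⟨⟨(j : ℕ), by omega⟩, ?_⟩
    rw [permOf_emb A ⟨(j : ℕ), by omega⟩, h, permOf_emb B j]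

set_option maxHeartbeats 1000000 in
lemma permOf_surj (σ : Equiv.Perm (Fin n)) (hσ : descentCount σ = 1) :
    ∃ A : Finset (Fin n), ¬ IsLower A ∧ permOf A = σ := by
  rw [descentCount] at hσ
  obtain ⟨i₀, hi₀⟩ := Finset.card_eq_one.mp hσ
  have hi₀mem : i₀ ∈ Finset.univ.filter fun i : Fin n =>
      ∃ j : Fin n, (j : ℕ) = (i : ℕ) + 1 ∧ σ j < σ i := by
    rw [hi₀]; exact Finset.mem_singleton_self _
  simp only [Finset.mem_filter, Finset.mem_univ, true_and] at hi₀mem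
  obtain ⟨j₀, hj₀1, hj₀2⟩ := hi₀mem
  set k := (i₀ : ℕ) with hk
  have hkn : k + 1 < n := by have := j₀.isLt; omega
  have step : ∀ (m : ℕ) (h1 : m < n) (h2 : m + 1 < n), m ≠ k → σ ⟨m, h1⟩ < σ ⟨m+1, h2⟩ := by
    intro m h1 h2 hm
    have hnotin : (⟨m, h1⟩ : Fin n) ∉
        Finset.univ.filter fun i : Fin n =>
          ∃ j : Fin n, (j : ℕ) = (i : ℕ) + 1 ∧ σ j < σ i := by
      rw [hi₀]
      simp only [Finset.mem_singleton]
      intro hc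
      exact hm (by rw [hk, ← hc])
    simp only [Finset.mem_filter, Finset.mem_univ, true_and, not_exists] at hnotin
    have hle := hnotin ⟨m+1, h2⟩
    simp only [Fin.val_mk, not_and] at hle
    have hle2 := hle trivial
    have hne : σ ⟨m, h1⟩ ≠ σ ⟨m+1, h2⟩ := by
      intro hc
      have := σ.injective hc
      have := congrArg Fin.val this
      simp at this
    exact lt_of_le_of_ne (not_lt.mp hle2) hne
  set P := Finset.univ.filter (fun x : Fin n => (x : ℕ) < k + 1) with hP
  set A := P.image σ with hAdef
  have hcardA : A.card = k + 1 := by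
    rw [hAdef, Finset.card_image_of_injective _ σ.injective, hP,
      card_filter_lt_cast n (k+1) (by omega)]
  have hmemA : ∀ x : Fin A.card, σ ⟨(x : ℕ), by have := x.isLt; omega⟩ ∈ A := by
    intro x
    apply Finset.mem_image_of_mem
    rw [hP]
    simp only [Finset.mem_filter, Finset.mem_univ, true_and, Fin.val_mk]
    have := x.isLt
    omega
  have hf : ⇑(A.orderEmbOfFin rfl) =
      fun x : Fin A.card => σ ⟨(x : ℕ), by have := x.isLt; omega⟩ := by
    refine (Finset.orderEmbOfFin_unique rfl hmemA ?_).symm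
    apply strictMono_of_step
    intro m h1 h2
    exact step m (by omega) (by omega) (by omega)
  have hmemC : ∀ x : Fin (n - A.card),
      σ ⟨A.card + (x : ℕ), by have := x.isLt; omega⟩ ∈ Aᶜ := by
    intro x
    rw [Finset.mem_compl]
    intro hc
    obtain ⟨p, hp1, hp2⟩ := Finset.mem_image.mp hc
    have := σ.injective hp2
    rw [hP] at hp1
    simp only [Finset.mem_filter, Finset.mem_univ, true_and] at hp1
    have := congrArg Fin.val this
    simp only [Fin.val_mk] at this
    omega
  have hfc : ⇑(Aᶜ.orderEmbOfFin (card_compl_eq A)) =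
      fun x : Fin (n - A.card) => σ ⟨A.card + (x : ℕ), by have := x.isLt; omega⟩ := by
    refine (Finset.orderEmbOfFin_unique (card_compl_eq A) hmemC ?_).symm
    apply strictMono_of_step
    intro m h1 h2
    exact step (A.card + m) (by omega) (by omega) (by omega)
  refine ⟨A, ?_, ?_⟩
  · intro hlow
    rw [isLower_iff] at hlow
    have hi₀A : σ i₀ ∈ A := by
      apply Finset.mem_image_of_mem
      rw [hP]
      simp only [Finset.mem_filter, Finset.mem_univ, true_and]
      omega
    have h1 : (σ i₀ : ℕ) < A.card := (hlow (σ i₀)).mp hi₀A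
    have h2 : (σ j₀ : ℕ) < A.card := by
      rw [Fin.lt_def] at hj₀2
      omega
    have h3 : σ j₀ ∈ A := (hlow (σ j₀)).mpr h2
    obtain ⟨p, hp1, hp2⟩ := Finset.mem_image.mp h3
    have := σ.injective hp2
    subst this
    rw [hP] at hp1
    simp only [Finset.mem_filter, Finset.mem_univ, true_and] at hp1
    omega
  · apply Equiv.ext
    intro i
    rw [permOf_apply, permFun]
    split
    · next h =>
      show (A.orderEmbOfFin rfl) ⟨(i : ℕ), h⟩ = σ i
      rw [hf]
    · next h =>
      show (Aᶜ.orderEmbOfFin (card_compl_eq A)) ⟨(i : ℕ) - A.card, _⟩ = σ i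
      rw [hfc]
      refine congrArg σ (Fin.ext ?_)
      simp only [Fin.val_mk]
      omega

end PermSide

/-- The number of pop stack sortable (i.e. layered) inversion sequences of length n with
exactly 2 layers equals the Eulerian number E(n,2), the number of permutations of length n
with exactly one descent. -/
theorem two_layer_inv_seq_eulerian (n : ℕ) :
    Set.ncard {e : List ℕ | e.length = n ∧ IsInvSeq e ∧ HasLayers e 2} =
      Set.ncard {σ : Equiv.Perm (Fin n) | descentCount σ = 1} := by
  have hL : Set.BijOn (seqOf (n := n)) {A : Finset (Fin n) | ¬ IsLower A}
      {e : List ℕ | e.length = n ∧ IsInvSeq e ∧ HasLayers e 2} := by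
    refine ⟨fun A hA => seqOf_mem A hA, fun A hA B hB h => seqOf_inj A B hA hB h, ?_⟩
    intro e he
    obtain ⟨A, hA, hAe⟩ := seqOf_surj e he
    exact ⟨A, hA, hAe⟩
  have hP : Set.BijOn (permOf (n := n)) {A : Finset (Fin n) | ¬ IsLower A}
      {σ : Equiv.Perm (Fin n) | descentCount σ = 1} := by
    refine ⟨fun A hA => descentCount_permOf A hA, fun A hA B hB h => permOf_inj A B hA hB h, ?_⟩
    intro σ hσ
    obtain ⟨A, hA, hAσ⟩ := permOf_surj σ hσ
    exact ⟨A, hA, hAσ⟩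
  rw [← hL.image_eq, ← hP.image_eq, Set.ncard_image_of_injOn hL.injOn,
    Set.ncard_image_of_injOn hP.injOn]
end

section
/- Under the Lehmer-code variant mapping a permutation π of length n to the inversion sequence e where e_{j} counts the inversions in which π_j is the smaller, later entry, the permutations with exactly one descent correspond bijectively to the layered inversion sequences with exactly 2 layers. -/
/-- The Lehmer-code variant: the j-th entry counts the inversions in which the j-th entry
of the permutation is the smaller, later entry. -/
def lehmer {n : ℕ} (σ : Equiv.Perm (Fin n)) : List ℕ :=
  List.ofFn fun j : Fin n => (Finset.univ.filter fun i : Fin n => i < j ∧ σ j < σ i).card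

open Finset

variable {n : ℕ}

/-- The j-th code entry. -/
def code (σ : Equiv.Perm (Fin n)) (j : Fin n) : ℕ :=
  (Finset.univ.filter fun i : Fin n => i < j ∧ σ j < σ i).card

lemma lehmer_eq (σ : Equiv.Perm (Fin n)) : lehmer σ = List.ofFn (code σ) := rfl

@[simp] lemma lehmer_length (σ : Equiv.Perm (Fin n)) : (lehmer σ).length = n := by
  simp [lehmer_eq]

lemma lehmer_getElem (σ : Equiv.Perm (Fin n)) (j : ℕ) (h : j < n) :
    (lehmer σ)[j]'(by simpa using h) = code σ ⟨j, h⟩ := by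
  simp [lehmer_eq]

lemma lehmer_getD (σ : Equiv.Perm (Fin n)) (j : ℕ) (h : j < n) :
    (lehmer σ).getD j 0 = code σ ⟨j, h⟩ := by
  rw [List.getD_eq_getElem _ _ (by simpa using h), lehmer_getElem σ j h]

/-- counting over images of a permutation -/
lemma card_filter_comp (σ : Equiv.Perm (Fin n)) (P : Fin n → Prop) [DecidablePred P] :
    (univ.filter fun i => P (σ i)).card = (univ.filter P).card := by
  apply Finset.card_bij (fun i _ => σ i)
  · intro a ha; simp at ha ⊢; exact ha
  · intro a _ b _ h; exact σ.injective h
  · intro b hb; simp at hb ⊢; exact ⟨σ.symm b, by simpa using hb⟩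

lemma code_eq_le (σ : Equiv.Perm (Fin n)) (j : Fin n) :
    code σ j = (univ.filter fun i => i ≤ j ∧ σ j < σ i).card := by
  unfold code
  congr 1
  apply filter_congr
  intro i _
  constructor
  · rintro ⟨h1, h2⟩; exact ⟨le_of_lt h1, h2⟩
  · rintro ⟨h1, h2⟩
    rcases lt_or_eq_of_le h1 with h | h
    · exact ⟨h, h2⟩
    · subst h; exact absurd h2 (lt_irrefl _)

/-- split count at position j -/
lemma count_split (σ : Equiv.Perm (Fin n)) (j : Fin n) (v : Fin n) :
    (univ.filter fun i => i ≤ j ∧ v < σ i).card + (univ.filter fun i => j < i ∧ v < σ i).card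
      = (univ.filter fun w : Fin n => v < w).card := by
  rw [← card_filter_comp σ (fun w => v < w)]
  rw [← Finset.card_filter_add_card_filter_not (p := fun i => i ≤ j)
    (s := univ.filter fun i => v < σ i)]
  congr 1
  · rw [Finset.filter_filter]; congr 1; ext i; simp [and_comm]
  · rw [Finset.filter_filter]; congr 1; ext i; simp [and_comm, not_le]

lemma step_lt (σ τ : Equiv.Perm (Fin n)) (hc : ∀ j, code σ j = code τ j) (j : Fin n)
    (ih : ∀ i, j < i → σ i = τ i) (hlt : σ j < τ j) : False := by
  -- g v = #{i ≤ j : v < σ i}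
  have key : (univ.filter fun i => i ≤ j ∧ σ j < σ i).card
      = (univ.filter fun i => i ≤ j ∧ τ j < σ i).card := by
    have h1 : (univ.filter fun i => i ≤ j ∧ σ j < σ i).card = code σ j := (code_eq_le σ j).symm
    have h2 : (univ.filter fun i => i ≤ j ∧ τ j < τ i).card = code τ j := (code_eq_le τ j).symm
    have hsplitσ := count_split σ j (τ j)
    have hsplitτ := count_split τ j (τ j)
    have hgt : (univ.filter fun i => j < i ∧ τ j < σ i).card
        = (univ.filter fun i => j < i ∧ τ j < τ i).card := by
      congr 1
      apply filter_congr
      intro i _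
      constructor
      · rintro ⟨h1', h2'⟩; exact ⟨h1', (ih i h1') ▸ h2'⟩
      · rintro ⟨h1', h2'⟩; exact ⟨h1', (ih i h1') ▸ h2'⟩
    have : (univ.filter fun i => i ≤ j ∧ τ j < σ i).card = code τ j := by
      omega
    rw [h1, hc j, this]
  -- strict subset contradiction
  have hsub : (univ.filter fun i => i ≤ j ∧ τ j < σ i) ⊂ (univ.filter fun i => i ≤ j ∧ σ j < σ i) := by
    constructor
    · intro i hi
      simp only [mem_filter, mem_univ, true_and] at hi ⊢
      exact ⟨hi.1, lt_trans hlt hi.2⟩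
    · intro hcon
      set k := σ.symm (τ j) with hk
      have hσk : σ k = τ j := σ.apply_symm_apply _
      have hkj : k ≤ j := by
        by_contra hgt
        push_neg at hgt
        have := ih k hgt
        rw [this] at hσk
        have : k = j := τ.injective hσk
        omega
      have hmem : k ∈ univ.filter fun i => i ≤ j ∧ σ j < σ i := by
        simp only [mem_filter, mem_univ, true_and]
        exact ⟨hkj, hσk ▸ hlt⟩
      have := hcon hmem
      simp only [mem_filter, mem_univ, true_and] at this
      rw [hσk] at this
      exact absurd this.2 (lt_irrefl _)
  have := Finset.card_lt_card hsub
  omega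

lemma lehmer_injective : Function.Injective (lehmer (n := n)) := by
  intro σ τ h
  have hc : ∀ j, code σ j = code τ j := by
    intro j
    have h1 : (lehmer σ).getD (j : ℕ) 0 = (lehmer τ).getD (j : ℕ) 0 := by rw [h]
    rwa [lehmer_getD σ j j.isLt, lehmer_getD τ j j.isLt] at h1
  have key : ∀ k : ℕ, ∀ j : Fin n, n - (j : ℕ) ≤ k → σ j = τ j := by
    intro k
    induction k with
    | zero => intro j hj; omega
    | succ k ihk =>
      intro j hj
      have ih : ∀ i, j < i → σ i = τ i := by
        intro i hi
        exact ihk i (by omega)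
      by_contra hne
      rcases lt_trichotomy (σ j) (τ j) with hlt | heq | hgt
      · exact step_lt σ τ hc j ih hlt
      · exact hne heq
      · exact step_lt τ σ (fun j => (hc j).symm) j (fun i hi => (ih i hi).symm) hgt
  apply Equiv.ext
  intro j
  exact key n j (by omega)

lemma lehmer_isInvSeq (σ : Equiv.Perm (Fin n)) : IsInvSeq (lehmer σ) := by
  intro i hi
  rw [lehmer_length] at hi
  rw [lehmer_getD σ i hi]
  unfold code
  calc (univ.filter fun k : Fin n => k < ⟨i, hi⟩ ∧ σ ⟨i, hi⟩ < σ k).card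
      ≤ (univ.filter fun k : Fin n => k < (⟨i, hi⟩ : Fin n)).card := by
        apply Finset.card_le_card
        intro k hk
        simp only [mem_filter, mem_univ, true_and] at hk ⊢
        exact hk.1
    _ = i := by
        rw [show (univ.filter fun k : Fin n => k < (⟨i, hi⟩ : Fin n)) = Finset.Iio ⟨i, hi⟩ by
          ext; simp, Fin.card_Iio]

/-- encoding of inversion sequences as dependent functions -/
def invSeqOfFn (f : ∀ j : Fin n, Fin ((j : ℕ) + 1)) : List ℕ :=
  List.ofFn fun j => (f j : ℕ)

lemma invSeqOfFn_injective : Function.Injective (invSeqOfFn (n := n)) := by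
  intro f g h
  funext j
  have := congrArg (fun l => l.getD (j : ℕ) 0) h
  simp only [invSeqOfFn] at this
  have h1 : ((f j : ℕ)) = ((g j : ℕ)) := by
    have hf := List.getD_eq_getElem (List.ofFn fun j : Fin n => (f j : ℕ)) 0 (n := (j:ℕ))
      (by simp [j.isLt])
    have hg := List.getD_eq_getElem (List.ofFn fun j : Fin n => (g j : ℕ)) 0 (n := (j:ℕ))
      (by simp [j.isLt])
    rw [hf, hg] at this
    simpa using this
  exact Fin.ext h1

lemma range_invSeqOfFn : Set.range (invSeqOfFn (n := n)) = {e | e.length = n ∧ IsInvSeq e} := by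
  ext e
  constructor
  · rintro ⟨f, rfl⟩
    constructor
    · simp [invSeqOfFn]
    · intro i hi
      simp only [invSeqOfFn, List.length_ofFn] at hi
      rw [List.getD_eq_getElem _ _ (by simpa [invSeqOfFn] using hi)]
      simp only [invSeqOfFn, List.getElem_ofFn]
      exact Nat.lt_succ_iff.mp (f ⟨i, hi⟩).isLt
  · rintro ⟨hlen, hinv⟩
    refine ⟨fun j => ⟨e.getD (j : ℕ) 0, ?_⟩, ?_⟩
    · exact Nat.lt_succ_iff.mpr (hinv (j : ℕ) (by omega))
    · apply List.ext_getElem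
      · simp [invSeqOfFn, hlen]
      · intro i h1 h2
        simp only [invSeqOfFn, List.getElem_ofFn]
        rw [List.getD_eq_getElem _ _ h2]

lemma lehmer_range : Set.range (lehmer (n := n)) = {e | e.length = n ∧ IsInvSeq e} := by
  have hsub : Set.range (lehmer (n := n)) ⊆ {e | e.length = n ∧ IsInvSeq e} := by
    rintro e ⟨σ, rfl⟩
    exact ⟨lehmer_length σ, lehmer_isInvSeq σ⟩
  have hfin : ({e : List ℕ | e.length = n ∧ IsInvSeq e}).Finite := by
    rw [← range_invSeqOfFn]
    exact Set.finite_range _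
  have h1 : (Set.range (lehmer (n := n))).ncard = n.factorial := by
    rw [← Set.image_univ, Set.ncard_image_of_injective _ lehmer_injective, Set.ncard_univ]
    simp [Nat.card_eq_fintype_card, Fintype.card_perm]
  have h2 : ({e : List ℕ | e.length = n ∧ IsInvSeq e}).ncard = n.factorial := by
    rw [← range_invSeqOfFn, ← Set.image_univ,
      Set.ncard_image_of_injective _ invSeqOfFn_injective, Set.ncard_univ]
    rw [Nat.card_eq_fintype_card, Fintype.card_pi]
    calc ∏ j : Fin n, Fintype.card (Fin ((j : ℕ) + 1)) = ∏ j : Fin n, ((j : ℕ) + 1) := by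
          simp
      _ = ∏ j ∈ Finset.range n, (j + 1) := by
          rw [Finset.prod_range fun j => j + 1]
      _ = n.factorial := Finset.prod_range_add_one_eq_factorial n
  exact Set.eq_of_subset_of_ncard_le hsub (by rw [h1, h2]) hfin

lemma descent_iff (σ : Equiv.Perm (Fin n)) (i : Fin n) (h : (i : ℕ) + 1 < n) :
    σ ⟨(i : ℕ) + 1, h⟩ < σ i ↔ code σ i < code σ ⟨(i : ℕ) + 1, h⟩ := by
  set j : Fin n := ⟨(i : ℕ) + 1, h⟩ with hj
  have hij : i < j := by simp [hj, Fin.lt_def]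
  have hne : i ≠ j := ne_of_lt hij
  constructor
  · intro hd
    apply Finset.card_lt_card
    constructor
    · intro k hk
      simp only [mem_filter, mem_univ, true_and] at hk ⊢
      exact ⟨lt_trans hk.1 hij, lt_trans hd hk.2⟩
    · intro hcon
      have hmem : i ∈ univ.filter fun k : Fin n => k < j ∧ σ j < σ k := by
        simp only [mem_filter, mem_univ, true_and]
        exact ⟨hij, hd⟩
      have := hcon hmem
      simp only [mem_filter, mem_univ, true_and] at this
      exact absurd this.1 (lt_irrefl _)
  · intro hlt
    by_contra hnd
    push_neg at hnd
    have hd : σ i < σ j := by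
      rcases lt_or_eq_of_le hnd with h' | h'
      · exact h'
      · exact absurd (σ.injective h') hne
    have hle : code σ j ≤ code σ i := by
      apply Finset.card_le_card
      intro k hk
      simp only [mem_filter, mem_univ, true_and] at hk ⊢
      have hk1 : k < j := hk.1
      have hk2 : σ j < σ k := hk.2
      have hki : k ≠ i := by
        intro hh; subst hh; exact absurd (lt_trans hd hk2) (lt_irrefl _)
      have : (k : ℕ) < (i : ℕ) + 1 := hk1
      have hklt : k < i := by
        rw [Fin.lt_def]
        rcases Nat.lt_succ_iff_lt_or_eq.mp this with h' | h'
        · exact h'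
        · exact absurd (Fin.ext h') hki
      exact ⟨hklt, lt_trans hd hk2⟩
    omega

/-- descentCount expressed via the code -/
lemma descentCount_eq (σ : Equiv.Perm (Fin n)) :
    descentCount σ = (univ.filter fun i : Fin n =>
      (i : ℕ) + 1 < n ∧ (lehmer σ).getD (i : ℕ) 0 < (lehmer σ).getD ((i : ℕ) + 1) 0).card := by
  unfold descentCount
  congr 1
  apply filter_congr
  intro i _
  constructor
  · rintro ⟨j, hj1, hj2⟩
    have h : (i : ℕ) + 1 < n := hj1 ▸ j.isLt
    refine ⟨h, ?_⟩
    rw [lehmer_getD σ i i.isLt, lehmer_getD σ ((i : ℕ) + 1) h]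
    have : j = ⟨(i : ℕ) + 1, h⟩ := Fin.ext hj1
    subst this
    have := (descent_iff σ i h).mp hj2
    simpa [Fin.eta] using this
  · rintro ⟨h, hlt⟩
    refine ⟨⟨(i : ℕ) + 1, h⟩, rfl, ?_⟩
    apply (descent_iff σ i h).mpr
    rw [lehmer_getD σ i i.isLt, lehmer_getD σ ((i : ℕ) + 1) h] at hlt
    simpa [Fin.eta] using hlt

/-- The set of ascent positions of a list, as a Finset of Fin n. -/
def ascFilter (n : ℕ) (e : List ℕ) : Finset (Fin n) :=
  univ.filter fun i : Fin n => (i : ℕ) + 1 < n ∧ e.getD (i : ℕ) 0 < e.getD ((i : ℕ) + 1) 0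

lemma headI_eq_getD {l : List ℕ} (h : l ≠ []) : l.headI = l.getD 0 0 := by
  cases l with
  | nil => simp at h
  | cons a t => rfl

lemma getLastD_eq_getD {l : List ℕ} (h : l ≠ []) : l.getLastD 0 = l.getD (l.length - 1) 0 := by
  have hpos := List.length_pos_iff.mpr h
  rw [List.getD_eq_getElem _ _ (by omega), List.getLastD_eq_getLast?,
    List.getLast?_eq_getLast h, Option.getD_some, List.getLast_eq_getElem]

lemma getD_take (l : List ℕ) (m i : ℕ) (h : i < m) (h2 : i < l.length) :
    (l.take m).getD i 0 = l.getD i 0 := by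
  rw [List.getD_eq_getElem _ _ (by simp; omega), List.getD_eq_getElem _ _ h2]
  simp

lemma getD_drop (l : List ℕ) (m i : ℕ) (h : m + i < l.length) :
    (l.drop m).getD i 0 = l.getD (m + i) 0 := by
  rw [List.getD_eq_getElem _ _ (by simp; omega), List.getD_eq_getElem _ _ h]
  simp

lemma chain'_ge_iff (l : List ℕ) :
    List.Chain' (fun a b : ℕ => b ≤ a) l ↔
      ∀ i, i + 1 < l.length → l.getD (i + 1) 0 ≤ l.getD i 0 := by
  simp only [List.Chain']
  rw [List.isChain_iff_getElem]
  constructor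
  · intro hh i hi
    have := hh i (by omega)
    rwa [List.getD_eq_getElem _ _ (by omega), List.getD_eq_getElem _ _ (by omega)]
  · intro hh i hi
    have := hh i (by omega)
    rw [List.getD_eq_getElem _ _ (by omega), List.getD_eq_getElem _ _ (by omega)] at this
    simpa [List.get_eq_getElem] using this

lemma card_asc_of_layers {e : List ℕ} (hn : e.length = n) (h : HasLayers e 2) :
    (ascFilter n e).card = 1 := by
  obtain ⟨L, ⟨hflat, hparts, hchain⟩, hL⟩ := h
  obtain ⟨t1, t2, rfl⟩ := List.length_eq_two.mp hL
  have hflat' : e = t1 ++ t2 := by simpa using hflat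
  obtain ⟨h1ne, h1chain⟩ := hparts t1 (by simp)
  obtain ⟨h2ne, h2chain⟩ := hparts t2 (by simp)
  have hlt : t1.getLastD 0 < t2.headI := by
    simp only [List.Chain', List.isChain_cons_cons, List.isChain_singleton, and_true] at hchain
    exact hchain.1
  have hm1 : 1 ≤ t1.length := List.length_pos_iff.mpr h1ne
  have ht2 : 1 ≤ t2.length := List.length_pos_iff.mpr h2ne
  have hlen : n = t1.length + t2.length := by rw [← hn, hflat']; simp
  have f1 : ∀ k, k < t1.length → e.getD k 0 = t1.getD k 0 := by
    intro k hk
    rw [hflat', List.getD_append _ _ _ _ hk]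
  have f2 : ∀ k, t1.length ≤ k → e.getD k 0 = t2.getD (k - t1.length) 0 := by
    intro k hk
    rw [hflat', List.getD_append_right _ _ _ _ hk]
  have hpn : t1.length - 1 < n := by omega
  have hset : ascFilter n e = {⟨t1.length - 1, hpn⟩} := by
    ext i
    simp only [ascFilter, mem_filter, mem_univ, true_and, Finset.mem_singleton]
    constructor
    · rintro ⟨hi1, hi2⟩
      by_contra hne
      have hival : (i : ℕ) ≠ t1.length - 1 := fun hh => hne (Fin.ext hh)
      rcases Nat.lt_or_ge ((i : ℕ) + 1) t1.length with hc | hc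
      · rw [f1 i (by omega), f1 ((i : ℕ) + 1) hc] at hi2
        have := (chain'_ge_iff t1).mp h1chain (i : ℕ) (by omega)
        omega
      · have him : t1.length ≤ (i : ℕ) := by omega
        rw [f2 i him, f2 ((i : ℕ) + 1) (by omega)] at hi2
        have := (chain'_ge_iff t2).mp h2chain ((i : ℕ) - t1.length) (by omega)
        have heq : (i : ℕ) + 1 - t1.length = (i : ℕ) - t1.length + 1 := by omega
        rw [heq] at hi2
        omega
    · rintro rfl
      simp only
      have h1' : t1.length - 1 + 1 = t1.length := by omega
      refine ⟨by omega, ?_⟩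
      rw [h1', f1 (t1.length - 1) (by omega), f2 t1.length (le_refl _)]
      rw [← getLastD_eq_getD h1ne]
      have : t1.length - t1.length = 0 := by omega
      rw [this, ← headI_eq_getD h2ne]
      exact hlt
  rw [hset, Finset.card_singleton]

lemma hasLayers_two_of {e : List ℕ} (hn : e.length = n) (h0 : e.getD 0 0 = 0)
    (h1 : (ascFilter n e).card = 1) : HasLayers e 2 := by
  obtain ⟨p, hp⟩ := Finset.card_eq_one.mp h1
  have hmem : ∀ i : Fin n,
      ((i : ℕ) + 1 < n ∧ e.getD (i : ℕ) 0 < e.getD ((i : ℕ) + 1) 0) ↔ i = p := by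
    intro i
    rw [← Finset.mem_singleton, ← hp]
    simp [ascFilter]
  obtain ⟨hp1, hp2⟩ := (hmem p).mpr rfl
  have hnoasc : ∀ i : ℕ, i + 1 < n → i ≠ (p : ℕ) → e.getD (i + 1) 0 ≤ e.getD i 0 := by
    intro i hi hne
    by_contra hcon
    push_neg at hcon
    have := (hmem ⟨i, by omega⟩).mp ⟨hi, hcon⟩
    exact hne (by simpa using congrArg Fin.val this)
  have htake_len : (e.take ((p : ℕ) + 1)).length = (p : ℕ) + 1 := by
    simp [hn]
  have hdrop_len : (e.drop ((p : ℕ) + 1)).length = n - ((p : ℕ) + 1) := by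
    simp [hn]
  have htake_ne : e.take ((p : ℕ) + 1) ≠ [] := by
    intro hc; rw [hc] at htake_len; simp at htake_len
  have hdrop_ne : e.drop ((p : ℕ) + 1) ≠ [] := by
    intro hc; rw [hc] at hdrop_len; simp at hdrop_len; omega
  refine ⟨[e.take ((p : ℕ) + 1), e.drop ((p : ℕ) + 1)], ⟨?_, ?_, ?_⟩, rfl⟩
  · simp
  · intro t ht
    simp only [List.mem_cons, List.mem_singleton] at ht
    rcases ht with rfl | rfl | hf
    · refine ⟨htake_ne, ?_⟩
      rw [chain'_ge_iff]
      intro i hi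
      rw [htake_len] at hi
      rw [getD_take _ _ _ (by omega) (by omega), getD_take _ _ _ (by omega) (by omega)]
      exact hnoasc i (by omega) (by omega)
    · refine ⟨hdrop_ne, ?_⟩
      rw [chain'_ge_iff]
      intro i hi
      rw [hdrop_len] at hi
      rw [getD_drop _ _ _ (by omega), getD_drop _ _ _ (by omega)]
      have heq : (p : ℕ) + 1 + (i + 1) = ((p : ℕ) + 1 + i) + 1 := by omega
      rw [heq]
      exact hnoasc ((p : ℕ) + 1 + i) (by omega) (by omega)
    · exact absurd hf (by simp)
  · simp only [List.Chain', List.isChain_cons_cons, List.isChain_singleton, and_true]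
    constructor
    · rw [getLastD_eq_getD htake_ne, headI_eq_getD hdrop_ne, htake_len]
      have h1'' : (p : ℕ) + 1 - 1 = (p : ℕ) := by omega
      rw [h1'', getD_take _ _ _ (by omega) (by omega), getD_drop _ _ _ (by omega)]
      have : (p : ℕ) + 1 + 0 = (p : ℕ) + 1 := by omega
      rw [this]
      exact hp2
    · rw [headI_eq_getD htake_ne, getD_take _ _ _ (by omega) (by omega), h0]
      exact Nat.zero_le _

lemma lehmer_getD_zero (σ : Equiv.Perm (Fin n)) (h : 0 < n) : (lehmer σ).getD 0 0 = 0 := by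
  rw [lehmer_getD σ 0 h]
  unfold code
  rw [show (univ.filter fun i : Fin n => i < ⟨0, h⟩ ∧ σ ⟨0, h⟩ < σ i) = (∅ : Finset (Fin n)) from ?_,
    Finset.card_empty]
  ext i
  simp only [mem_filter, mem_univ, true_and, Finset.notMem_empty, iff_false, not_and]
  intro hc
  exact absurd hc (by simp [Fin.lt_def])

lemma descentCount_eq' (σ : Equiv.Perm (Fin n)) :
    descentCount σ = (ascFilter n (lehmer σ)).card := descentCount_eq σ

/-- The Lehmer-code variant restricts to a bijection between the permutations of length n
with exactly one descent and the layered inversion sequences of length n with exactly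
2 layers. -/
theorem lehmer_bijOn_one_descent (n : ℕ) :
    Set.BijOn lehmer {σ : Equiv.Perm (Fin n) | descentCount σ = 1}
      {e : List ℕ | e.length = n ∧ IsInvSeq e ∧ HasLayers e 2} := by
  refine ⟨?_, fun a _ b _ h => lehmer_injective h, ?_⟩
  · intro σ hσ
    simp only [Set.mem_setOf_eq] at hσ ⊢
    have hcard : (ascFilter n (lehmer σ)).card = 1 := by rw [← descentCount_eq']; exact hσ
    have hn : 0 < n := by
      obtain ⟨i, -⟩ := Finset.card_pos.mp (by omega : 0 < (ascFilter n (lehmer σ)).card)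
      exact i.pos
    exact ⟨lehmer_length σ, lehmer_isInvSeq σ,
      hasLayers_two_of (lehmer_length σ) (lehmer_getD_zero σ hn) hcard⟩
  · intro e he
    simp only [Set.mem_setOf_eq] at he
    obtain ⟨hlen, hinv, hlay⟩ := he
    have hmem : e ∈ Set.range (lehmer (n := n)) := by
      rw [lehmer_range]; exact ⟨hlen, hinv⟩
    obtain ⟨σ, rfl⟩ := hmem
    refine ⟨σ, ?_, rfl⟩
    show descentCount σ = 1
    rw [descentCount_eq']
    exact card_asc_of_layers (lehmer_length σ) hlay
end

section
/- For n ≥ 1, the number of pop stack sortable inversion sequences of length n with exactly n-1 layers is binomial(n+1, 3). -/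
set_option linter.dupNamespace false

namespace LayerCount
open List

theorem chain'_cons' {α : Type*} {R : α → α → Prop} {x : α} {l : List α} :
    Chain' R (x :: l) ↔ (∀ y ∈ head? l, R x y) ∧ Chain' R l := isChain_cons

theorem chain'_append {α : Type*} {R : α → α → Prop} {l₁ l₂ : List α} :
    Chain' R (l₁ ++ l₂) ↔ Chain' R l₁ ∧ Chain' R l₂ ∧
      ∀ x ∈ l₁.getLast?, ∀ y ∈ l₂.head?, R x y := isChain_append

theorem chain'_map {α β : Type*} {R : α → α → Prop} (f : β → α) {l : List β} :
    Chain' R (map f l) ↔ Chain' (fun a b : β => R (f a) (f b)) l := isChain_map f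

/-- D0: strictly increasing, bounded by `s+i`, head ≥ s forces the full range. -/
lemma D0 : ∀ (v : List ℕ) (s : ℕ), Chain' (· < ·) v →
    (∀ i < v.length, v.getD i 0 ≤ s + i) → (∀ y ∈ v.head?, s ≤ y) →
    v = range' s v.length
  | [], _, _, _, _ => rfl
  | x :: v, s, hc, hb, hh => by
    have hx : x = s := le_antisymm (by simpa using hb 0 (by simp)) (by simpa using hh x rfl)
    have hc' := chain'_cons'.1 hc
    have hrec := D0 v (s + 1) hc'.2
      (fun i hi => by have := hb (i + 1) (by simpa using hi); simpa [Nat.add_assoc, Nat.add_comm 1 i, Nat.add_left_comm] using this)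
      (fun y hy => by have := hc'.1 y hy; omega)
    simp [range'_succ, hx, ← hrec]

lemma D1 : ∀ (v : List ℕ) (s : ℕ), 1 ≤ s → Chain' (· < ·) v →
    (∀ i < v.length, v.getD i 0 ≤ s + i) → (∀ y ∈ v.head?, s - 1 ≤ y) →
    ∃ t, t ≤ v.length ∧ v = range' (s - 1) t ++ range' (s + t) (v.length - t)
  | [], _, _, _, _, _ => ⟨0, by simp⟩
  | x :: v, s, hs, hc, hb, hh => by
    have hx1 : x ≤ s := by simpa using hb 0 (by simp)
    have hx2 : s - 1 ≤ x := by simpa using hh x rfl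
    have hc' := chain'_cons'.1 hc
    have hbv : ∀ i < v.length, v.getD i 0 ≤ (s + 1) + i := fun i hi => by
      have := hb (i + 1) (by simpa using hi)
      simpa [Nat.add_assoc, Nat.add_comm 1 i, Nat.add_left_comm] using this
    rcases (by omega : x = s ∨ x = s - 1) with hx | hx
    · have hrec := D0 v (s + 1) hc'.2 hbv (fun y hy => by have := hc'.1 y hy; omega)
      exact ⟨0, by simp, by simp [hx, range'_succ, ← hrec]⟩
    · obtain ⟨t, ht, hv⟩ := D1 v (s + 1) (by omega) hc'.2 hbv
        (fun y hy => by have := hc'.1 y hy; omega)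
      rw [show s + 1 - 1 = s by omega] at hv
      refine ⟨t + 1, by simp only [length_cons]; omega, ?_⟩
      have e1 : s - 1 + 1 = s := by omega
      have e2 : s + (t + 1) = s + 1 + t := by omega
      have e3 : (x :: v).length - (t + 1) = v.length - t := by simp only [length_cons]; omega
      rw [range'_succ, e1, e2, e3, cons_append, hx, ← hv]

lemma D2 : ∀ (v : List ℕ) (s : ℕ), 2 ≤ s → Chain' (· < ·) v →
    (∀ i < v.length, v.getD i 0 ≤ s + i) → (∀ y ∈ v.head?, s - 2 ≤ y) →
    ∃ t q, t + q ≤ v.length ∧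
      v = range' (s - 2) t ++ range' (s - 1 + t) q ++ range' (s + t + q) (v.length - t - q)
  | [], _, _, _, _, _ => ⟨0, 0, by simp⟩
  | x :: v, s, hs, hc, hb, hh => by
    have hx1 : x ≤ s := by simpa using hb 0 (by simp)
    have hx2 : s - 2 ≤ x := by simpa using hh x rfl
    have hc' := chain'_cons'.1 hc
    have hbv : ∀ i < v.length, v.getD i 0 ≤ (s + 1) + i := fun i hi => by
      have := hb (i + 1) (by simpa using hi)
      simpa [Nat.add_assoc, Nat.add_comm 1 i, Nat.add_left_comm] using this
    rcases (by omega : x = s ∨ x = s - 1 ∨ x = s - 2) with hx | hx | hx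
    · have hrec := D0 v (s + 1) hc'.2 hbv (fun y hy => by have := hc'.1 y hy; omega)
      exact ⟨0, 0, by simp, by simp [hx, range'_succ, ← hrec]⟩
    · obtain ⟨t, ht, hv⟩ := D1 v (s + 1) (by omega) hc'.2 hbv
        (fun y hy => by have := hc'.1 y hy; omega)
      rw [show s + 1 - 1 = s by omega] at hv
      refine ⟨0, t + 1, by simp only [length_cons]; omega, ?_⟩
      simp only [range'_zero, nil_append, Nat.add_zero]
      have e1 : s - 1 + 1 = s := by omega
      have e2 : s + (t + 1) = s + 1 + t := by omega
      have e3 : (x :: v).length - 0 - (t + 1) = v.length - t := by simp only [length_cons]; omega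
      rw [e3, range'_succ, e1, e2, cons_append, hx, ← hv]
    · obtain ⟨t, q, htq, hv⟩ := D2 v (s + 1) (by omega) hc'.2 hbv
        (fun y hy => by have := hc'.1 y hy; omega)
      rw [show s + 1 - 2 = s - 1 by omega, show s + 1 - 1 + t = s + t by omega] at hv
      refine ⟨t + 1, q, by simp only [length_cons]; omega, ?_⟩
      have e1 : s - 2 + 1 = s - 1 := by omega
      have e2 : s - 1 + (t + 1) = s + t := by omega
      have e3 : s + (t + 1) + q = s + 1 + t + q := by omega
      have e4 : (x :: v).length - (t + 1) - q = v.length - t - q := by simp only [length_cons]; omega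
      rw [e2, e3, e4, range'_succ, e1, cons_append, cons_append, hx, ← hv]

end LayerCount
namespace LayerCount
open List

lemma flatten_map_single (l : List ℕ) : (l.map (fun x => [x])).flatten = l := by
  induction l with
  | nil => rfl
  | cons x l ih => simp [ih]

lemma len_le_sum : ∀ (L : List (List ℕ)), (∀ t ∈ L, t ≠ []) → L.length ≤ (L.map length).sum
  | [], _ => le_refl _
  | t :: L, h => by
    have h1 : 1 ≤ t.length := length_pos_iff.2 (h t (by simp))
    have := len_le_sum L (fun t ht => h t (by simp [ht]))
    simp only [length_cons, map_cons, sum_cons]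
    omega

lemma all_single : ∀ (L : List (List ℕ)), (∀ t ∈ L, t ≠ []) →
    L.flatten.length = L.length → ∃ u : List ℕ, L = u.map (fun x => [x])
  | [], _, _ => ⟨[], rfl⟩
  | t :: L, hne, hlen => by
    have h1 : 1 ≤ t.length := length_pos_iff.2 (hne t (by simp))
    have h2 := len_le_sum L (fun t ht => hne t (by simp [ht]))
    simp only [flatten_cons, length_append, length_flatten, length_cons] at hlen
    have ht1 : t.length = 1 := by omega
    obtain ⟨x, rfl⟩ := length_eq_one_iff.1 ht1
    obtain ⟨u, hu⟩ := all_single L (fun t ht => hne t (by simp [ht]))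
      (by simp only [length_flatten]; omega)
    exact ⟨x :: u, by simp [hu]⟩

lemma struct : ∀ (L : List (List ℕ)), (∀ t ∈ L, t ≠ []) →
    L.flatten.length = L.length + 1 →
    ∃ (u : List ℕ) (a b : ℕ) (v : List ℕ),
      L = u.map (fun x => [x]) ++ [a, b] :: v.map (fun x => [x])
  | [], hne, hlen => by simp at hlen
  | t :: L, hne, hlen => by
    have h1 : 1 ≤ t.length := length_pos_iff.2 (hne t (by simp))
    have h2 := len_le_sum L (fun t ht => hne t (by simp [ht]))
    simp only [flatten_cons, length_append, length_flatten, length_cons] at hlen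
    have ht2 : t.length = 1 ∨ t.length = 2 := by omega
    rcases ht2 with ht | ht
    · obtain ⟨x, rfl⟩ := length_eq_one_iff.1 ht
      obtain ⟨u, a, b, v, hu⟩ := struct L (fun t ht => hne t (by simp [ht]))
        (by simp only [length_flatten]; omega)
      exact ⟨x :: u, a, b, v, by simp [hu]⟩
    · obtain ⟨a, b, rfl⟩ := length_eq_two.1 ht
      obtain ⟨u, rfl⟩ := all_single L (fun t ht => hne t (by simp [ht]))
        (by simp only [length_flatten]; omega)
      exact ⟨[], a, b, u, by simp⟩

/-- Build a layered decomposition from the normal form. -/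
lemma mk_hasLayers {u : List ℕ} {a b : ℕ} {v : List ℕ} (hu : Chain' (· < ·) u)
    (hua : ∀ x ∈ u.getLast?, x < a ∧ x ≤ b) (hba : b ≤ a)
    (hv : ∀ y ∈ v.head?, b < y ∧ a ≤ y) (hcv : Chain' (· < ·) v) :
    HasLayers (u ++ a :: b :: v) (u.length + 1 + v.length) := by
  refine ⟨u.map (fun x => [x]) ++ [a, b] :: v.map (fun x => [x]), ⟨?_, ?_, ?_⟩, by simp; omega⟩
  · simp [flatten_map_single]
  · intro t ht
    simp only [mem_append, mem_map, mem_cons] at ht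
    rcases ht with ⟨x, _, rfl⟩ | rfl | ⟨x, _, rfl⟩
    · simp [Chain']
    · simp [Chain', hba]
    · simp [Chain']
  · rw [chain'_append]
    refine ⟨?_, ?_, ?_⟩
    · rw [chain'_map]
      exact hu.imp (fun a b h => by simp only [List.getLastD_cons, List.getLastD_nil, List.headI]; omega)
    · rw [chain'_cons']
      constructor
      · intro y hy
        simp only [head?_map, Option.mem_def, Option.map_eq_some_iff] at hy
        obtain ⟨z, hz, rfl⟩ := hy
        have := hv z hz
        simp only [List.getLastD_cons, List.getLastD_nil, List.headI]
        omega
      · rw [chain'_map]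
        exact hcv.imp (fun a b h => by simp only [List.getLastD_cons, List.getLastD_nil, List.headI]; omega)
    · intro x hx y hy
      simp only [getLast?_map, Option.mem_def, Option.map_eq_some_iff] at hx
      obtain ⟨z, hz, rfl⟩ := hx
      simp only [head?_cons, Option.mem_def, Option.some_inj] at hy
      subst hy
      have := hua z hz
      simp only [List.getLastD_cons, List.getLastD_nil, List.headI]
      omega

/-- Extract the normal form from a layered decomposition with one fewer layer. -/
lemma unmk {w : List ℕ} {L : List (List ℕ)} (h : IsLayeredDecomp w L)
    (hlen : w.length = L.length + 1) :
    ∃ (u : List ℕ) (a b : ℕ) (v : List ℕ), w = u ++ a :: b :: v ∧ Chain' (· < ·) u ∧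
      (∀ x ∈ u.getLast?, x < a ∧ x ≤ b) ∧ b ≤ a ∧
      (∀ y ∈ v.head?, b < y ∧ a ≤ y) ∧ Chain' (· < ·) v := by
  obtain ⟨hw, hmem, hch⟩ := h
  obtain ⟨u, a, b, v, rfl⟩ := struct L (fun t ht => (hmem t ht).1) (by rw [← hw]; exact hlen)
  refine ⟨u, a, b, v, by simp [hw, flatten_map_single], ?_, ?_, ?_, ?_, ?_⟩
  · have := (chain'_append.1 hch).1
    rw [chain'_map] at this
    exact this.imp (fun a b h => h.1)
  · intro x hx
    have := (chain'_append.1 hch).2.2 [x] (by simp [getLast?_map, Option.mem_def.1 hx]) [a, b] (by simp)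
    simpa [List.getLastD_cons, List.getLastD_nil, List.headI] using this
  · have := (hmem [a, b] (by simp)).2
    simpa [Chain'] using this
  · intro y hy
    have h2 := (chain'_append.1 hch).2.1
    have := (chain'_cons'.1 h2).1 [y] (by simp [head?_map, Option.mem_def.1 hy])
    simpa [List.getLastD_cons, List.getLastD_nil, List.headI] using this
  · have h2 := (chain'_append.1 hch).2.1
    have := (chain'_cons'.1 h2).2
    rw [chain'_map] at this
    exact this.imp (fun a b h => h.1)

end LayerCount
namespace LayerCount
open List

def g1 (n : ℕ) (p : ℕ × ℕ) : List ℕ :=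
  range (p.1 + 1) ++ range' p.1 (p.2 - p.1) ++ range' (p.2 + 1) (n - 1 - p.2)

def g2 (n : ℕ) (p : ℕ × ℕ × ℕ) : List ℕ :=
  range (p.1 + 2) ++ range' p.1 (p.2.1 - p.1) ++ range' (p.2.1 + 1) (p.2.2 - p.2.1 - 1)
    ++ range' (p.2.2 + 1) (n - 1 - p.2.2)

lemma length_g1 {n x y : ℕ} (h1 : x < y) (h2 : y < n) : (g1 n (x, y)).length = n := by
  simp only [g1, length_append, length_range, length_range']
  omega

lemma length_g2 {n x y z : ℕ} (h1 : x < y) (h2 : y < z) (h3 : z < n) :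
    (g2 n (x, y, z)).length = n := by
  simp only [g2, length_append, length_range, length_range']
  omega

lemma getD_g1 {n x y i : ℕ} (h1 : x < y) (h2 : y < n) (hi : i < n) :
    (g1 n (x, y)).getD i 0 = if i ≤ x then i else if i ≤ y then i - 1 else i := by
  unfold g1
  rcases (by omega : i ≤ x ∨ (x < i ∧ i ≤ y) ∨ y < i) with h | h | h
  · rw [getD_append _ _ _ _ (by simp only [length_append, length_range, length_range']; omega),
      getD_append _ _ _ _ (by simp only [length_range]; omega),
      getD_eq_getElem _ _ (by simp only [length_range]; omega), getElem_range]
    simp [h]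
  · rw [getD_append _ _ _ _ (by simp only [length_append, length_range, length_range']; omega),
      getD_append_right _ _ _ _ (by simp only [length_range]; omega),
      getD_eq_getElem _ _ (by simp only [length_range', length_range]; omega), getElem_range']
    simp only [length_range]
    split_ifs <;> omega
  · rw [getD_append_right _ _ _ _
        (by simp only [length_append, length_range, length_range']; omega),
      getD_eq_getElem _ _ (by simp only [length_append, length_range, length_range']; omega),
      getElem_range']
    simp only [length_append, length_range, length_range']
    split_ifs <;> omega

lemma getD_g2 {n x y z i : ℕ} (h1 : x < y) (h2 : y < z) (h3 : z < n) (hi : i < n) :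
    (g2 n (x, y, z)).getD i 0 =
      if i ≤ x + 1 then i else if i ≤ y + 1 then i - 2 else if i ≤ z then i - 1 else i := by
  unfold g2
  rcases (by omega : i ≤ x + 1 ∨ (x + 1 < i ∧ i ≤ y + 1) ∨ (y + 1 < i ∧ i ≤ z) ∨ z < i)
    with h | h | h | h
  · rw [getD_append _ _ _ _
        (by simp only [length_append, length_range, length_range']; omega),
      getD_append _ _ _ _ (by simp only [length_append, length_range, length_range']; omega),
      getD_append _ _ _ _ (by simp only [length_range]; omega),
      getD_eq_getElem _ _ (by simp only [length_range]; omega), getElem_range]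
    simp [h]
  · rw [getD_append _ _ _ _
        (by simp only [length_append, length_range, length_range']; omega),
      getD_append _ _ _ _ (by simp only [length_append, length_range, length_range']; omega),
      getD_append_right _ _ _ _ (by simp only [length_range]; omega),
      getD_eq_getElem _ _ (by simp only [length_range', length_range]; omega), getElem_range']
    simp only [length_range]
    split_ifs <;> omega
  · rw [getD_append _ _ _ _
        (by simp only [length_append, length_range, length_range']; omega),
      getD_append_right _ _ _ _
        (by simp only [length_append, length_range, length_range']; omega),
      getD_eq_getElem _ _
        (by simp only [length_append, length_range, length_range']; omega), getElem_range']
    simp only [length_append, length_range, length_range']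
    split_ifs <;> omega
  · rw [getD_append_right _ _ _ _
        (by simp only [length_append, length_range, length_range']; omega),
      getD_eq_getElem _ _
        (by simp only [length_append, length_range, length_range']; omega), getElem_range']
    simp only [length_append, length_range, length_range']
    split_ifs <;> omega

lemma inv_g1 {n x y : ℕ} (h1 : x < y) (h2 : y < n) : IsInvSeq (g1 n (x, y)) := by
  intro i hi
  rw [length_g1 h1 h2] at hi
  rw [getD_g1 h1 h2 hi]
  split_ifs <;> omega

lemma inv_g2 {n x y z : ℕ} (h1 : x < y) (h2 : y < z) (h3 : z < n) : IsInvSeq (g2 n (x, y, z)) := by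
  intro i hi
  rw [length_g2 h1 h2 h3] at hi
  rw [getD_g2 h1 h2 h3 hi]
  split_ifs <;> omega

lemma chain_lt_app {l1 l2 : List ℕ} (h1 : Chain' (· < ·) l1) (h2 : Chain' (· < ·) l2)
    (h : ∀ x ∈ l1, ∀ y ∈ l2, x < y) : Chain' (· < ·) (l1 ++ l2) :=
  chain'_append.2 ⟨h1, h2, fun x hx y hy => h x (mem_of_mem_getLast? hx) y (mem_of_mem_head? hy)⟩

lemma chain_lt_range' (s t : ℕ) : Chain' (· < ·) (range' s t) :=
  (pairwise_lt_range' (s := s) (n := t)).isChain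

lemma layers_g1 {n x y : ℕ} (h1 : x < y) (h2 : y < n) : HasLayers (g1 n (x, y)) (n - 1) := by
  have hg : g1 n (x, y) =
      range x ++ x :: x :: (range' (x + 1) (y - x - 1) ++ range' (y + 1) (n - 1 - y)) := by
    unfold g1
    rw [range_succ, show y - x = (y - x - 1) + 1 by omega, range'_succ]
    simp [append_assoc]
  rw [hg]
  have hmem : ∀ c ∈ range' (x + 1) (y - x - 1) ++ range' (y + 1) (n - 1 - y), x + 1 ≤ c := by
    intro c hc
    rcases mem_append.1 hc with h | h <;> [skip; skip] <;>
      · have := mem_range'_1.1 h; omega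
  have := mk_hasLayers (u := range x) (a := x) (b := x)
    (v := range' (x + 1) (y - x - 1) ++ range' (y + 1) (n - 1 - y))
    ((pairwise_lt_range (n := x)).isChain)
    (fun c hc => by
      have hcm := mem_of_mem_getLast? hc
      rw [mem_range] at hcm
      exact ⟨hcm, by omega⟩)
    le_rfl
    (fun c hc => by
      have := hmem c (mem_of_mem_head? hc)
      exact ⟨by omega, by omega⟩)
    (chain_lt_app (chain_lt_range' _ _) (chain_lt_range' _ _)
      (fun p hp q hq => by
        have hp' := mem_range'_1.1 hp
        have hq' := mem_range'_1.1 hq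
        omega))
  have hlen : (range x).length + 1 +
      (range' (x + 1) (y - x - 1) ++ range' (y + 1) (n - 1 - y)).length = n - 1 := by
    simp only [length_range, length_append, length_range']
    omega
  rwa [hlen] at this

lemma layers_g2 {n x y z : ℕ} (h1 : x < y) (h2 : y < z) (h3 : z < n) :
    HasLayers (g2 n (x, y, z)) (n - 1) := by
  have hg : g2 n (x, y, z) = range (x + 1) ++ (x + 1) :: x ::
      (range' (x + 1) (y - x - 1) ++ range' (y + 1) (z - y - 1) ++ range' (z + 1) (n - 1 - z)) := by
    unfold g2
    rw [show x + 2 = (x + 1) + 1 by omega, range_succ,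
      show y - x = (y - x - 1) + 1 by omega, range'_succ]
    simp [append_assoc]
  rw [hg]
  have hmem : ∀ c ∈ range' (x + 1) (y - x - 1) ++ range' (y + 1) (z - y - 1) ++
      range' (z + 1) (n - 1 - z), x + 1 ≤ c := by
    intro c hc
    rcases mem_append.1 hc with h | h
    · rcases mem_append.1 h with h' | h' <;> · have := mem_range'_1.1 h'; omega
    · have := mem_range'_1.1 h; omega
  have := mk_hasLayers (u := range (x + 1)) (a := x + 1) (b := x)
    (v := range' (x + 1) (y - x - 1) ++ range' (y + 1) (z - y - 1) ++ range' (z + 1) (n - 1 - z))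
    ((pairwise_lt_range (n := x + 1)).isChain)
    (fun c hc => by
      have hcm := mem_of_mem_getLast? hc
      rw [mem_range] at hcm
      have : x = c := by
        rw [range_succ, getLast?_concat] at hc
        simpa using hc
      omega)
    (by omega)
    (fun c hc => by
      have := hmem c (mem_of_mem_head? hc)
      exact ⟨by omega, by omega⟩)
    (chain_lt_app
      (chain_lt_app (chain_lt_range' _ _) (chain_lt_range' _ _)
        (fun p hp q hq => by
          have hp' := mem_range'_1.1 hp
          have hq' := mem_range'_1.1 hq
          omega))
      (chain_lt_range' _ _)
      (fun p hp q hq => by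
        rcases mem_append.1 hp with h | h <;>
          [have hp' := mem_range'_1.1 h; have hp' := mem_range'_1.1 h] <;>
          · have hq' := mem_range'_1.1 hq
            omega))
  have hlen : (range (x + 1)).length + 1 +
      (range' (x + 1) (y - x - 1) ++ range' (y + 1) (z - y - 1) ++
        range' (z + 1) (n - 1 - z)).length = n - 1 := by
    simp only [length_range, length_append, length_range']
    omega
  rwa [hlen] at this

end LayerCount
namespace LayerCount
open List

lemma forward {n : ℕ} (hn : 1 ≤ n) {e : List ℕ} (hlen : e.length = n) (hinv : IsInvSeq e)
    (hHL : HasLayers e (n - 1)) :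
    (∃ x y, x < y ∧ y < n ∧ e = g1 n (x, y)) ∨
    (∃ x y z, x < y ∧ y < z ∧ z < n ∧ e = g2 n (x, y, z)) := by
  obtain ⟨L, hd, hLlen⟩ := hHL
  obtain ⟨u, a, b, v, he, hu, hua, hba, hv, hcv⟩ := unmk hd (by omega)
  set m := u.length with hm
  have hnm : n = m + 2 + v.length := by
    rw [← hlen, he]; simp [hm]; omega
  have hub : ∀ i < m, u.getD i 0 ≤ i := by
    intro i hi
    have := hinv i (by omega)
    rw [he, getD_append _ _ _ _ (by omega)] at this
    exact this
  have hu_eq : u = range m := by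
    have := D0 u 0 hu (by simpa using hub) (fun y _ => Nat.zero_le y)
    rwa [← range_eq_range'] at this
  have ha_le : a ≤ m := by
    have := hinv m (by omega)
    rw [he, getD_append_right _ _ _ _ (by omega)] at this
    simpa [hm] using this
  have ha : a = m := by
    rcases Nat.eq_zero_or_pos m with h0 | h0
    · omega
    · have hk := hua (m - 1) (by
        rw [hu_eq, show m = (m - 1) + 1 by omega, range_succ, getLast?_concat]; rfl)
      omega
  have hbm : b = m ∨ (1 ≤ m ∧ b = m - 1) := by
    rcases Nat.eq_zero_or_pos m with h0 | h0
    · omega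
    · have hk := hua (m - 1) (by
        rw [hu_eq, show m = (m - 1) + 1 by omega, range_succ, getLast?_concat]; rfl)
      omega
  have hvb : ∀ i < v.length, v.getD i 0 ≤ (m + 2) + i := by
    intro i hi
    have := hinv (m + 2 + i) (by omega)
    rw [he, getD_append_right _ _ _ _ (by omega),
      show m + 2 + i - u.length = i + 2 by omega] at this
    simpa using this
  rcases hbm with hb | ⟨hm1, hb⟩
  · obtain ⟨t, ht, hveq⟩ := D1 v (m + 2) (by omega) hcv hvb
      (fun y hy => by have := hv y hy; omega)
    rw [show m + 2 - 1 = m + 1 by omega] at hveq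
    refine Or.inl ⟨m, m + 1 + t, by omega, by omega, ?_⟩
    rw [he, hu_eq, hveq, ha, hb]
    unfold g1
    rw [show m + 1 + t - m = t + 1 by omega, show n - 1 - (m + 1 + t) = v.length - t by omega,
      range_succ, range'_succ, show m + 2 + t = m + 1 + 1 + t by omega]
    simp [append_assoc]
    omega
  · obtain ⟨t, q, htq, hveq⟩ := D2 v (m + 2) (by omega) hcv hvb
      (fun y hy => by have := hv y hy; omega)
    rw [show m + 2 - 2 = m by omega, show m + 2 - 1 + t = m + 1 + t by omega] at hveq
    refine Or.inr ⟨m - 1, m + t, m + 1 + t + q, by omega, by omega, by omega, ?_⟩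
    rw [he, hu_eq, hveq, ha, hb]
    unfold g2
    rw [show m - 1 + 2 = m + 1 by omega, show m + t - (m - 1) = t + 1 by omega,
      show m + 1 + t + q - (m + t) - 1 = q by omega,
      show n - 1 - (m + 1 + t + q) = v.length - t - q by omega,
      range_succ, range'_succ, show m - 1 + 1 = m by omega, show m + t + 1 = m + 1 + t by omega,
      show m + 1 + t + q + 1 = m + 2 + t + q by omega]
    simp [append_assoc]

lemma g1_inj {n x y x' y' : ℕ} (h1 : x < y) (h2 : y < n) (h3 : x' < y') (h4 : y' < n)
    (he : g1 n (x, y) = g1 n (x', y')) : x = x' ∧ y = y' := by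
  have hE : ∀ i < n, (if i ≤ x then i else if i ≤ y then i - 1 else i) =
      (if i ≤ x' then i else if i ≤ y' then i - 1 else i) := by
    intro i hi
    have := congrArg (fun l => l.getD i 0) he
    rwa [getD_g1 h1 h2 hi, getD_g1 h3 h4 hi] at this
  have hxx : x = x' := by
    rcases Nat.lt_trichotomy x x' with h | h | h
    · have := hE (x + 1) (by omega); split_ifs at this <;> omega
    · exact h
    · have := hE (x' + 1) (by omega); split_ifs at this <;> omega
  subst hxx
  refine ⟨rfl, ?_⟩
  rcases Nat.lt_trichotomy y y' with h | h | h
  · have := hE y' (by omega); split_ifs at this <;> omega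
  · exact h
  · have := hE y (by omega); split_ifs at this <;> omega

lemma g2_inj {n x y z x' y' z' : ℕ} (h1 : x < y) (h2 : y < z) (h3 : z < n)
    (h4 : x' < y') (h5 : y' < z') (h6 : z' < n)
    (he : g2 n (x, y, z) = g2 n (x', y', z')) : x = x' ∧ y = y' ∧ z = z' := by
  have hE : ∀ i < n,
      (if i ≤ x + 1 then i else if i ≤ y + 1 then i - 2 else if i ≤ z then i - 1 else i) =
      (if i ≤ x' + 1 then i else if i ≤ y' + 1 then i - 2 else if i ≤ z' then i - 1 else i) := by
    intro i hi
    have := congrArg (fun l => l.getD i 0) he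
    rwa [getD_g2 h1 h2 h3 hi, getD_g2 h4 h5 h6 hi] at this
  have hxx : x = x' := by
    rcases Nat.lt_trichotomy x x' with h | h | h
    · have := hE (x + 2) (by omega); split_ifs at this <;> omega
    · exact h
    · have := hE (x' + 2) (by omega); split_ifs at this <;> omega
  subst hxx
  have hyy : y = y' := by
    rcases Nat.lt_trichotomy y y' with h | h | h
    · have := hE (y' + 1) (by omega); split_ifs at this <;> omega
    · exact h
    · have := hE (y + 1) (by omega); split_ifs at this <;> omega
  subst hyy
  refine ⟨rfl, rfl, ?_⟩
  rcases Nat.lt_trichotomy z z' with h | h | h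
  · have := hE z' (by omega); split_ifs at this <;> omega
  · exact h
  · have := hE z (by omega); split_ifs at this <;> omega

lemma g1_ne_g2 {n x y x' y' z' : ℕ} (h1 : x < y) (h2 : y < n)
    (h4 : x' < y') (h5 : y' < z') (h6 : z' < n) :
    g1 n (x, y) ≠ g2 n (x', y', z') := by
  intro he
  have hE : ∀ i < n, (if i ≤ x then i else if i ≤ y then i - 1 else i) =
      (if i ≤ x' + 1 then i else if i ≤ y' + 1 then i - 2 else if i ≤ z' then i - 1 else i) := by
    intro i hi
    have := congrArg (fun l => l.getD i 0) he
    rwa [getD_g1 h1 h2 hi, getD_g2 h4 h5 h6 hi] at this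
  rcases Nat.lt_or_ge x (x' + 1) with h | h
  · have := hE (x + 1) (by omega); split_ifs at this <;> omega
  · have := hE (x' + 2) (by omega); split_ifs at this <;> omega

def T1 (n : ℕ) : Finset (ℕ × ℕ) := (Finset.range n ×ˢ Finset.range n).filter fun p => p.1 < p.2

def T2 (n : ℕ) : Finset (ℕ × ℕ × ℕ) :=
  (Finset.range n ×ˢ Finset.range n ×ˢ Finset.range n).filter fun p =>
    p.1 < p.2.1 ∧ p.2.1 < p.2.2

lemma mem_T1 {n : ℕ} {p : ℕ × ℕ} : p ∈ T1 n ↔ p.1 < p.2 ∧ p.2 < n := by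
  simp only [T1, Finset.mem_filter, Finset.mem_product, Finset.mem_range]
  omega

lemma mem_T2 {n : ℕ} {p : ℕ × ℕ × ℕ} : p ∈ T2 n ↔ p.1 < p.2.1 ∧ p.2.1 < p.2.2 ∧ p.2.2 < n := by
  simp only [T2, Finset.mem_filter, Finset.mem_product, Finset.mem_range]
  omega

lemma card_T1 : ∀ n : ℕ, (T1 n).card = n.choose 2 := by
  intro n
  induction n with
  | zero => rfl
  | succ n ih =>
    have hT : T1 (n + 1) = T1 n ∪ (Finset.range n).image (fun x => (x, n)) := by
      ext ⟨p1, p2⟩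
      simp only [mem_T1, Finset.mem_union, Finset.mem_image, Finset.mem_range, Prod.mk.injEq]
      constructor
      · rintro ⟨hlt, hp2⟩
        rcases Nat.lt_or_ge p2 n with h | h
        · exact Or.inl ⟨hlt, h⟩
        · exact Or.inr ⟨p1, by omega, rfl, by omega⟩
      · rintro (⟨hlt, hp2⟩ | ⟨c, hc, rfl, rfl⟩) <;> omega
    rw [hT, Finset.card_union_of_disjoint, ih,
      Finset.card_image_of_injective _ (fun a b hab => by simpa using hab), Finset.card_range,
      Nat.choose_succ_succ n 1, Nat.choose_one_right, Nat.add_comm]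
    · rw [Finset.disjoint_right]
      rintro p hp hp'
      simp only [Finset.mem_image, Finset.mem_range] at hp
      obtain ⟨c, hc, rfl⟩ := hp
      rw [mem_T1] at hp'
      omega

lemma card_T2 : ∀ n : ℕ, (T2 n).card = n.choose 3 := by
  intro n
  induction n with
  | zero => rfl
  | succ n ih =>
    have hT : T2 (n + 1) = T2 n ∪ (T1 n).image (fun p => (p.1, p.2, n)) := by
      ext ⟨p1, p2, p3⟩
      simp only [mem_T2, Finset.mem_union, Finset.mem_image, mem_T1, Prod.mk.injEq]
      constructor
      · rintro ⟨ha, hb, hc⟩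
        rcases Nat.lt_or_ge p3 n with h | h
        · exact Or.inl ⟨ha, hb, h⟩
        · exact Or.inr ⟨(p1, p2), by simp; omega, rfl, rfl, by omega⟩
      · rintro (⟨ha, hb, hc⟩ | ⟨⟨c1, c2⟩, hc, rfl, rfl, rfl⟩)
        · omega
        · exact ⟨hc.1, hc.2, Nat.lt_succ_self n⟩
    rw [hT, Finset.card_union_of_disjoint, ih,
      Finset.card_image_of_injective _ (fun a b hab => by
        simpa [Prod.ext_iff] using hab),
      card_T1 n, Nat.choose_succ_succ n 2, Nat.add_comm]
    · rw [Finset.disjoint_right]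
      rintro p hp hp'
      simp only [Finset.mem_image] at hp
      obtain ⟨c, hc, rfl⟩ := hp
      rw [mem_T2] at hp'
      exact lt_irrefl n hp'.2.2

end LayerCount

open LayerCount in
/-- For n ≥ 1, the number of pop stack sortable (i.e. layered) inversion sequences of
length n with exactly n-1 layers is binomial(n+1,3). -/
theorem layers_n_sub_one_count (n : ℕ) (hn : 1 ≤ n) :
    Set.ncard {e : List ℕ | e.length = n ∧ IsInvSeq e ∧ HasLayers e (n - 1)} =
      (n + 1).choose 3 := by
  classical
  have hset : {e : List ℕ | e.length = n ∧ IsInvSeq e ∧ HasLayers e (n - 1)} =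
      ↑((T1 n).image (g1 n) ∪ (T2 n).image (g2 n)) := by
    ext e
    simp only [Set.mem_setOf_eq, Finset.coe_union, Set.mem_union, Finset.coe_image,
      Set.mem_image, Finset.mem_coe]
    constructor
    · rintro ⟨hlen, hinv, hHL⟩
      rcases forward hn hlen hinv hHL with ⟨x, y, h1, h2, rfl⟩ | ⟨x, y, z, h1, h2, h3, rfl⟩
      · exact Or.inl ⟨(x, y), mem_T1.2 ⟨h1, h2⟩, rfl⟩
      · exact Or.inr ⟨(x, y, z), mem_T2.2 ⟨h1, h2, h3⟩, rfl⟩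
    · rintro (⟨⟨x, y⟩, hp, rfl⟩ | ⟨⟨x, y, z⟩, hp, rfl⟩)
      · obtain ⟨h1, h2⟩ := mem_T1.1 hp
        exact ⟨length_g1 h1 h2, inv_g1 h1 h2, layers_g1 h1 h2⟩
      · obtain ⟨h1, h2, h3⟩ := mem_T2.1 hp
        exact ⟨length_g2 h1 h2 h3, inv_g2 h1 h2 h3, layers_g2 h1 h2 h3⟩
  rw [hset, Set.ncard_coe_finset, Finset.card_union_of_disjoint, Finset.card_image_of_injOn,
    Finset.card_image_of_injOn, card_T1 n, card_T2 n, ← Nat.choose_succ_succ n 2]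
  · rintro ⟨x, y, z⟩ hp ⟨x', y', z'⟩ hp' he
    rw [Finset.mem_coe, mem_T2] at hp hp'
    have := g2_inj hp.1 hp.2.1 hp.2.2 hp'.1 hp'.2.1 hp'.2.2 he
    simp only [Prod.mk.injEq]
    tauto
  · rintro ⟨x, y⟩ hp ⟨x', y'⟩ hp' he
    rw [Finset.mem_coe, mem_T1] at hp hp'
    have := g1_inj hp.1 hp.2 hp'.1 hp'.2 he
    simp only [Prod.mk.injEq]
    tauto
  · rw [Finset.disjoint_left]
    rintro e he he'
    simp only [Finset.mem_image] at he he'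
    obtain ⟨⟨x, y⟩, hp, rfl⟩ := he
    obtain ⟨⟨x', y', z'⟩, hp', heq⟩ := he'
    rw [mem_T1] at hp
    rw [mem_T2] at hp'
    exact g1_ne_g2 hp.1 hp.2 hp'.1 hp'.2.1 hp'.2.2 heq.symm
end

section
/- A word w is sortable by a pop stack of depth k if and only if w avoids the patterns 120, 201, 1010, and the strictly decreasing pattern k(k-1)...10 of length k+1. -/
/-- w has a strictly decreasing subsequence of length m, i.e. contains the pattern
(m-1)(m-2)...10. -/
def ContainsDec (m : ℕ) (w : List ℕ) : Prop :=
  ∃ s : Fin m → ℕ, StrictMono s ∧ (∀ a, s a < w.length) ∧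
    ∀ a b : Fin m, a < b → w.getD (s b) 0 < w.getD (s a) 0

/-- One step of a pop stack of depth k, acting on states (input, stack, output):
one may push the next input letter on top of the stack provided the stack stays weakly
decreasing from the top and contains at most k distinct values, or pop the entire stack
to the output. -/
inductive PopStep (k : ℕ) : List ℕ × List ℕ × List ℕ → List ℕ × List ℕ × List ℕ → Prop
  | push (x : ℕ) (xs st out : List ℕ) :
      (st = [] ∨ x ≤ st.headI) → (x :: st).dedup.length ≤ k →
      PopStep k (x :: xs, st, out) (xs, x :: st, out)
  | pop (xs st out : List ℕ) : st ≠ [] → PopStep k (xs, st, out) (xs, [], out ++ st)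

/-- w is sortable by a pop stack of depth k: some sequence of legal operations consumes
the input and produces a weakly increasing output. -/
def PopSortableDepth (k : ℕ) (w : List ℕ) : Prop :=
  ∃ out : List ℕ, Relation.ReflTransGen (PopStep k) (w, [], []) ([], [], out) ∧
    List.Pairwise (· ≤ ·) out


namespace PopAux

/-- A decomposition of a word into blocks: each block is nonempty, weakly decreasing,
has at most `k` distinct values, all its entries are `≥ m`, and the rest is a
decomposition with lower bound the head (= max) of the block. -/
inductive Decomp (k : ℕ) : ℕ → List ℕ → Prop
  | nil (m : ℕ) : Decomp k m []
  | cons (m : ℕ) (b rest : List ℕ) (hne : b ≠ []) (hch : b.Chain' (· ≥ ·))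
      (hded : b.dedup.length ≤ k) (hlb : ∀ x ∈ b, m ≤ x)
      (hrest : Decomp k b.headI rest) : Decomp k m (b ++ rest)

lemma headI_mem {l : List ℕ} (h : l ≠ []) : l.headI ∈ l := by
  cases l with
  | nil => exact absurd rfl h
  | cons a t => exact List.mem_cons_self

lemma Decomp.lb {k m : ℕ} {w : List ℕ} (h : Decomp k m w) : ∀ x ∈ w, m ≤ x := by
  induction h with
  | nil => simp
  | cons m b rest hne hch hded hlb hrest ih =>
    intro x hx
    rcases List.mem_append.mp hx with h' | h'
    · exact hlb x h'
    · exact le_trans (hlb _ (headI_mem hne)) (ih x h')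

lemma Decomp.mono {k m m' : ℕ} {w : List ℕ} (h : Decomp k m w) (h' : ∀ x ∈ w, m' ≤ x) :
    Decomp k m' w := by
  cases h with
  | nil => exact Decomp.nil m'
  | cons m b rest hne hch hded hlb hrest =>
    exact Decomp.cons m' b rest hne hch hded
      (fun x hx => h' x (List.mem_append.mpr (Or.inl hx))) hrest

/-- In a weakly decreasing list the entries are monotone decreasing in the index. -/
lemma chain_getD_le {b : List ℕ} (hch : b.Chain' (· ≥ ·)) {i j : ℕ} (hij : i ≤ j)
    (hj : j < b.length) : b.getD j 0 ≤ b.getD i 0 := by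
  rcases eq_or_lt_of_le hij with rfl | hij
  · exact le_refl _
  · have hp := List.isChain_iff_pairwise.mp hch
    have := List.pairwise_iff_get.mp hp ⟨i, lt_trans hij hj⟩ ⟨j, hj⟩ hij
    rw [List.getD_eq_getElem _ _ hj, List.getD_eq_getElem _ _ (lt_trans hij hj)]
    exact this

lemma getD_zero_eq_headI {b : List ℕ} (h : b ≠ []) : b.getD 0 0 = b.headI := by
  cases b with
  | nil => simp at h
  | cons a t => rfl

lemma chain_le_headI {b : List ℕ} (hch : b.Chain' (· ≥ ·)) : ∀ x ∈ b, x ≤ b.headI := by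
  intro x hx
  cases b with
  | nil => simp at hx
  | cons a t =>
    rcases List.mem_cons.mp hx with rfl | hx
    · exact le_refl _
    · have hp := List.isChain_iff_pairwise.mp hch
      exact (List.pairwise_cons.mp hp).1 x hx

lemma dedup_len_eq_card (l : List ℕ) : l.dedup.length = l.toFinset.card :=
  (List.card_toFinset l).symm

-- getD helpers for appended words
lemma getD_app_left {b rest : List ℕ} {i : ℕ} (h : i < b.length) :
    (b ++ rest).getD i 0 = b.getD i 0 := List.getD_append b rest 0 i h

lemma getD_app_right {b rest : List ℕ} {i : ℕ} (h : b.length ≤ i) :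
    (b ++ rest).getD i 0 = rest.getD (i - b.length) 0 := List.getD_append_right b rest 0 i h

lemma getD_mem' {l : List ℕ} {n : ℕ} (h : n < l.length) : l.getD n 0 ∈ l := by
  rw [List.getD_eq_getElem _ _ h]; exact List.getElem_mem h

/-- Entries of `rest` part are at least `b.headI` under a Decomp. -/
lemma rest_lb {k : ℕ} {b rest : List ℕ} (hne : b ≠ []) (hr : Decomp k b.headI rest)
    (hch : b.Chain' (· ≥ ·)) {i q : ℕ} (hi : b.length ≤ i) (hilen : i < (b ++ rest).length)
    (hq : q < b.length) : (b ++ rest).getD q 0 ≤ (b ++ rest).getD i 0 := by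
  rw [getD_app_left hq, getD_app_right hi]
  have hlen : i - b.length < rest.length := by
    rw [List.length_append] at hilen; omega
  have h1 : b.headI ≤ rest.getD (i - b.length) 0 := hr.lb _ (getD_mem' hlen)
  have h2 : b.getD q 0 ≤ b.headI := chain_le_headI hch _ (getD_mem' hq)
  exact le_trans h2 h1

lemma Decomp.not120 {k m : ℕ} {w : List ℕ} (h : Decomp k m w) : ¬ Contains120 w := by
  induction h with
  | nil => rintro ⟨i, j, l, hij, hjl, hl, _, _⟩; simp at hl
  | cons m b rest hne hch hded hlb hrest ih =>
    rintro ⟨i, j, l, hij, hjl, hl, h1, h2⟩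
    by_cases hi : i < b.length
    · by_cases hj : j < b.length
      · -- same block: w_j ≤ w_i contradicts w_i < w_j
        rw [getD_app_left hi, getD_app_left hj] at h2
        exact absurd h2 (not_lt.mpr (chain_getD_le hch (le_of_lt hij) hj))
      · -- l ≥ |b| too, w_l ≥ headI ≥ w_i contradicts w_l < w_i
        have hlb' : b.length ≤ l := le_trans (not_lt.mp hj) (le_of_lt hjl)
        exact absurd h1 (not_lt.mpr (rest_lb hne hrest hch hlb' hl hi))
    · -- shift into rest
      push_neg at hi
      have hjb : b.length ≤ j := le_trans hi (le_of_lt hij)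
      have hlb' : b.length ≤ l := le_trans hjb (le_of_lt hjl)
      simp only [getD_app_right hi, getD_app_right hjb, getD_app_right hlb'] at h1 h2
      refine ih ⟨i - b.length, j - b.length, l - b.length, by omega, by omega, ?_, h1, h2⟩
      rw [List.length_append] at hl; omega

lemma Decomp.not201 {k m : ℕ} {w : List ℕ} (h : Decomp k m w) : ¬ Contains201 w := by
  induction h with
  | nil => rintro ⟨i, j, l, hij, hjl, hl, _, _⟩; simp at hl
  | cons m b rest hne hch hded hlb hrest ih =>
    rintro ⟨i, j, l, hij, hjl, hl, h1, h2⟩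
    by_cases hi : i < b.length
    · by_cases hj : j < b.length
      · by_cases hll : l < b.length
        · rw [getD_app_left hj, getD_app_left hll] at h1
          exact absurd h1 (not_lt.mpr (chain_getD_le hch (le_of_lt hjl) hll))
        · exact absurd h2 (not_lt.mpr (rest_lb hne hrest hch (not_lt.mp hll) hl hi))
      · -- w_j ≥ headI ≥ w_i but w_j < w_l < w_i
        have hjlen : j < (b ++ rest).length := lt_trans hjl hl
        have := rest_lb hne hrest hch (not_lt.mp hj) hjlen hi
        omega
    · push_neg at hi
      have hjb : b.length ≤ j := le_trans hi (le_of_lt hij)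
      have hlb' : b.length ≤ l := le_trans hjb (le_of_lt hjl)
      simp only [getD_app_right hi, getD_app_right hjb, getD_app_right hlb'] at h1 h2
      refine ih ⟨i - b.length, j - b.length, l - b.length, by omega, by omega, ?_, h1, h2⟩
      rw [List.length_append] at hl; omega

lemma Decomp.not1010 {k m : ℕ} {w : List ℕ} (h : Decomp k m w) : ¬ Contains1010 w := by
  induction h with
  | nil => rintro ⟨i, j, p, l, hij, hjp, hpl, hl, _, _⟩; simp at hl
  | cons m b rest hne hch hded hlb hrest ih =>
    rintro ⟨i, j, p, l, hij, hjp, hpl, hl, h1, h2, h3⟩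
    by_cases hi : i < b.length
    · by_cases hj : j < b.length
      · by_cases hp : p < b.length
        · -- p in block after j : w_p ≤ w_j but w_j = w_l < w_i = w_p
          simp only [getD_app_left hj, getD_app_left hp] at h1 h3
          have := chain_getD_le hch (le_of_lt hjp) hp
          omega
        · -- l in rest: w_l ≥ headI ≥ w_i but w_l < w_i
          have hlb' : b.length ≤ l := le_trans (not_lt.mp hp) (le_of_lt hpl)
          have := rest_lb hne hrest hch hlb' hl hi
          omega
      · -- j in rest: w_j ≥ headI ≥ w_i but w_j = w_l < w_i
        have hjlen : j < (b ++ rest).length := lt_trans hjp (lt_trans hpl hl)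
        have := rest_lb hne hrest hch (not_lt.mp hj) hjlen hi
        omega
    · push_neg at hi
      have hjb : b.length ≤ j := le_trans hi (le_of_lt hij)
      have hpb : b.length ≤ p := le_trans hjb (le_of_lt hjp)
      have hlb' : b.length ≤ l := le_trans hpb (le_of_lt hpl)
      simp only [getD_app_right hi, getD_app_right hjb, getD_app_right hpb,
        getD_app_right hlb'] at h1 h2 h3
      refine ih ⟨i - b.length, j - b.length, p - b.length, l - b.length,
        by omega, by omega, by omega, ?_, h1, h2, h3⟩
      rw [List.length_append] at hl; omega

lemma Decomp.notDec {k m : ℕ} {w : List ℕ} (h : Decomp k m w) : ¬ ContainsDec (k + 1) w := by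
  induction h with
  | nil => rintro ⟨s, hs, hlt, _⟩; have := hlt ⟨0, Nat.succ_pos k⟩; simp at this
  | cons m b rest hne hch hded hlb hrest ih =>
    rintro ⟨s, hs, hlt, hdec⟩
    have hk1 : 1 ≤ k := by
      by_contra hk
      have : k = 0 := by omega
      subst this
      have : b.dedup = [] := List.length_eq_zero_iff.mp (le_antisymm hded (Nat.zero_le _))
      exact hne ((List.dedup_eq_nil b).mp this)
    by_cases h0 : s ⟨0, Nat.succ_pos k⟩ < b.length
    · by_cases hlast : s ⟨k, Nat.lt_succ_self k⟩ < b.length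
      · -- all indices in block: k+1 distinct values in a block with ≤ k distinct: contra
        have hall : ∀ a : Fin (k + 1), s a < b.length := fun a =>
          lt_of_le_of_lt (hs.monotone (Fin.le_last a)) hlast
        have hbd : ∀ a a' : Fin (k + 1), a < a' → b.getD (s a') 0 < b.getD (s a) 0 := by
          intro a a' h'
          have := hdec a a' h'
          rwa [getD_app_left (hall a), getD_app_left (hall a')] at this
        have hinj : Function.Injective (fun a : Fin (k + 1) => b.getD (s a) 0) := by
          intro a a' hEq
          by_contra hne'
          rcases lt_or_gt_of_ne hne' with hlt' | hlt'
          · exact absurd hEq (ne_of_gt (hbd a a' hlt'))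
          · exact absurd hEq (ne_of_lt (hbd a' a hlt'))
        have hsub : Finset.image (fun a : Fin (k + 1) => b.getD (s a) 0) Finset.univ
            ⊆ b.toFinset := by
          intro x hx
          simp only [Finset.mem_image] at hx
          obtain ⟨a, _, rfl⟩ := hx
          exact List.mem_toFinset.mpr (getD_mem' (hall a))
        have hcard := Finset.card_le_card hsub
        rw [Finset.card_image_of_injective _ hinj, Finset.card_univ, Fintype.card_fin] at hcard
        rw [dedup_len_eq_card] at hded
        omega
      · -- first in block, last outside: contradiction with bound
        have hlast' : b.length ≤ s ⟨k, Nat.lt_succ_self k⟩ := not_lt.mp hlast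
        have hlow := hdec ⟨0, Nat.succ_pos k⟩ ⟨k, Nat.lt_succ_self k⟩
          (by simp only [Fin.lt_def]; omega)
        have hhigh := rest_lb hne hrest hch hlast' (hlt _) h0
        exact absurd hlow (not_lt.mpr hhigh)
    · -- all in rest: shift
      push_neg at h0
      have hge : ∀ a : Fin (k + 1), b.length ≤ s a := by
        intro a
        exact le_trans h0 (hs.monotone (Fin.zero_le a))
      refine ih ⟨fun a => s a - b.length, ?_, ?_, ?_⟩
      · intro a a' haa'
        dsimp only
        have h1 := hs haa'
        have h2 := hge a
        omega
      · intro a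
        dsimp only
        have h1 := hlt a
        rw [List.length_append] at h1
        have h2 := hge a
        omega
      · intro a a' haa'
        dsimp only
        have := hdec a a' haa'
        rw [getD_app_right (hge a), getD_app_right (hge a')] at this
        exact this

/-! ### The maximal weakly decreasing prefix -/

def decPrefix : List ℕ → List ℕ
  | [] => []
  | [x] => [x]
  | x :: y :: t => if y ≤ x then x :: decPrefix (y :: t) else [x]

lemma decPrefix_cons (x : ℕ) (t : List ℕ) : ∃ r, decPrefix (x :: t) = x :: r := by
  cases t with
  | nil => exact ⟨[], rfl⟩
  | cons y t' =>
    by_cases h : y ≤ x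
    · exact ⟨decPrefix (y :: t'), by simp [decPrefix, h]⟩
    · exact ⟨[], by simp [decPrefix, h]⟩

lemma decPrefix_ne_nil {w : List ℕ} (h : w ≠ []) : decPrefix w ≠ [] := by
  cases w with
  | nil => exact absurd rfl h
  | cons x t =>
    obtain ⟨r, hr⟩ := decPrefix_cons x t
    simp [hr]

lemma decPrefix_headI (x : ℕ) (t : List ℕ) : (decPrefix (x :: t)).headI = x := by
  obtain ⟨r, hr⟩ := decPrefix_cons x t
  simp [hr]

lemma decPrefix_chain : ∀ w : List ℕ, (decPrefix w).Chain' (· ≥ ·)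
  | [] => List.isChain_nil
  | [x] => List.isChain_singleton x
  | x :: y :: t => by
    by_cases h : y ≤ x
    · obtain ⟨r, hr⟩ := decPrefix_cons y t
      have ih := decPrefix_chain (y :: t)
      rw [hr] at ih
      simp only [decPrefix, if_pos h, hr]
      exact List.isChain_cons_cons.mpr ⟨h, ih⟩
    · simp only [decPrefix, if_neg h]
      exact List.isChain_singleton x

lemma decPrefix_prefix : ∀ w : List ℕ, decPrefix w <+: w
  | [] => List.prefix_refl []
  | [x] => List.prefix_refl [x]
  | x :: y :: t => by
    by_cases h : y ≤ x
    · simp only [decPrefix, if_pos h]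
      exact List.cons_prefix_cons.mpr ⟨rfl, decPrefix_prefix (y :: t)⟩
    · simp only [decPrefix, if_neg h]
      exact List.cons_prefix_cons.mpr ⟨rfl, List.nil_prefix⟩

lemma decPrefix_max : ∀ w : List ℕ, (decPrefix w).length < w.length →
    w.getD ((decPrefix w).length - 1) 0 < w.getD (decPrefix w).length 0
  | [] => by intro h; simp [decPrefix] at h
  | [x] => by intro h; simp [decPrefix] at h
  | x :: y :: t => by
    intro hlen
    by_cases h : y ≤ x
    · obtain ⟨r, hr⟩ := decPrefix_cons y t
      have hd1 : 1 ≤ (decPrefix (y :: t)).length := by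
        rw [hr]; simp
      simp only [decPrefix, if_pos h] at hlen ⊢
      set d' := (decPrefix (y :: t)).length with hd'
      have hlen' : d' < (y :: t).length := by
        simpa using Nat.lt_of_succ_lt_succ hlen
      have ih := decPrefix_max (y :: t) hlen'
      rw [← hd'] at ih
      have e1 : (x :: y :: t).getD ((x :: decPrefix (y :: t)).length - 1) 0
          = (y :: t).getD (d' - 1) 0 := by
        have : (x :: decPrefix (y :: t)).length - 1 = (d' - 1) + 1 := by
          simp only [List.length_cons, ← hd']; omega
        rw [this, List.getD_cons_succ]
      have e2 : (x :: y :: t).getD (x :: decPrefix (y :: t)).length 0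
          = (y :: t).getD d' 0 := by
        have : (x :: decPrefix (y :: t)).length = d' + 1 := by
          simp only [List.length_cons, ← hd']
        rw [this, List.getD_cons_succ]
      rw [e1, e2]
      exact ih
    · simp only [decPrefix, if_neg h]
      simpa using Nat.lt_of_not_le h

lemma headI_eq_head {l : List ℕ} (h : l ≠ []) : l.headI = l.head h := by
  cases l with
  | nil => exact absurd rfl h
  | cons a t => rfl

/-! ### Extraction of strictly decreasing indices from a weakly decreasing list -/

lemma build_dec : ∀ n : ℕ, ∀ l : List ℕ, l.Chain' (· ≥ ·) → l.dedup.length = n →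
    ∃ s : Fin n → ℕ, StrictMono s ∧ (∀ a, s a < l.length) ∧
      ∀ a b : Fin n, a < b → l.getD (s b) 0 < l.getD (s a) 0 := by
  intro n
  induction n with
  | zero =>
    intro l _ _
    exact ⟨Fin.elim0, fun a => a.elim0, fun a => a.elim0, fun a => a.elim0⟩
  | succ n ih =>
    intro l hch hlen
    obtain ⟨x, l', rfl⟩ : ∃ x l', l = x :: l' := by
      cases l with
      | nil => simp at hlen
      | cons a b => exact ⟨a, b, rfl⟩
    obtain ⟨c, t, hc, ht, hct⟩ :
        ∃ c t, c = (x :: l').takeWhile (fun y => y == x) ∧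
          t = (x :: l').dropWhile (fun y => y == x) ∧ c ++ t = x :: l' :=
      ⟨_, _, rfl, rfl, List.takeWhile_append_dropWhile⟩
    subst hc ht
    set c := (x :: l').takeWhile (fun y => y == x) with hc
    set t := (x :: l').dropWhile (fun y => y == x) with ht
    have hcne : c ≠ [] := by
      rw [hc, List.takeWhile_cons_of_pos (by simp)]
      simp
    have hcx : ∀ y ∈ c, y = x := by
      intro y hy
      rw [hc] at hy
      have h2 := List.mem_takeWhile_imp (p := fun y => y == x) (l := x :: l') hy
      exact beq_iff_eq.mp h2
    have htch : t.Chain' (· ≥ ·) := hch.suffix (List.dropWhile_suffix _)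
    have htlt : ∀ y ∈ t, y < x := by
      intro y hy
      have htne : t ≠ [] := by intro h0; rw [h0] at hy; simp at hy
      have hyle : y ≤ t.headI := chain_le_headI htch y hy
      have hhd : t.head htne ≠ x := by
        have h1 := List.head_dropWhile_not (fun y => y == x) (l := x :: l') htne
        simp only [beq_eq_false_iff_ne, ne_eq] at h1
        exact h1
      have hxle : t.head htne ≤ x := by
        have hmem : t.head htne ∈ x :: l' := (List.dropWhile_suffix _).subset (List.head_mem htne)
        exact chain_le_headI hch _ hmem
      rw [headI_eq_head htne] at hyle
      omega
    have hxt : x ∉ t.toFinset := fun hmem =>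
      absurd rfl (ne_of_lt (htlt x (List.mem_toFinset.mp hmem)))
    have hcfin : c.toFinset = {x} := by
      apply Finset.ext
      intro y
      simp only [List.mem_toFinset, Finset.mem_singleton]
      constructor
      · exact hcx y
      · rintro rfl
        rw [hc, List.takeWhile_cons_of_pos (by simp)]
        exact List.mem_cons_self
    have htlen : t.dedup.length = n := by
      rw [dedup_len_eq_card] at hlen ⊢
      rw [← hct, List.toFinset_append, hcfin, ← Finset.insert_eq,
        Finset.card_insert_of_notMem hxt] at hlen
      omega
    obtain ⟨s', hs', hlt', hdec'⟩ := ih t htch htlen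
    have hclen : 1 ≤ c.length := List.length_pos_iff.mpr hcne
    have hltot : (x :: l').length = c.length + t.length := by
      rw [← hct, List.length_append]
    have hgett : ∀ i : Fin n, (x :: l').getD (c.length + s' i) 0 = t.getD (s' i) 0 := by
      intro i
      rw [← hct, getD_app_right (by omega)]
      congr 1
      omega
    refine ⟨fun a => Fin.cases 0 (fun i => c.length + s' i) a, ?_, ?_, ?_⟩
    · intro a b hab
      rcases Fin.eq_zero_or_eq_succ b with rfl | ⟨j, rfl⟩
      · exact absurd hab (by simp)
      rcases Fin.eq_zero_or_eq_succ a with rfl | ⟨i, rfl⟩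
      · simp only [Fin.cases_zero, Fin.cases_succ]
        omega
      · simp only [Fin.cases_succ]
        have := hs' (Fin.succ_lt_succ_iff.mp hab)
        omega
    · intro a
      rcases Fin.eq_zero_or_eq_succ a with rfl | ⟨i, rfl⟩
      · simp
      · simp only [Fin.cases_succ]
        have := hlt' i
        omega
    · intro a b hab
      rcases Fin.eq_zero_or_eq_succ b with rfl | ⟨j, rfl⟩
      · exact absurd hab (by simp)
      rcases Fin.eq_zero_or_eq_succ a with rfl | ⟨i, rfl⟩
      · simp only [Fin.cases_zero, Fin.cases_succ]
        rw [hgett j]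
        exact htlt _ (getD_mem' (hlt' j))
      · simp only [Fin.cases_succ]
        rw [hgett i, hgett j]
        exact hdec' i j (Fin.succ_lt_succ_iff.mp hab)

/-- If the (prefix) block has more than `k` distinct values, the word contains the
strictly decreasing pattern of length `k+1`. -/
lemma dedup_le_of_not_dec {k : ℕ} {b rest : List ℕ} (hch : b.Chain' (· ≥ ·))
    (h : ¬ ContainsDec (k + 1) (b ++ rest)) : b.dedup.length ≤ k := by
  by_contra hk
  push_neg at hk
  obtain ⟨s, hs, hlt, hdec⟩ := build_dec b.dedup.length b hch rfl
  apply h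
  refine ⟨fun a => s (Fin.castLE hk a), ?_, ?_, ?_⟩
  · intro a b' hab
    exact hs (show Fin.castLE hk a < Fin.castLE hk b' from hab)
  · intro a
    dsimp only
    have := hlt (Fin.castLE hk a)
    rw [List.length_append]
    omega
  · intro a b' hab
    dsimp only
    have := hdec (Fin.castLE hk a) (Fin.castLE hk b')
      (show Fin.castLE hk a < Fin.castLE hk b' from hab)
    rwa [getD_app_left (hlt _), getD_app_left (hlt _)]

/-! ### Shift lemmas: a pattern in `rest` is a pattern in `b ++ rest` -/

lemma shift120 {b rest : List ℕ} (h : Contains120 rest) : Contains120 (b ++ rest) := by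
  obtain ⟨i, j, l, hij, hjl, hl, h1, h2⟩ := h
  refine ⟨b.length + i, b.length + j, b.length + l, by omega, by omega, ?_, ?_, ?_⟩
  · rw [List.length_append]; omega
  all_goals
    simp only [getD_app_right (Nat.le_add_right _ _), Nat.add_sub_cancel_left]
  · exact h1
  · exact h2

lemma shift201 {b rest : List ℕ} (h : Contains201 rest) : Contains201 (b ++ rest) := by
  obtain ⟨i, j, l, hij, hjl, hl, h1, h2⟩ := h
  refine ⟨b.length + i, b.length + j, b.length + l, by omega, by omega, ?_, ?_, ?_⟩
  · rw [List.length_append]; omega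
  all_goals
    simp only [getD_app_right (Nat.le_add_right _ _), Nat.add_sub_cancel_left]
  · exact h1
  · exact h2

lemma shift1010 {b rest : List ℕ} (h : Contains1010 rest) : Contains1010 (b ++ rest) := by
  obtain ⟨i, j, p, l, hij, hjp, hpl, hl, h1, h2, h3⟩ := h
  refine ⟨b.length + i, b.length + j, b.length + p, b.length + l,
    by omega, by omega, by omega, ?_, ?_, ?_, ?_⟩
  · rw [List.length_append]; omega
  all_goals
    simp only [getD_app_right (Nat.le_add_right _ _), Nat.add_sub_cancel_left]
  · exact h1
  · exact h2
  · exact h3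

lemma shiftDec {m : ℕ} {b rest : List ℕ} (h : ContainsDec m rest) :
    ContainsDec m (b ++ rest) := by
  obtain ⟨s, hs, hlt, hdec⟩ := h
  refine ⟨fun a => b.length + s a, ?_, ?_, ?_⟩
  · intro a a' hab
    dsimp only
    have := hs hab
    omega
  · intro a
    dsimp only
    have := hlt a
    rw [List.length_append]
    omega
  · intro a a' hab
    dsimp only
    have := hdec a a' hab
    simpa only [getD_app_right (Nat.le_add_right _ _), Nat.add_sub_cancel_left] using this

/-! ### Avoidance implies decomposability -/

lemma avoid_decomp_aux (k : ℕ) : ∀ n : ℕ, ∀ w : List ℕ, w.length ≤ n →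
    ¬ Contains120 w → ¬ Contains201 w → ¬ Contains1010 w → ¬ ContainsDec (k + 1) w →
    Decomp k 0 w := by
  intro n
  induction n with
  | zero =>
    intro w hw _ _ _ _
    rw [Nat.le_zero, List.length_eq_zero_iff] at hw
    subst hw
    exact Decomp.nil 0
  | succ n ih =>
    intro w hw h120 h201 h1010 hdec
    by_cases hwnil : w = []
    · subst hwnil; exact Decomp.nil 0
    obtain ⟨rest, hw'⟩ := decPrefix_prefix w
    have hbne : decPrefix w ≠ [] := decPrefix_ne_nil hwnil
    have hch : (decPrefix w).Chain' (· ≥ ·) := decPrefix_chain w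
    set b := decPrefix w with hb
    set d := b.length with hdd
    have hd1 : 1 ≤ d := List.length_pos_iff.mpr hbne
    have hlenw : w.length = d + rest.length := by
      rw [← hw', List.length_append]
    -- entries of the prefix, as entries of w
    have hpre : ∀ q, q < d → w.getD q 0 = b.getD q 0 := by
      intro q hq
      rw [← hw', getD_app_left hq]
    have hmono : ∀ q q' : ℕ, q ≤ q' → q' < d → w.getD q' 0 ≤ w.getD q 0 := by
      intro q q' hqq hq'
      rw [hpre q (lt_of_le_of_lt hqq hq'), hpre q' hq']
      exact chain_getD_le hch hqq hq'
    -- the key comparison claim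
    have key : ∀ p, d ≤ p → p < w.length → ∀ q, q < d → w.getD q 0 ≤ w.getD p 0 := by
      intro p hdp hplen q hq
      by_contra hcon
      push_neg at hcon
      have hdlt : d < w.length := lt_of_le_of_lt hdp hplen
      have hab : w.getD (d - 1) 0 < w.getD d 0 := decPrefix_max w hdlt
      have haq : w.getD (d - 1) 0 ≤ w.getD q 0 := hmono q (d - 1) (by omega) (by omega)
      by_cases hpa : w.getD p 0 < w.getD (d - 1) 0
      · -- 120 at (d-1, d, p)
        have hdp' : d < p := by
          rcases eq_or_lt_of_le hdp with rfl | h'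
          · omega
          · exact h'
        exact h120 ⟨d - 1, d, p, by omega, hdp', hplen, hpa, hab⟩
      push_neg at hpa
      rcases lt_trichotomy (w.getD q 0) (w.getD d 0) with hqd | hqd | hqd
      · -- w_q < w_d : 120 at (q, d, p)
        have hdp' : d < p := by
          rcases eq_or_lt_of_le hdp with rfl | h'
          · omega
          · exact h'
        exact h120 ⟨q, d, p, hq, hdp', hplen, hcon, hqd⟩
      · -- w_q = w_d
        have hqd1 : q < d - 1 := by
          rcases lt_or_ge q (d - 1) with h' | h'
          · exact h'
          · exfalso
            have : q = d - 1 := by omega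
            subst this
            omega
        rcases eq_or_lt_of_le hpa with hpa' | hpa'
        · -- w_p = w_{d-1} : 1010 at (q, d-1, d, p)
          have hdp' : d < p := by
            rcases eq_or_lt_of_le hdp with rfl | h'
            · omega
            · exact h'
          exact h1010 ⟨q, d - 1, d, p, hqd1, by omega, hdp', hplen, hpa', hcon, hqd⟩
        · -- w_{d-1} < w_p : 201 at (q, d-1, p)
          exact h201 ⟨q, d - 1, p, hqd1, by omega, hplen, hpa', by omega⟩
      · -- w_d < w_q : 201 at (q, d-1, d)
        have hqd1 : q < d - 1 := by
          rcases lt_or_ge q (d - 1) with h' | h'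
          · exact h'
          · have : q = d - 1 := by omega
            subst this
            omega
        exact h201 ⟨q, d - 1, d, hqd1, by omega, hdlt, hab, hqd⟩
    -- rest entries are at least w.getD 0 0 = b.headI
    have hrlb : ∀ x ∈ rest, b.headI ≤ x := by
      intro x hx
      obtain ⟨i, hi, rfl⟩ := List.mem_iff_getElem.mp hx
      have e1 : rest[i] = w.getD (d + i) 0 := by
        rw [← hw', getD_app_right (Nat.le_add_right _ _), Nat.add_sub_cancel_left,
          List.getD_eq_getElem _ _ hi]
      have e0 : w.getD 0 0 = b.headI := by
        rw [hpre 0 (by omega), getD_zero_eq_headI hbne]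
      rw [e1, ← e0]
      exact key (d + i) (by omega) (by omega) 0 (by omega)
    -- rest avoids all patterns
    rw [← hw'] at h120 h201 h1010 hdec
    have hr120 : ¬ Contains120 rest := fun h => h120 (shift120 h)
    have hr201 : ¬ Contains201 rest := fun h => h201 (shift201 h)
    have hr1010 : ¬ Contains1010 rest := fun h => h1010 (shift1010 h)
    have hrdec : ¬ ContainsDec (k + 1) rest := fun h => hdec (shiftDec h)
    have hrest : Decomp k 0 rest := ih rest (by omega) hr120 hr201 hr1010 hrdec
    have hded : b.dedup.length ≤ k := dedup_le_of_not_dec hch hdec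
    rw [← hw']
    exact Decomp.cons 0 b rest hbne hch hded (fun x _ => Nat.zero_le x)
      (hrest.mono hrlb)

/-! ### Decomposition implies sortability -/

lemma pushes (k : ℕ) : ∀ b st xs out : List ℕ,
    (st.reverse ++ b).Chain' (· ≥ ·) → (st.reverse ++ b).dedup.length ≤ k →
    Relation.ReflTransGen (PopStep k) (b ++ xs, st, out) (xs, b.reverse ++ st, out) := by
  intro b
  induction b with
  | nil =>
    intro st xs out _ _
    simp only [List.nil_append, List.reverse_nil]
    exact Relation.ReflTransGen.refl
  | cons x b' ihb =>
    intro st xs out hch hded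
    have hstep : PopStep k (x :: (b' ++ xs), st, out) (b' ++ xs, x :: st, out) := by
      apply PopStep.push
      · cases hst : st with
        | nil => exact Or.inl rfl
        | cons s0 st' =>
          right
          rw [hst] at hch
          have h1 := (List.isChain_append.mp hch).2.2
          have h2 := h1 s0 (by rw [List.getLast?_reverse]; rfl) x rfl
          exact h2
      · have hsub : (x :: st).toFinset ⊆ (st.reverse ++ x :: b').toFinset := by
          intro y hy
          rw [List.mem_toFinset] at hy ⊢
          rcases List.mem_cons.mp hy with rfl | hy
          · exact List.mem_append.mpr (Or.inr (List.mem_cons_self))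
          · exact List.mem_append.mpr (Or.inl (List.mem_reverse.mpr hy))
        rw [dedup_len_eq_card]
        exact le_trans (Finset.card_le_card hsub) (by rw [← dedup_len_eq_card]; exact hded)
    have hrest := ihb (x :: st) xs out
      (by rw [List.reverse_cons, List.append_assoc]; exact hch)
      (by rw [List.reverse_cons, List.append_assoc]; exact hded)
    have hfin : b'.reverse ++ (x :: st) = (x :: b').reverse ++ st := by
      rw [List.reverse_cons, List.append_assoc]
      rfl
    rw [hfin] at hrest
    exact Relation.ReflTransGen.head hstep hrest

lemma decomp_sortable {k m : ℕ} {w : List ℕ} (h : Decomp k m w) :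
    ∀ out : List ℕ, List.Pairwise (· ≤ ·) out → (∀ y ∈ out, y ≤ m) →
    ∃ out', Relation.ReflTransGen (PopStep k) (w, [], out) ([], [], out') ∧
      List.Pairwise (· ≤ ·) out' := by
  induction h with
  | nil m =>
    intro out hs _
    exact ⟨out, Relation.ReflTransGen.refl, hs⟩
  | cons m b rest hne hch hded hlb hrest ih =>
    intro out hs hle
    have hpush := pushes k b [] rest out (by simpa using hch) (by simpa using hded)
    rw [List.append_nil] at hpush
    have hpop : PopStep k (rest, b.reverse, out) (rest, [], out ++ b.reverse) :=
      PopStep.pop _ _ _ (by simpa using hne)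
    have hble : ∀ y ∈ b.reverse, y ≤ b.headI := by
      intro y hy
      exact chain_le_headI hch y (List.mem_reverse.mp hy)
    have hsorted' : List.Pairwise (· ≤ ·) (out ++ b.reverse) := by
      rw [List.pairwise_append]
      refine ⟨hs, ?_, ?_⟩
      · rw [List.pairwise_reverse]
        exact List.isChain_iff_pairwise.mp hch
      · intro a ha y hy
        exact le_trans (hle a ha) (hlb y (List.mem_reverse.mp hy))
    have hle' : ∀ y ∈ out ++ b.reverse, y ≤ b.headI := by
      intro y hy
      rcases List.mem_append.mp hy with hy | hy
      · exact le_trans (hle y hy) (hlb _ (headI_mem hne))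
      · exact hble y hy
    obtain ⟨out', hrun, hs'⟩ := ih (out ++ b.reverse) hsorted' hle'
    exact ⟨out', hpush.trans (Relation.ReflTransGen.head hpop hrun), hs'⟩

/-! ### Sortability implies decomposability -/

lemma getLastD_append_right {out st : List ℕ} (h : st ≠ []) :
    (out ++ st).getLastD 0 = st.getLastD 0 := by
  rcases st.eq_nil_or_concat with rfl | ⟨s', a, rfl⟩
  · exact absurd rfl h
  · rw [List.concat_eq_append, ← List.append_assoc, List.getLastD_concat, List.getLastD_concat]

lemma headI_reverse {l : List ℕ} : l.reverse.headI = l.getLastD 0 := by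
  rcases l.eq_nil_or_concat with rfl | ⟨l', a, rfl⟩
  · rfl
  · simp [List.concat_eq_append, List.reverse_append, List.getLastD_concat]

lemma getLastD_mem {l : List ℕ} (h : l ≠ []) : l.getLastD 0 ∈ l := by
  rcases l.eq_nil_or_concat with rfl | ⟨l', a, rfl⟩
  · exact absurd rfl h
  · simp [List.concat_eq_append, List.getLastD_concat]

lemma run_decomp {k : ℕ} {out' : List ℕ} (hsort : List.Pairwise (· ≤ ·) out') :
    ∀ p : List ℕ × List ℕ × List ℕ,
      Relation.ReflTransGen (PopStep k) p ([], [], out') →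
      p.2.2 <+: out' ∧ (p.2.1.Chain' (· ≤ ·) → p.2.1.dedup.length ≤ k →
        Decomp k (p.2.2.getLastD 0) (p.2.1.reverse ++ p.1)) := by
  intro p hrun
  induction hrun using Relation.ReflTransGen.head_induction_on with
  | refl =>
    refine ⟨List.prefix_refl _, fun _ _ => ?_⟩
    simpa using Decomp.nil _
  | head hstep hrtg ih =>
    obtain ⟨ihpre, ihdec⟩ := ih
    cases hstep with
    | push x xs st out hpush hd =>
      refine ⟨ihpre, fun hch _ => ?_⟩
      have hch' : (x :: st).Chain' (· ≤ ·) := by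
        refine List.isChain_cons.mpr ⟨?_, hch⟩
        intro y hy
        rcases hpush with rfl | hle
        · simp at hy
        · cases st with
          | nil => simp at hy
          | cons s0 st' =>
            simp only [List.head?_cons, Option.mem_def, Option.some.injEq] at hy
            subst hy
            exact hle
      have hres := ihdec hch' hd
      rwa [List.reverse_cons, List.append_assoc, List.singleton_append] at hres
    | pop xs st out hne' =>
      have hpre : out <+: out' := (List.prefix_append out st).trans ihpre
      refine ⟨hpre, fun hch hdd => ?_⟩
      have hrest := ihdec List.isChain_nil (by simp)
      simp only [List.reverse_nil, List.nil_append] at hrest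
      -- hrest : Decomp k ((out ++ st).getLastD 0) xs
      have hbne : st.reverse ≠ [] := by simpa using hne'
      have hbch : st.reverse.Chain' (· ≥ ·) := List.isChain_reverse.mpr hch
      have hbded : st.reverse.dedup.length ≤ k := by
        rw [dedup_len_eq_card, List.toFinset_reverse, ← dedup_len_eq_card]
        exact hdd
      have hlb : ∀ z ∈ st.reverse, out.getLastD 0 ≤ z := by
        intro z hz
        by_cases hout : out = []
        · subst hout; simp
        · obtain ⟨tl, htl⟩ := ihpre
          rw [List.append_assoc] at htl
          have hpw : List.Pairwise (· ≤ ·) (out ++ (st ++ tl)) := by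
            rw [htl]; exact hsort
          rw [List.pairwise_append] at hpw
          exact hpw.2.2 (out.getLastD 0) (getLastD_mem hout) z
            (List.mem_append.mpr (Or.inl (List.mem_reverse.mp hz)))
      have hhead : st.reverse.headI = (out ++ st).getLastD 0 := by
        rw [headI_reverse, getLastD_append_right hne']
      refine Decomp.cons _ st.reverse xs hbne hbch hbded hlb ?_
      rw [hhead]
      exact hrest

theorem pop_stack_depth_sortable_iff' (k : ℕ) (w : List ℕ) :
    PopSortableDepth k w ↔
      ¬ Contains120 w ∧ ¬ Contains201 w ∧ ¬ Contains1010 w ∧ ¬ ContainsDec (k + 1) w := by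
  constructor
  · rintro ⟨out, hrun, hsort⟩
    have h := run_decomp hsort (w, [], []) hrun
    have hd : Decomp k 0 w := by simpa using h.2 List.isChain_nil (by simp)
    exact ⟨hd.not120, hd.not201, hd.not1010, hd.notDec⟩
  · rintro ⟨h120, h201, h1010, hdec⟩
    have hd := avoid_decomp_aux k w.length w le_rfl h120 h201 h1010 hdec
    obtain ⟨out', hrun, hs⟩ := decomp_sortable hd [] (by simp) (by simp)
    exact ⟨out', hrun, hs⟩

end PopAux

/-- A word is sortable by a pop stack of depth k iff it avoids 120, 201, 1010 and the
strictly decreasing pattern k(k-1)...10 of length k+1. -/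
theorem pop_stack_depth_sortable_iff (k : ℕ) (w : List ℕ) :
    PopSortableDepth k w ↔
      ¬ Contains120 w ∧ ¬ Contains201 w ∧ ¬ Contains1010 w ∧ ¬ ContainsDec (k + 1) w := by
  exact PopAux.pop_stack_depth_sortable_iff' k w
end

section
/- For positive integers n, k, a with k < n, the number of weakly decreasing words of length n with first value a, entries that are nonnegative integers, and at most k strict descents equals 1 + sum over j from 1 to k of binomial(n-1, j) * binomial(a, j). -/
open List Finset

namespace WDW

def dvals (T : Finset ℕ) : List ℕ := (T.sort (· ≤ ·)).reverse

lemma dvals_pairwise (T : Finset ℕ) : (dvals T).Pairwise (· > ·) := by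
  rw [dvals, List.pairwise_reverse]
  exact (Finset.sortedLT_sort T).pairwise

lemma dvals_toFinset (T : Finset ℕ) : (dvals T).toFinset = T := by
  simp [dvals]

lemma dvals_nodup (T : Finset ℕ) : (dvals T).Nodup := by
  simp [dvals, Finset.sort_nodup]

lemma dvals_length (T : Finset ℕ) : (dvals T).length = T.card := by
  simp [dvals]

def mcount (S : Finset ℕ) (i : ℕ) : ℕ := (S.filter (· < i)).card

lemma mcount_zero (S : Finset ℕ) : mcount S 0 = 0 := by
  simp [mcount]

lemma mcount_le_card (S : Finset ℕ) (i : ℕ) : mcount S i ≤ S.card :=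
  Finset.card_filter_le _ _

lemma mcount_mono (S : Finset ℕ) {i j : ℕ} (h : i ≤ j) : mcount S i ≤ mcount S j := by
  apply Finset.card_le_card
  intro x hx
  simp only [Finset.mem_filter] at *
  exact ⟨hx.1, lt_of_lt_of_le hx.2 h⟩

lemma mcount_succ_of_mem {S : Finset ℕ} {i : ℕ} (h : i ∈ S) :
    mcount S (i + 1) = mcount S i + 1 := by
  have : S.filter (· < i + 1) = insert i (S.filter (· < i)) := by
    ext x
    simp only [Finset.mem_filter, Finset.mem_insert]
    constructor
    · rintro ⟨hx, hlt⟩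
      rcases Nat.lt_succ_iff_lt_or_eq.mp hlt with h' | h'
      · exact Or.inr ⟨hx, h'⟩
      · exact Or.inl h'
    · rintro (rfl | ⟨hx, hlt⟩)
      · exact ⟨h, Nat.lt_succ_self _⟩
      · exact ⟨hx, Nat.lt_succ_of_lt hlt⟩
  rw [mcount, this, Finset.card_insert_of_notMem (by simp), mcount]

lemma mcount_succ_of_not_mem {S : Finset ℕ} {i : ℕ} (h : i ∉ S) :
    mcount S (i + 1) = mcount S i := by
  unfold mcount
  congr 1
  ext x
  simp only [Finset.mem_filter]
  constructor
  · rintro ⟨hx, hlt⟩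
    rcases Nat.lt_succ_iff_lt_or_eq.mp hlt with h' | h'
    · exact ⟨hx, h'⟩
    · exact absurd (h' ▸ hx) h
  · rintro ⟨hx, hlt⟩
    exact ⟨hx, Nat.lt_succ_of_lt hlt⟩

/-- one-step antitone -/
lemma getD_succ_le {w : List ℕ} (hw : List.Chain' (fun x y => y ≤ x) w) (i : ℕ) :
    w.getD (i + 1) 0 ≤ w.getD i 0 := by
  by_cases h : i + 1 < w.length
  · have hi : i < w.length := by omega
    rw [List.getD_eq_get _ _ ⟨_, h⟩, List.getD_eq_get _ _ ⟨_, hi⟩]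
    exact List.isChain_iff_getElem.mp hw i (by omega)
  · rw [List.getD_eq_default _ _ (by omega)]
    exact Nat.zero_le _

lemma getD_antitone {w : List ℕ} (hw : List.Chain' (fun x y => y ≤ x) w) {i j : ℕ}
    (h : i ≤ j) : w.getD j 0 ≤ w.getD i 0 := by
  induction j, h using Nat.le_induction with
  | base => exact le_refl _
  | succ j hij ih => exact le_trans (getD_succ_le hw j) ih

/-- the descent-positions list of a word -/
def dlist (n : ℕ) (w : List ℕ) : List ℕ :=
  (List.range (n - 1)).filter fun i => w.getD (i + 1) 0 < w.getD i 0

/-- the values-at-descents list -/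
def vlist (n : ℕ) (w : List ℕ) : List ℕ :=
  (dlist n w).map fun i => w.getD (i + 1) 0

lemma dlist_pairwise (n : ℕ) (w : List ℕ) : (dlist n w).Pairwise (· < ·) :=
  List.Pairwise.sublist List.filter_sublist List.pairwise_lt_range

lemma dlist_nodup (n : ℕ) (w : List ℕ) : (dlist n w).Nodup :=
  (dlist_pairwise n w).imp (fun h => Nat.ne_of_lt h)

lemma vlist_pairwise {n : ℕ} {w : List ℕ} (hw : List.Chain' (fun x y => y ≤ x) w) :
    (vlist n w).Pairwise (· > ·) := by
  rw [vlist, List.pairwise_map]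
  refine (dlist_pairwise n w).imp_of_mem ?_
  intro i j hi hj hij
  have hdj : w.getD (j + 1) 0 < w.getD j 0 := by
    simp only [dlist, List.mem_filter, decide_eq_true_eq] at hj
    exact hj.2
  calc w.getD (j + 1) 0 < w.getD j 0 := hdj
    _ ≤ w.getD (i + 1) 0 := getD_antitone hw (by omega)

lemma vlist_nodup {n : ℕ} {w : List ℕ} (hw : List.Chain' (fun x y => y ≤ x) w) :
    (vlist n w).Nodup :=
  (vlist_pairwise hw).imp (fun h => Nat.ne_of_gt h)

/-- index lemma: in a strictly sorted list, number of elements less than l[j] is j -/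
lemma filter_lt_get_length : ∀ (l : List ℕ), l.Pairwise (· < ·) → ∀ (j : ℕ) (hj : j < l.length),
    (l.filter (fun x => x < l.get ⟨j, hj⟩)).length = j := by
  intro l hl
  induction l with
  | nil => intro j hj; simp at hj
  | cons x t ih =>
    intro j hj
    rcases List.pairwise_cons.mp hl with ⟨hx, ht⟩
    cases j with
    | zero =>
      simp only [List.get]
      rw [List.filter_eq_nil_iff.mpr]
      · rfl
      intro y hy
      rcases List.mem_cons.mp hy with rfl | hy
      · simp
      · simp only [decide_eq_true_eq]
        exact Nat.not_lt.mpr (le_of_lt (hx y hy))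
    | succ j' =>
      have hj' : j' < t.length := by simpa using hj
      have hget : (x :: t).get ⟨j' + 1, hj⟩ = t.get ⟨j', hj'⟩ := rfl
      rw [hget, List.filter_cons]
      have : decide (x < t.get ⟨j', hj'⟩) = true := by
        simp only [decide_eq_true_eq]
        exact hx _ (List.get_mem t _)
      rw [if_pos this, List.length_cons, ih ht j' hj']

def decode (a n : ℕ) (p : Finset ℕ × Finset ℕ) : List ℕ :=
  (List.range n).map fun i => (a :: dvals p.2).getD (mcount p.1 i) 0

/-- strict antitonicity of getD along a strictly decreasing list -/
lemma pairwise_getD_lt {L : List ℕ} (hL : L.Pairwise (· > ·)) {i j : ℕ}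
    (hij : i < j) (hj : j < L.length) : L.getD j 0 < L.getD i 0 := by
  have hi : i < L.length := lt_trans hij hj
  rw [List.getD_eq_get _ _ ⟨_, hj⟩, List.getD_eq_get _ _ ⟨_, hi⟩]
  exact List.pairwise_iff_get.mp hL ⟨i, hi⟩ ⟨j, hj⟩ hij

lemma pairwise_getD_le {L : List ℕ} (hL : L.Pairwise (· > ·)) {i j : ℕ}
    (hij : i ≤ j) (hj : j < L.length) : L.getD j 0 ≤ L.getD i 0 := by
  rcases eq_or_lt_of_le hij with rfl | h
  · exact le_refl _
  · exact le_of_lt (pairwise_getD_lt hL h hj)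

section Decode

variable {n k a : ℕ} {S T : Finset ℕ}

lemma L_pairwise (hT : T ⊆ Finset.range a) : (a :: dvals T).Pairwise (· > ·) := by
  rw [List.pairwise_cons]
  refine ⟨?_, dvals_pairwise T⟩
  intro v hv
  have : v ∈ T := by rw [← dvals_toFinset T]; exact List.mem_toFinset.mpr hv
  exact Finset.mem_range.mp (hT this)

lemma mcount_lt_L_length (hcard : S.card = T.card) (i : ℕ) :
    mcount S i < (a :: dvals T).length := by
  have := mcount_le_card S i
  simp only [List.length_cons, dvals_length]
  omega

lemma decode_getD (p : Finset ℕ × Finset ℕ) {i : ℕ} (hi : i < n) :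
    (decode a n p).getD i 0 = (a :: dvals p.2).getD (mcount p.1 i) 0 := by
  rw [decode, List.getD_eq_getElem _ _ (n := i) (by simpa using hi)]
  simp

lemma decode_length : (decode a n (S, T)).length = n := by simp [decode]

lemma decode_headI (hn : 0 < n) : (decode a n (S, T)).headI = a := by
  have h0 : (decode a n (S, T)).getD 0 0 = a := by
    rw [decode_getD _ hn, mcount_zero]; rfl
  cases hd : decode a n (S, T) with
  | nil => have := decode_length (n := n) (a := a) (S := S) (T := T); rw [hd] at this; simp at this; omega
  | cons x t => rw [hd] at h0; simpa using h0

lemma decode_chain' (hT : T ⊆ Finset.range a) (hcard : S.card = T.card) :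
    List.Chain' (fun x y => y ≤ x) (decode a n (S, T)) := by
  refine List.isChain_iff_getElem.mpr ?_
  intro i h
  rw [decode_length] at h
  rw [← List.getD_eq_getElem _ 0, ← List.getD_eq_getElem _ 0,
    decode_getD _ (by omega : i < n), decode_getD _ (by omega : i + 1 < n)]
  exact pairwise_getD_le (L_pairwise hT) (mcount_mono S (by omega))
    (mcount_lt_L_length hcard _)

lemma decode_desc_iff (hT : T ⊆ Finset.range a) (hcard : S.card = T.card) (i : ℕ) :
    ((decode a n (S, T)).getD (i + 1) 0 < (decode a n (S, T)).getD i 0 ∧ i + 1 < n) ↔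
      (i ∈ S ∧ i + 1 < n) := by
  constructor
  · rintro ⟨hlt, hin⟩
    refine ⟨?_, hin⟩
    by_contra hiS
    rw [decode_getD _ (by omega : i < n), decode_getD _ hin,
      mcount_succ_of_not_mem hiS] at hlt
    exact lt_irrefl _ hlt
  · rintro ⟨hiS, hin⟩
    refine ⟨?_, hin⟩
    rw [decode_getD _ (by omega : i < n), decode_getD _ hin]
    refine pairwise_getD_lt (L_pairwise hT) ?_ (mcount_lt_L_length hcard _)
    rw [mcount_succ_of_mem hiS]
    exact Nat.lt_succ_self _

lemma decode_dlist (hn : 0 < n) (hT : T ⊆ Finset.range a) (hcard : S.card = T.card) :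
    dlist n (decode a n (S, T)) = (List.range (n - 1)).filter (fun i => i ∈ S) := by
  apply List.filter_congr
  intro i hi
  have hin : i + 1 < n := by have := List.mem_range.mp hi; omega
  simp only [decide_eq_decide]
  constructor
  · intro h; exact ((decode_desc_iff hT hcard i).mp ⟨h, hin⟩).1
  · intro h; exact ((decode_desc_iff hT hcard i).mpr ⟨h, hin⟩).1

lemma filter_mem_toFinset (hS : S ⊆ Finset.range (n - 1)) :
    ((List.range (n - 1)).filter (fun i => i ∈ S)).toFinset = S := by
  ext x
  simp only [List.mem_toFinset, List.mem_filter, List.mem_range, decide_eq_true_eq]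
  constructor
  · rintro ⟨_, h⟩; exact h
  · intro h; exact ⟨Finset.mem_range.mp (hS h), h⟩

lemma filter_mem_length (hS : S ⊆ Finset.range (n - 1)) :
    ((List.range (n - 1)).filter (fun i => i ∈ S)).length = S.card := by
  conv_rhs => rw [← filter_mem_toFinset hS]
  exact (List.toFinset_card_of_nodup (List.nodup_range.filter _)).symm

lemma mcount_lt_card {i : ℕ} (hiS : i ∈ S) : mcount S i < S.card := by
  apply Finset.card_lt_card
  constructor
  · exact Finset.filter_subset _ _
  · intro hsub
    have := hsub hiS
    simp only [Finset.mem_filter] at this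
    omega

lemma decode_vlist_toFinset (hn : 0 < n) (hS : S ⊆ Finset.range (n - 1))
    (hT : T ⊆ Finset.range a) (hcard : S.card = T.card) :
    (vlist n (decode a n (S, T))).toFinset = T := by
  have hsub : (vlist n (decode a n (S, T))).toFinset ⊆ T := by
    intro v hv
    simp only [List.mem_toFinset, vlist, List.mem_map] at hv
    obtain ⟨i, hi, rfl⟩ := hv
    have hiS : i ∈ S := by
      rw [decode_dlist hn hT hcard] at hi
      simp only [List.mem_filter, decide_eq_true_eq] at hi
      exact hi.2
    have hin : i + 1 < n := by
      have := Finset.mem_range.mp (hS hiS); omega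
    rw [decode_getD _ hin, mcount_succ_of_mem hiS]
    have hlt : mcount S i < (dvals T).length := by
      rw [dvals_length, ← hcard]; exact mcount_lt_card hiS
    have : (a :: dvals T).getD (mcount S i + 1) 0 = (dvals T).getD (mcount S i) 0 := rfl
    rw [this, List.getD_eq_get _ _ ⟨_, hlt⟩]
    have hm : (dvals T).get ⟨mcount S i, hlt⟩ ∈ dvals T := List.get_mem _ _
    have := List.mem_toFinset.mpr hm
    rwa [dvals_toFinset] at this
  apply Finset.eq_of_subset_of_card_le hsub
  have hnd : (vlist n (decode a n (S, T))).Nodup := vlist_nodup (decode_chain' hT hcard)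
  rw [List.toFinset_card_of_nodup hnd, vlist, List.length_map,
    decode_dlist hn hT hcard, filter_mem_length hS, ← hcard]

end Decode

section Encode

variable {n k a : ℕ} {w : List ℕ}

lemma dlist_subset_range {i : ℕ} (hi : i ∈ dlist n w) : i ∈ Finset.range (n - 1) := by
  simp only [dlist, List.mem_filter, List.mem_range] at hi
  exact Finset.mem_range.mpr hi.1

lemma vlist_subset_range (hlen : w.length = n) (hn : 0 < n) (hhead : w.headI = a)
    (hw : List.Chain' (fun x y => y ≤ x) w) {v : ℕ} (hv : v ∈ vlist n w) :
    v ∈ Finset.range a := by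
  simp only [vlist, List.mem_map] at hv
  obtain ⟨i, hi, rfl⟩ := hv
  simp only [dlist, List.mem_filter, decide_eq_true_eq] at hi
  have h0 : w.getD 0 0 = a := by
    cases w with
    | nil => simp at hlen; omega
    | cons x t => simpa using hhead
  have : w.getD (i + 1) 0 < w.getD i 0 := hi.2
  have : w.getD i 0 ≤ w.getD 0 0 := getD_antitone hw (Nat.zero_le _)
  rw [Finset.mem_range]
  omega

/-- in a strictly sorted list containing i, count of smaller elements gives the index -/
lemma mcount_toFinset {l : List ℕ} (hl : l.Nodup) (S' : Finset ℕ) (hS' : S' = l.toFinset)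
    (i : ℕ) : mcount S' i = (l.filter (· < i)).length := by
  subst hS'
  rw [mcount]
  have : l.toFinset.filter (· < i) = (l.filter (· < i)).toFinset := by
    ext x
    simp [List.mem_filter]
  rw [this, List.toFinset_card_of_nodup (hl.filter _)]

lemma key_step (hlen : w.length = n) (hn : 0 < n) (hhead : w.headI = a)
    (hw : List.Chain' (fun x y => y ≤ x) w) :
    ∀ i, i < n → w.getD i 0 = (a :: vlist n w).getD (mcount (dlist n w).toFinset i) 0 := by
  intro i
  induction i with
  | zero =>
    intro _
    rw [mcount_zero]
    cases w with
    | nil => simp at hlen; omega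
    | cons x t => simpa using hhead
  | succ i ih =>
    intro hin
    have hiI := ih (by omega)
    by_cases hdesc : w.getD (i + 1) 0 < w.getD i 0
    · -- i is a descent
      have hmem : i ∈ dlist n w := by
        simp only [dlist, List.mem_filter, List.mem_range, decide_eq_true_eq]
        exact ⟨by omega, hdesc⟩
      have hS : i ∈ (dlist n w).toFinset := List.mem_toFinset.mpr hmem
      rw [mcount_succ_of_mem hS]
      obtain ⟨j, hj⟩ := List.mem_iff_get.mp hmem
      have hcount : mcount (dlist n w).toFinset i = j.1 := by
        rw [mcount_toFinset (dlist_nodup n w) _ rfl, ← hj]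
        exact filter_lt_get_length _ (dlist_pairwise n w) _ _
      have hvj : j.1 < (vlist n w).length := by
        rw [vlist, List.length_map]; exact j.2
      have : (a :: vlist n w).getD (j.1 + 1) 0 = (vlist n w).getD j.1 0 := rfl
      rw [hcount, this, List.getD_eq_get _ _ ⟨_, hvj⟩]
      have : (vlist n w).get ⟨j.1, hvj⟩ = w.getD ((dlist n w).get j + 1) 0 := by
        simp [vlist]
      rw [this, hj]
    · -- not a descent
      have heq : w.getD (i + 1) 0 = w.getD i 0 :=
        le_antisymm (getD_succ_le hw i) (Nat.not_lt.mp hdesc)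
      have hS : i ∉ (dlist n w).toFinset := by
        rw [List.mem_toFinset]
        simp only [dlist, List.mem_filter, List.mem_range, decide_eq_true_eq]
        rintro ⟨_, h⟩
        exact hdesc h
      rw [mcount_succ_of_not_mem hS, heq, hiI]

end Encode

lemma vlist_eq_dvals {n : ℕ} {w : List ℕ} (hw : List.Chain' (fun x y => y ≤ x) w) :
    dvals (vlist n w).toFinset = vlist n w := by
  haveI : Std.Antisymm (α := ℕ) (· > ·) := ⟨fun a b h1 h2 => absurd h1 (not_lt.2 h2.le)⟩
  refine List.Perm.eq_of_pairwise' (r := (· > ·)) (dvals_pairwise _) (vlist_pairwise hw) ?_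
  exact List.perm_of_nodup_nodup_toFinset_eq (dvals_nodup _) (vlist_nodup hw)
    (by rw [dvals_toFinset])

lemma decode_encode {n a : ℕ} {w : List ℕ} (hlen : w.length = n) (hn : 0 < n)
    (hhead : w.headI = a) (hw : List.Chain' (fun x y => y ≤ x) w) :
    decode a n ((dlist n w).toFinset, (vlist n w).toFinset) = w := by
  apply List.ext_get (by rw [hlen]; simp [decode])
  intro i h1 h2
  have hin : i < n := by rw [← hlen]; exact h2
  rw [← List.getD_eq_get _ 0, ← List.getD_eq_get _ 0, decode_getD _ hin]
  simp only
  rw [vlist_eq_dvals hw]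
  exact (key_step hlen hn hhead hw i hin).symm

end WDW

open WDW

/-- For positive integers n, k, a with k < n, the number of weakly decreasing words of
length n of nonnegative integers with first value a and at most k strict descents is
1 + ∑_{j=1}^{k} C(n-1,j)·C(a,j). -/
theorem weakly_decreasing_words_count (n k a : ℕ) (hn : 0 < n) (hk : 0 < k) (ha : 0 < a)
    (hkn : k < n) :
    Set.ncard {w : List ℕ | w.length = n ∧ w.headI = a ∧
        List.Chain' (fun x y => y ≤ x) w ∧
        (((List.range (n - 1)).filter fun i => w.getD (i + 1) 0 < w.getD i 0)).length ≤ k} =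
      1 + ∑ j ∈ Finset.Icc 1 k, (n - 1).choose j * a.choose j := by
  set A := {w : List ℕ | w.length = n ∧ w.headI = a ∧
        List.Chain' (fun x y => y ≤ x) w ∧
        (((List.range (n - 1)).filter fun i => w.getD (i + 1) 0 < w.getD i 0)).length ≤ k}
    with hA
  set F := ((Finset.range (n - 1)).powerset ×ˢ (Finset.range a).powerset).filter
      (fun p => p.1.card = p.2.card ∧ p.1.card ≤ k) with hF
  have hmemF : ∀ p : Finset ℕ × Finset ℕ, p ∈ F ↔
      (p.1 ⊆ Finset.range (n - 1) ∧ p.2 ⊆ Finset.range a ∧ p.1.card = p.2.card ∧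
        p.1.card ≤ k) := by
    intro p
    simp only [hF, Finset.mem_filter, Finset.mem_product, Finset.mem_powerset]
    tauto
  have himg : A = decode a n '' ↑F := by
    ext w
    constructor
    · rintro ⟨hlen, hhead, hw, hdesc⟩
      refine ⟨((dlist n w).toFinset, (vlist n w).toFinset), ?_, ?_⟩
      · rw [Finset.mem_coe, hmemF]
        refine ⟨fun i hi => dlist_subset_range (List.mem_toFinset.mp hi),
          fun v hv => vlist_subset_range hlen hn hhead hw (List.mem_toFinset.mp hv),
          ?_, ?_⟩
        · rw [List.toFinset_card_of_nodup (dlist_nodup n w),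
            List.toFinset_card_of_nodup (vlist_nodup hw), vlist, List.length_map]
        · rw [List.toFinset_card_of_nodup (dlist_nodup n w)]
          exact hdesc
      · exact decode_encode hlen hn hhead hw
    · rintro ⟨⟨S, T⟩, hpF, rfl⟩
      rw [Finset.mem_coe, hmemF] at hpF
      obtain ⟨hS, hT, hcard, hkcard⟩ := hpF
      refine ⟨decode_length, decode_headI hn, decode_chain' hT hcard, ?_⟩
      show (dlist n (decode a n (S, T))).length ≤ k
      rw [decode_dlist hn hT hcard, filter_mem_length hS]
      exact hkcard
  have hinj : Set.InjOn (decode a n) ↑F := by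
    rintro ⟨S, T⟩ hp ⟨S', T'⟩ hq heq
    rw [Finset.mem_coe, hmemF] at hp hq
    obtain ⟨hS, hT, hcard, -⟩ := hp
    obtain ⟨hS', hT', hcard', -⟩ := hq
    dsimp only at hS hT hcard hS' hT' hcard'
    have e1 : S = S' := by
      have l1 : (dlist n (decode a n (S, T))).toFinset = S := by
        rw [decode_dlist hn hT hcard, filter_mem_toFinset hS]
      have l2 : (dlist n (decode a n (S', T'))).toFinset = S' := by
        rw [decode_dlist hn hT' hcard', filter_mem_toFinset hS']
      rw [← l1, ← l2, heq]
    have e2 : T = T' := by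
      rw [← decode_vlist_toFinset hn hS hT hcard,
        ← decode_vlist_toFinset hn hS' hT' hcard', heq]
    rw [e1, e2]
  have hncard : A.ncard = F.card := by
    rw [himg, Set.ncard_image_of_injOn hinj, Set.ncard_coe_finset]
  rw [hncard]
  have hFbi : F = (Finset.range (k + 1)).biUnion
      (fun j => (Finset.range (n - 1)).powersetCard j ×ˢ (Finset.range a).powersetCard j) := by
    ext p
    rw [hmemF, Finset.mem_biUnion]
    simp only [Finset.mem_product, Finset.mem_powersetCard, Finset.mem_range]
    constructor
    · rintro ⟨h1, h2, h3, h4⟩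
      exact ⟨p.1.card, by omega, ⟨h1, rfl⟩, ⟨h2, h3.symm⟩⟩
    · rintro ⟨j, hj, ⟨h1, hc1⟩, ⟨h2, hc2⟩⟩
      exact ⟨h1, h2, by omega, by omega⟩
  rw [hFbi, Finset.card_biUnion]
  · have hterm : ∀ j, ((Finset.range (n - 1)).powersetCard j ×ˢ
        (Finset.range a).powersetCard j).card = (n - 1).choose j * a.choose j := by
      intro j
      rw [Finset.card_product, Finset.card_powersetCard, Finset.card_powersetCard,
        Finset.card_range, Finset.card_range]
    simp only [hterm]
    have hsplit : Finset.range (k + 1) = insert 0 (Finset.Icc 1 k) := by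
      ext x
      simp only [Finset.mem_range, Finset.mem_insert, Finset.mem_Icc]
      omega
    rw [hsplit, Finset.sum_insert (by simp)]
    simp
  · intro x hx y hy hxy
    rw [Function.onFun, Finset.disjoint_left]
    rintro p hp hq
    simp only [Finset.mem_product, Finset.mem_powersetCard] at hp hq
    exact hxy (by rw [← hp.1.2, hq.1.2])
end
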